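/- arXiv:2101.11584 — 9 statements merged into one kernel-verified Lean document; each statement's English description precedes it below -/
import Mathlib

section
/- Define χ : ℝ → ℝ by χ(x) = (2/π)∫₀ˣ (1−cos y)/y² dy, where the integrand is extended continuously by the value 1/2 at y = 0. Then χ is odd, non-decreasing, χ(x) → 1 as x → +∞ and χ(x) → −1 as x → −∞ (so χ is a normalizing function), and for every x > 0 one has 0 < 1 − χ(x) < 4/(πx). -/
open Filter

/-- The function `χ(x) = (2/π) ∫₀ˣ (1 - cos y)/y² dy`, where the integrand is extended
continuously by the value `1/2` at `y = 0`. -/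
noncomputable def chiFun (x : ℝ) : ℝ :=
  (2 / Real.pi) * ∫ y in (0 : ℝ)..x, (if y = 0 then (1 / 2 : ℝ) else (1 - Real.cos y) / y ^ 2)

namespace ChiAux
open Real MeasureTheory Set Topology

noncomputable def gg (y : ℝ) : ℝ := if y = 0 then (1/2 : ℝ) else (1 - Real.cos y) / y ^ 2

lemma gg_nonneg (y : ℝ) : 0 ≤ gg y := by
  unfold gg; split
  · norm_num
  · have := Real.cos_le_one y
    have := sq_nonneg y
    apply div_nonneg <;> linarith

lemma gg_le_half (y : ℝ) : gg y ≤ 1/2 := by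
  unfold gg; split
  · exact le_refl _
  · rename_i h
    rw [div_le_iff₀ (by positivity)]
    nlinarith [Real.one_sub_sq_div_two_le_cos (x := y)]

lemma gg_even (y : ℝ) : gg (-y) = gg y := by
  unfold gg
  simp [neg_eq_zero, Real.cos_neg, neg_pow]

lemma gg_meas : Measurable gg := by
  unfold gg
  refine Measurable.ite (measurableSet_eq) measurable_const ?_
  fun_prop

lemma gg_eq_on {y : ℝ} (hy : y ≠ 0) : gg y = (1 - Real.cos y) / y ^ 2 := if_neg hy

lemma gg_intervalIntegrable (a b : ℝ) : IntervalIntegrable gg volume a b := by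
  apply IntervalIntegrable.mono_fun (intervalIntegrable_const (c := (1/2 : ℝ)))
    gg_meas.aestronglyMeasurable
  refine Eventually.of_forall fun y => ?_
  show ‖gg y‖ ≤ |1/2|
  rw [Real.norm_eq_abs, abs_of_nonneg (gg_nonneg y)]
  rw [abs_of_nonneg (by norm_num)]; exact gg_le_half y

lemma gg_integrableOn_Ioi_one : IntegrableOn gg (Ioi 1) := by
  apply Integrable.mono' ((integrableOn_Ioi_rpow_of_lt (a := (-2 : ℝ)) (by norm_num) one_pos).const_mul 2)
    gg_meas.aestronglyMeasurable
  filter_upwards [ae_restrict_mem measurableSet_Ioi] with y (hy : 1 < y)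
  have hy0 : (0:ℝ) < y := by linarith
  rw [Real.norm_eq_abs, abs_of_nonneg (gg_nonneg y), gg_eq_on hy0.ne',
    Real.rpow_neg hy0.le, Real.rpow_two]
  rw [div_le_iff₀ (by positivity), mul_assoc, inv_mul_cancel₀ (by positivity)]
  nlinarith [Real.neg_one_le_cos y]

lemma gg_integrableOn_Ioi (x : ℝ) : IntegrableOn gg (Ioi x) := by
  have h1 : IntegrableOn gg (Ioc x 1) := by
    apply Integrable.mono' (integrableOn_const (C := ‖(1/2:ℝ)‖) measure_Ioc_lt_top.ne) gg_meas.aestronglyMeasurable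
    refine Eventually.of_forall fun y => ?_
    rw [Real.norm_eq_abs, abs_of_nonneg (gg_nonneg y)]
    calc gg y ≤ 1/2 := gg_le_half y
    _ ≤ ‖(1/2:ℝ)‖ := by norm_num
  rcases le_or_gt x 1 with h | h
  · rw [← Ioc_union_Ioi_eq_Ioi h]
    exact h1.union gg_integrableOn_Ioi_one
  · exact gg_integrableOn_Ioi_one.mono_set (Ioi_subset_Ioi h.le)

lemma exp_int {t : ℝ} (ht : 0 < t) : IntegrableOn (fun y : ℝ => Real.exp (-(t*y))) (Ioi 0) := by
  simpa [neg_mul] using exp_neg_integrableOn_Ioi 0 ht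

lemma intY {t : ℝ} (ht : 0 < t) :
    IntegrableOn (fun y => t * Real.exp (-(t*y)) * (1 - Real.cos y)) (Ioi 0) := by
  apply Integrable.mono' (((exp_int ht).const_mul t).const_mul 2)
  · exact (by fun_prop : Continuous fun y => t * Real.exp (-(t*y)) * (1 - Real.cos y)).aestronglyMeasurable
  · refine Eventually.of_forall fun y => ?_
    have he := Real.exp_pos (-(t*y))
    have h1 := Real.cos_le_one y
    have h2 := Real.neg_one_le_cos y
    rw [Real.norm_eq_abs, abs_of_nonneg (mul_nonneg (by positivity) (by linarith))]
    nlinarith [mul_nonneg (mul_pos ht he).le (by linarith : (0:ℝ) ≤ 1 + Real.cos y)]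

lemma innerY {t : ℝ} (ht : 0 < t) :
    ∫ y in Ioi (0:ℝ), t * Real.exp (-(t*y)) * (1 - Real.cos y) = 1 / (1 + t^2) := by
  have h1t : (0:ℝ) < 1 + t^2 := by positivity
  set F : ℝ → ℝ := fun y => Real.exp (-(t*y)) * ((t^2 * Real.cos y - t * Real.sin y)/(1+t^2) - 1) with hF
  have hderiv : ∀ y ∈ Ici (0:ℝ), HasDerivAt F (t * Real.exp (-(t*y)) * (1 - Real.cos y)) y := by
    intro y _
    have h1 : HasDerivAt (fun y : ℝ => -(t*y)) (-t) y := by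
      have h := ((hasDerivAt_id y).const_mul t).neg; rw [mul_one] at h; exact h
    have h2 := h1.exp
    have h3 : HasDerivAt (fun y => (t^2 * Real.cos y - t * Real.sin y)/(1+t^2) - 1)
        ((t^2 * (-Real.sin y) - t * Real.cos y)/(1+t^2)) y := by
      exact (((Real.hasDerivAt_cos y).const_mul (t^2)).sub
        ((Real.hasDerivAt_sin y).const_mul t)).div_const (1+t^2) |>.sub_const 1
    have := h2.mul h3
    convert this using 1
    · rfl
    · rfl
    · rfl
    field_simp
    ring
  have habs : ∀ y : ℝ, |(t^2 * Real.cos y - t * Real.sin y)/(1+t^2) - 1| ≤ t + 2 := by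
    intro y
    have hN : |t^2 * Real.cos y - t * Real.sin y| ≤ t^2 + t := by
      rw [abs_le]
      constructor <;> nlinarith [mul_nonneg (sq_nonneg t) (by linarith [Real.neg_one_le_cos y] : (0:ℝ) ≤ 1 + Real.cos y),
        mul_nonneg (sq_nonneg t) (by linarith [Real.cos_le_one y] : (0:ℝ) ≤ 1 - Real.cos y),
        mul_nonneg ht.le (by linarith [Real.neg_one_le_sin y] : (0:ℝ) ≤ 1 + Real.sin y),
        mul_nonneg ht.le (by linarith [Real.sin_le_one y] : (0:ℝ) ≤ 1 - Real.sin y)]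
    calc |(t^2 * Real.cos y - t * Real.sin y)/(1+t^2) - 1|
        ≤ |(t^2 * Real.cos y - t * Real.sin y)/(1+t^2)| + |(1:ℝ)| := by
          rw [sub_eq_add_neg]; simpa using abs_add_le _ (-(1:ℝ))
      _ ≤ (t^2+t)/(1+t^2) + 1 := by
          rw [abs_div, abs_of_pos h1t, abs_one]
          gcongr
      _ ≤ t + 2 := by
          have h : (t^2+t)/(1+t^2) ≤ t + 1 := by
            rw [div_le_iff₀ h1t]; nlinarith [pow_nonneg ht.le 3]
          linarith
  have hlim : Tendsto F atTop (𝓝 0) := by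
    have hty : Tendsto (fun y : ℝ => t*y) atTop atTop := Tendsto.const_mul_atTop ht tendsto_id
    have hexp : Tendsto (fun y : ℝ => Real.exp (-(t*y))) atTop (𝓝 0) :=
      Real.tendsto_exp_atBot.comp (tendsto_neg_atTop_atBot.comp hty)
    apply squeeze_zero_norm (a := fun y => Real.exp (-(t*y)) * (t+2))
    · intro y
      rw [hF, Real.norm_eq_abs, abs_mul, abs_of_pos (Real.exp_pos _)]
      exact mul_le_mul_of_nonneg_left (habs y) (Real.exp_pos _).le
    · simpa using hexp.mul_const (t+2)
  have := integral_Ioi_of_hasDerivAt_of_tendsto' hderiv (intY ht) hlim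
  rw [this, hF]
  simp only [mul_zero, neg_zero, Real.exp_zero, Real.cos_zero, Real.sin_zero]
  field_simp
  ring

lemma intT {y : ℝ} (hy : 0 < y) :
    IntegrableOn (fun t => t * Real.exp (-(t*y)) * (1 - Real.cos y)) (Ioi 0) := by
  have h0 : IntegrableOn (fun x : ℝ => Real.exp (-x) * x ^ ((2:ℝ)-1)) (Ioi 0) :=
    Real.GammaIntegral_convergent (by norm_num)
  have h1 : IntegrableOn (fun t : ℝ => Real.exp (-(y*t)) * (y*t) ^ ((2:ℝ)-1)) (Ioi 0) := by
    have := (integrableOn_Ioi_comp_mul_left_iff (fun x : ℝ => Real.exp (-x) * x ^ ((2:ℝ)-1)) 0 hy).2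
    simpa using this (by simpa using h0)
  have h3 := (h1.const_mul ((1 - Real.cos y)/y) : Integrable _ _)
  apply h3.congr
  filter_upwards [ae_restrict_mem measurableSet_Ioi] with t (ht : 0 < t)
  have : (y*t) ^ ((2:ℝ)-1) = y * t := by
    rw [show ((2:ℝ)-1) = 1 by norm_num, Real.rpow_one]
  rw [this]
  field_simp

lemma innerT {y : ℝ} (hy : 0 < y) :
    ∫ t in Ioi (0:ℝ), t * Real.exp (-(t*y)) * (1 - Real.cos y) = (1 - Real.cos y) / y^2 := by
  have key : ∫ t in Ioi (0:ℝ), t ^ ((2:ℝ)-1) * Real.exp (-(y*t)) = (1/y)^(2:ℝ) * Real.Gamma 2 :=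
    Real.integral_rpow_mul_exp_neg_mul_Ioi (by norm_num) hy
  have h2 : ∫ t in Ioi (0:ℝ), t * Real.exp (-(t*y)) = 1/y^2 := by
    rw [show ∫ t in Ioi (0:ℝ), t * Real.exp (-(t*y)) = ∫ t in Ioi (0:ℝ), t ^ ((2:ℝ)-1) * Real.exp (-(y*t)) from
      setIntegral_congr_fun measurableSet_Ioi (fun t ht => by
        rw [show ((2:ℝ)-1) = 1 by norm_num, Real.rpow_one, mul_comm t y]), key,
      Real.Gamma_two, Real.rpow_two]
    field_simp
  rw [integral_mul_const, h2]
  field_simp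

lemma key_value' : ∫ y in Ioi (0:ℝ), (1 - Real.cos y) / y^2 = Real.pi / 2 := by
  set μ := volume.restrict (Ioi (0:ℝ)) with hμ
  set f : ℝ → ℝ → ℝ := fun t y => t * Real.exp (-(t*y)) * (1 - Real.cos y) with hf
  have hf_cont : Continuous (Function.uncurry f) := by
    apply Continuous.mul
    apply Continuous.mul continuous_fst
    · exact (continuous_fst.mul continuous_snd).neg.rexp
    · exact (continuous_const.sub (Real.continuous_cos.comp continuous_snd))
  have hmeas : AEStronglyMeasurable (Function.uncurry f) (μ.prod μ) := hf_cont.aestronglyMeasurable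
  have h1 : ∀ᵐ t ∂μ, Integrable (fun y => f t y) μ := by
    filter_upwards [ae_restrict_mem measurableSet_Ioi] with t (ht : 0 < t)
    exact intY ht
  have hnn : ∀ t : ℝ, 0 < t → (fun y => ‖f t y‖) =ᵐ[μ] fun y => f t y := by
    intro t ht
    filter_upwards [ae_restrict_mem measurableSet_Ioi] with y (hy : 0 < y)
    rw [Real.norm_eq_abs, abs_of_nonneg]
    have h1 := Real.cos_le_one y
    have h2 := (Real.exp_pos (-(t*y))).le
    have : (0:ℝ) ≤ 1 - Real.cos y := by linarith
    exact mul_nonneg (mul_nonneg ht.le h2) this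
  have h2 : Integrable (fun t => ∫ y, ‖f t y‖ ∂μ) μ := by
    apply (integrable_inv_one_add_sq.restrict (s := Ioi 0)).congr
    filter_upwards [ae_restrict_mem measurableSet_Ioi] with t (ht : 0 < t)
    rw [integral_congr_ae (hnn t ht)]
    rw [hμ, innerY ht]
    rw [one_div]
  have hint : Integrable (Function.uncurry f) (μ.prod μ) := (integrable_prod_iff hmeas).2 ⟨h1, h2⟩
  have hswap := integral_integral_swap hint
  have hL : ∫ t, ∫ y, f t y ∂μ ∂μ = Real.pi / 2 := by
    have : ∫ t, ∫ y, f t y ∂μ ∂μ = ∫ t in Ioi (0:ℝ), (1 + t^2)⁻¹ := by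
      rw [hμ]
      apply setIntegral_congr_fun measurableSet_Ioi
      intro t ht
      show (∫ y in Ioi (0:ℝ), f t y) = (1 + t^2)⁻¹
      rw [show (∫ y in Ioi (0:ℝ), f t y) = 1/(1+t^2) from innerY ht, one_div]
    rw [this, integral_Ioi_inv_one_add_sq]
    simp [Real.arctan_zero]
  have hR : ∫ y, ∫ t, f t y ∂μ ∂μ = ∫ y in Ioi (0:ℝ), (1 - Real.cos y) / y^2 := by
    rw [hμ]
    apply setIntegral_congr_fun measurableSet_Ioi
    intro y hy
    exact innerT hy
  rw [← hR, ← hswap, hL]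

lemma key_value : ∫ y in Ioi (0:ℝ), gg y = Real.pi / 2 := by
  rw [← key_value']
  apply setIntegral_congr_fun measurableSet_Ioi
  intro y hy
  exact gg_eq_on (ne_of_gt hy)

end ChiAux

open Real MeasureTheory Set Topology ChiAux in
/-- `χ` is a normalizing function (continuous, odd, non-decreasing, with limits
`±1` at `±∞`), and `0 < 1 - χ(x) < 4/(πx)` for every `x > 0`. -/
theorem stmt2 :
    Continuous chiFun ∧
    (∀ x : ℝ, chiFun (-x) = - chiFun x) ∧
    Monotone chiFun ∧
    Tendsto chiFun atTop (nhds 1) ∧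
    Tendsto chiFun atBot (nhds (-1)) ∧
    ∀ x : ℝ, 0 < x → 0 < 1 - chiFun x ∧ 1 - chiFun x < 4 / (Real.pi * x) := by
  have hπ : (0:ℝ) < Real.pi := Real.pi_pos
  have hchi : ∀ x : ℝ, chiFun x = (2 / Real.pi) * ∫ y in (0:ℝ)..x, gg y := fun x => rfl
  have hodd : ∀ x : ℝ, chiFun (-x) = - chiFun x := by
    intro x
    rw [hchi, hchi]
    have h := intervalIntegral.integral_comp_neg (a := (0:ℝ)) (b := x) (f := gg)
    simp only [neg_zero] at h
    have h' : ∫ y in (0:ℝ)..x, gg (-y) = ∫ y in (0:ℝ)..x, gg y :=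
      intervalIntegral.integral_congr (fun y _ => gg_even y)
    have key : ∫ y in (0:ℝ)..(-x), gg y = -∫ y in (0:ℝ)..x, gg y := by
      rw [← h', h, intervalIntegral.integral_symm]
    rw [key]
    ring
  have hcont : Continuous chiFun := by
    apply Continuous.mul continuous_const
    exact intervalIntegral.continuous_primitive (fun a b => gg_intervalIntegrable a b) 0
  have hmono : Monotone chiFun := by
    intro a b hab
    rw [hchi, hchi]
    apply mul_le_mul_of_nonneg_left _ (by positivity)
    have := intervalIntegral.integral_add_adjacent_intervals
      (gg_intervalIntegrable 0 a) (gg_intervalIntegrable a b)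
    rw [← this]
    have : 0 ≤ ∫ y in a..b, gg y :=
      intervalIntegral.integral_nonneg hab (fun y _ => gg_nonneg y)
    linarith
  have htop : Tendsto chiFun atTop (nhds 1) := by
    have h1 : Tendsto (fun x => ∫ y in (0:ℝ)..x, gg y) atTop (𝓝 (∫ y in Ioi (0:ℝ), gg y)) :=
      intervalIntegral_tendsto_integral_Ioi 0 (gg_integrableOn_Ioi 0) tendsto_id
    have h2 := h1.const_mul (2 / Real.pi)
    rw [key_value] at h2
    have : 2 / Real.pi * (Real.pi / 2) = 1 := by field_simp
    rw [this] at h2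
    exact h2.congr (fun x => (hchi x).symm)
  have hbot : Tendsto chiFun atBot (nhds (-1)) := by
    have h1 : Tendsto (fun x : ℝ => chiFun (-x)) atBot (𝓝 1) :=
      htop.comp tendsto_neg_atBot_atTop
    have h2 := h1.neg
    rw [show -(1:ℝ) = -1 by ring] at h2
    exact h2.congr (fun x => by rw [hodd x, neg_neg])
  refine ⟨hcont, hodd, hmono, htop, hbot, ?_⟩
  intro x hx
  -- decomposition of the tail
  have hsplit : ∫ y in Ioi (0:ℝ), gg y = (∫ y in (0:ℝ)..x, gg y) + ∫ y in Ioi x, gg y := by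
    rw [intervalIntegral.integral_of_le hx.le]
    rw [← Ioc_union_Ioi_eq_Ioi hx.le] 
    rw [setIntegral_union (Ioc_disjoint_Ioi le_rfl) measurableSet_Ioi
      ((gg_integrableOn_Ioi 0).mono_set Ioc_subset_Ioi_self) (gg_integrableOn_Ioi x)]
  have htail : 1 - chiFun x = (2 / Real.pi) * ∫ y in Ioi x, gg y := by
    have h1 : (1:ℝ) = (2 / Real.pi) * ∫ y in Ioi (0:ℝ), gg y := by
      rw [key_value]; field_simp
    rw [h1, hchi, hsplit]
    ring
  -- countable bad sets
  have hcount1 : volume {y : ℝ | Real.cos y = 1} = 0 := by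
    have : {y : ℝ | Real.cos y = 1} = Set.range (fun n : ℤ => (n:ℝ) * (2 * Real.pi)) := by
      ext y
      simp only [mem_setOf_eq, Set.mem_range]
      rw [Real.cos_eq_one_iff]
    rw [this]
    exact (Set.countable_range _).measure_zero _
  have hcount2 : volume {y : ℝ | Real.cos y = -1} = 0 := by
    have : {y : ℝ | Real.cos y = -1} = Set.range (fun n : ℤ => (n:ℝ) * (2 * Real.pi) + Real.pi) := by
      ext y
      simp only [mem_setOf_eq, Set.mem_range]
      constructor
      · intro h
        have : Real.cos (y - Real.pi) = 1 := by
          rw [Real.cos_sub, Real.cos_pi, Real.sin_pi]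
          simp [h]
        obtain ⟨n, hn⟩ := (Real.cos_eq_one_iff _).1 this
        exact ⟨n, by linarith⟩
      · rintro ⟨n, rfl⟩
        rw [Real.cos_add, Real.cos_pi, Real.sin_pi]
        have : Real.cos ((n:ℝ) * (2*Real.pi)) = 1 := (Real.cos_eq_one_iff _).2 ⟨n, rfl⟩
        simp [this]
    rw [this]
    exact (Set.countable_range _).measure_zero _
  constructor
  · -- positivity of the tail
    rw [htail]
    apply mul_pos (by positivity)
    rw [setIntegral_pos_iff_support_of_nonneg_ae
      (Eventually.of_forall (fun y => gg_nonneg y)) (gg_integrableOn_Ioi x)]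
    have hsub : Ioi x \ {y : ℝ | Real.cos y = 1} ⊆ Function.support gg ∩ Ioi x := by
      rintro y ⟨hy1, hy2⟩
      refine ⟨?_, hy1⟩
      have hy0 : 0 < y := lt_trans hx hy1
      rw [Function.mem_support, gg_eq_on hy0.ne']
      have : Real.cos y < 1 := lt_of_le_of_ne (Real.cos_le_one y) hy2
      have h1 : 0 < 1 - Real.cos y := by linarith
      positivity
    calc (0:ENNReal) < volume (Ioi x) := by rw [Real.volume_Ioi]; simp
    _ = volume (Ioi x \ {y : ℝ | Real.cos y = 1}) := (measure_diff_null hcount1).symm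
    _ ≤ volume (Function.support gg ∩ Ioi x) := measure_mono hsub
  · -- the upper bound
    have hrint : IntegrableOn (fun y : ℝ => 2 * y ^ (-2:ℝ)) (Ioi x) :=
      (integrableOn_Ioi_rpow_of_lt (by norm_num) hx).const_mul 2
    have hrval : ∫ y in Ioi x, 2 * y ^ (-2:ℝ) = 2 / x := by
      rw [MeasureTheory.integral_const_mul, integral_Ioi_rpow_of_lt (by norm_num) hx]
      rw [show (-2:ℝ) + 1 = -1 by norm_num, Real.rpow_neg_one]
      field_simp
    have hsubint : IntegrableOn (fun y : ℝ => 2 * y ^ (-2:ℝ) - gg y) (Ioi x) :=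
      hrint.sub (gg_integrableOn_Ioi x)
    have hdiffpos : 0 < ∫ y in Ioi x, (2 * y ^ (-2:ℝ) - gg y) := by
      rw [setIntegral_pos_iff_support_of_nonneg_ae _ hsubint]
      · have hsub : Ioi x \ {y : ℝ | Real.cos y = -1} ⊆
            Function.support (fun y => 2 * y ^ (-2:ℝ) - gg y) ∩ Ioi x := by
          rintro y ⟨hy1, hy2⟩
          refine ⟨?_, hy1⟩
          have hy0 : 0 < y := lt_trans hx hy1
          rw [Function.mem_support, gg_eq_on hy0.ne']
          have h2 : 2 * y ^ (-2:ℝ) = 2 / y^2 := by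
            rw [Real.rpow_neg hy0.le, Real.rpow_two]
            field_simp
          rw [h2]
          have hc : -1 < Real.cos y := lt_of_le_of_ne (Real.neg_one_le_cos y) (Ne.symm hy2)
          have : 2 / y^2 - (1 - Real.cos y)/y^2 = (1 + Real.cos y)/y^2 := by ring
          rw [this]
          have hpos : 0 < 1 + Real.cos y := by linarith
          positivity
        calc (0:ENNReal) < volume (Ioi x) := by rw [Real.volume_Ioi]; simp
        _ = volume (Ioi x \ {y : ℝ | Real.cos y = -1}) := (measure_diff_null hcount2).symm
        _ ≤ _ := measure_mono hsub
      · filter_upwards [ae_restrict_mem measurableSet_Ioi] with y (hy : x < y)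
        have hy0 : 0 < y := lt_trans hx hy
        show (0:ℝ) ≤ 2 * y ^ (-2:ℝ) - gg y
        rw [gg_eq_on hy0.ne', Real.rpow_neg hy0.le, Real.rpow_two]
        have h1 := Real.neg_one_le_cos y
        rw [sub_nonneg, div_le_iff₀ (by positivity), mul_assoc,
          inv_mul_cancel₀ (by positivity : (y^2:ℝ) ≠ 0)]
        linarith
    have hlt : ∫ y in Ioi x, gg y < 2 / x := by
      rw [integral_sub hrint (gg_integrableOn_Ioi x), hrval] at hdiffpos
      linarith [hdiffpos]
    rw [htail]
    calc (2 / Real.pi) * ∫ y in Ioi x, gg y < (2 / Real.pi) * (2 / x) := by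
          apply mul_lt_mul_of_pos_left hlt (by positivity)
    _ = 4 / (Real.pi * x) := by field_simp; ring
end

section
/- Let A be a unital C*-algebra and U ∈ A with ‖U‖ ≤ 1; set V = U*. In M₂(A) define W = [[1, U],[0, 1]] · [[1, 0],[−V, 1]] · [[1, U],[0, 1]] · [[0, −1],[1, 0]] and e₁₁ = diag(1, 0). Then W is invertible, P := W e₁₁ W⁻¹ is an idempotent, P equals the matrix [[1−(1−UV)², (2−UV)U(1−VU)], [V(1−UV), (1−VU)²]], ‖P‖ ≤ 64, and ‖P − e₁₁‖ ≤ 5 · max{‖1−UV‖, ‖1−VU‖}. -/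
section aux
variable {A : Type*} [CStarAlgebra A] {M2 : Type*} [CStarAlgebra M2]
  (φ : M2 ≃⋆ₐ[ℂ] Matrix (Fin 2) (Fin 2) A)

/-- the diagonal embedding as a star algebra hom -/
noncomputable def dHom : A →⋆ₐ[ℂ] M2 where
  toFun a := φ.symm (Matrix.diagonal fun _ => a)
  map_one' := by simp [Matrix.diagonal_one]
  map_mul' a b := by rw [← map_mul]; congr 1; rw [Matrix.diagonal_mul_diagonal]
  map_zero' := by simp
  map_add' a b := by rw [← map_add]; congr 1; rw [Matrix.diagonal_add]
  commutes' c := by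
    show φ.symm (Matrix.diagonal fun _ => algebraMap ℂ A c) = algebraMap ℂ M2 c
    rw [show (fun _ : Fin 2 => algebraMap ℂ A c) = algebraMap ℂ (Fin 2 → A) c from rfl,
      ← Matrix.algebraMap_eq_diagonal]
    exact AlgHomClass.commutes φ.symm c
  map_star' a := by rw [← map_star]; congr 1; simp [Matrix.star_eq_conjTranspose, Matrix.diagonal_conjTranspose]

lemma dHom_norm_le (a : A) : ‖φ.symm (Matrix.diagonal fun _ => a)‖ ≤ ‖a‖ :=
  NonUnitalStarAlgHom.norm_apply_le (dHom φ) a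
end aux

section aux2
variable {A : Type*} [CStarAlgebra A] {M2 : Type*} [CStarAlgebra M2]
  (φ : M2 ≃⋆ₐ[ℂ] Matrix (Fin 2) (Fin 2) A)

lemma diag_fin_two (a b : A) : Matrix.diagonal ![a, b] = !![a, 0; 0, b] := by
  ext i j; fin_cases i <;> fin_cases j <;> simp [Matrix.diagonal]

lemma const_diag_fin_two (a : A) : (Matrix.diagonal fun _ => a : Matrix (Fin 2) (Fin 2) A) = !![a, 0; 0, a] := by
  ext i j; fin_cases i <;> fin_cases j <;> simp [Matrix.diagonal]

lemma star_fin_two (a b c d : A) : star !![a, b; c, d] = !![star a, star c; star b, star d] := by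
  ext i j; fin_cases i <;> fin_cases j <;>
    simp [Matrix.star_eq_conjTranspose, Matrix.conjTranspose_apply]

lemma norm_e11 : ‖φ.symm !![(1:A), 0; 0, 0]‖ ≤ 1 := by
  set x := φ.symm !![(1:A), 0; 0, 0] with hx
  have hstar : star x = x := by
    rw [hx, ← map_star, star_fin_two]; simp
  have hmul : x * x = x := by
    rw [hx, ← map_mul]; congr 1
    rw [Matrix.mul_fin_two]; simp
  have h : ‖x‖ * ‖x‖ = ‖x‖ := by
    have h2 := CStarRing.norm_self_mul_star (x := x)
    rw [hstar, hmul] at h2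
    exact h2.symm
  nlinarith [norm_nonneg x]

lemma norm_e22 : ‖φ.symm !![(0:A), 0; 0, 1]‖ ≤ 1 := by
  set x := φ.symm !![(0:A), 0; 0, 1] with hx
  have hstar : star x = x := by
    rw [hx, ← map_star, star_fin_two]; simp
  have hmul : x * x = x := by
    rw [hx, ← map_mul]; congr 1
    rw [Matrix.mul_fin_two]; simp
  have h : ‖x‖ * ‖x‖ = ‖x‖ := by
    have h2 := CStarRing.norm_self_mul_star (x := x)
    rw [hstar, hmul] at h2
    exact h2.symm
  nlinarith [norm_nonneg x]

lemma norm_e12 : ‖φ.symm !![(0:A), 1; 0, 0]‖ ≤ 1 := by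
  set x := φ.symm !![(0:A), 1; 0, 0] with hx
  have h : ‖x‖ * ‖x‖ = ‖φ.symm !![(0:A), 0; 0, 1]‖ := by
    rw [← CStarRing.norm_star_mul_self (x := x), hx, ← map_star, star_fin_two, ← map_mul,
      Matrix.mul_fin_two]
    norm_num
  nlinarith [norm_nonneg x, norm_e22 φ]

lemma norm_e21 : ‖φ.symm !![(0:A), 0; 1, 0]‖ ≤ 1 := by
  set x := φ.symm !![(0:A), 0; 1, 0] with hx
  have h : ‖x‖ * ‖x‖ = ‖φ.symm !![(1:A), 0; 0, 0]‖ := by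
    rw [← CStarRing.norm_star_mul_self (x := x), hx, ← map_star, star_fin_two, ← map_mul,
      Matrix.mul_fin_two]
    norm_num
  nlinarith [norm_nonneg x, norm_e11 φ]

lemma norm_single11 (a : A) : ‖φ.symm !![a, 0; 0, 0]‖ ≤ ‖a‖ := by
  have : (!![a, 0; 0, 0] : Matrix (Fin 2) (Fin 2) A) = !![a, 0; 0, a] * !![1, 0; 0, 0] := by
    rw [Matrix.mul_fin_two]; simp
  rw [this, map_mul]
  calc ‖φ.symm !![a,0;0,a] * φ.symm !![(1:A),0;0,0]‖
      ≤ ‖φ.symm !![a,0;0,a]‖ * ‖φ.symm !![(1:A),0;0,0]‖ := norm_mul_le _ _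
    _ ≤ ‖a‖ * 1 := by
        refine mul_le_mul ?_ (norm_e11 φ) (norm_nonneg _) (norm_nonneg a)
        rw [← const_diag_fin_two]; exact dHom_norm_le φ a
    _ = ‖a‖ := mul_one _

lemma norm_single12 (a : A) : ‖φ.symm !![0, a; 0, 0]‖ ≤ ‖a‖ := by
  have : (!![(0:A), a; 0, 0] : Matrix (Fin 2) (Fin 2) A) = !![a, 0; 0, a] * !![0, 1; 0, 0] := by
    rw [Matrix.mul_fin_two]; simp
  rw [this, map_mul]
  calc ‖φ.symm !![a,0;0,a] * φ.symm !![(0:A),1;0,0]‖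
      ≤ ‖φ.symm !![a,0;0,a]‖ * ‖φ.symm !![(0:A),1;0,0]‖ := norm_mul_le _ _
    _ ≤ ‖a‖ * 1 := by
        refine mul_le_mul ?_ (norm_e12 φ) (norm_nonneg _) (norm_nonneg a)
        rw [← const_diag_fin_two]; exact dHom_norm_le φ a
    _ = ‖a‖ := mul_one _

lemma norm_single21 (a : A) : ‖φ.symm !![0, 0; a, 0]‖ ≤ ‖a‖ := by
  have : (!![(0:A), 0; a, 0] : Matrix (Fin 2) (Fin 2) A) = !![a, 0; 0, a] * !![0, 0; 1, 0] := by
    rw [Matrix.mul_fin_two]; simp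
  rw [this, map_mul]
  calc ‖φ.symm !![a,0;0,a] * φ.symm !![(0:A),0;1,0]‖
      ≤ ‖φ.symm !![a,0;0,a]‖ * ‖φ.symm !![(0:A),0;1,0]‖ := norm_mul_le _ _
    _ ≤ ‖a‖ * 1 := by
        refine mul_le_mul ?_ (norm_e21 φ) (norm_nonneg _) (norm_nonneg a)
        rw [← const_diag_fin_two]; exact dHom_norm_le φ a
    _ = ‖a‖ := mul_one _

lemma norm_single22 (a : A) : ‖φ.symm !![0, 0; 0, a]‖ ≤ ‖a‖ := by
  have : (!![(0:A), 0; 0, a] : Matrix (Fin 2) (Fin 2) A) = !![a, 0; 0, a] * !![0, 0; 0, 1] := by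
    rw [Matrix.mul_fin_two]; simp
  rw [this, map_mul]
  calc ‖φ.symm !![a,0;0,a] * φ.symm !![(0:A),0;0,1]‖
      ≤ ‖φ.symm !![a,0;0,a]‖ * ‖φ.symm !![(0:A),0;0,1]‖ := norm_mul_le _ _
    _ ≤ ‖a‖ * 1 := by
        refine mul_le_mul ?_ (norm_e22 φ) (norm_nonneg _) (norm_nonneg a)
        rw [← const_diag_fin_two]; exact dHom_norm_le φ a
    _ = ‖a‖ := mul_one _

lemma norm4 (a b c d : A) : ‖φ.symm !![a, b; c, d]‖ ≤ ‖a‖ + ‖b‖ + ‖c‖ + ‖d‖ := by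
  have hsplit : (!![a, b; c, d] : Matrix (Fin 2) (Fin 2) A)
      = !![a,0;0,0] + !![0,b;0,0] + !![0,0;c,0] + !![0,0;0,d] := by
    ext i j; fin_cases i <;> fin_cases j <;> simp
  rw [hsplit, map_add, map_add, map_add]
  calc ‖_ + _ + _ + _‖ ≤ ‖φ.symm !![a,0;0,0]‖ + ‖φ.symm !![0,b;0,0]‖
      + ‖φ.symm !![0,0;c,0]‖ + ‖φ.symm !![0,0;0,d]‖ := by
        refine le_trans (norm_add_le _ _) ?_
        gcongr
        refine le_trans (norm_add_le _ _) ?_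
        gcongr
        exact norm_add_le _ _
    _ ≤ ‖a‖ + ‖b‖ + ‖c‖ + ‖d‖ := by
        gcongr
        exacts [norm_single11 φ a, norm_single12 φ b, norm_single21 φ c, norm_single22 φ d]
end aux2

section aux3
variable {A : Type*} [CStarAlgebra A] {M2 : Type*} [CStarAlgebra M2]
  (φ : M2 ≃⋆ₐ[ℂ] Matrix (Fin 2) (Fin 2) A)

lemma real_aux {t M : ℝ} (ht : 0 ≤ t) (hM : 0 ≤ M)
    (h : ∀ n : ℕ, t ^ (2 ^ n) ≤ 2 * M ^ (2 ^ n)) : t ≤ M := by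
  by_contra hc
  push_neg at hc
  rcases eq_or_lt_of_le hM with hM0 | hM0
  · have h0 := h 0
    simp at h0
    rw [← hM0] at h0
    nlinarith
  · have hr : 1 < t / M := (one_lt_div hM0).2 hc
    obtain ⟨n, hn⟩ := pow_unbounded_of_one_lt (2 : ℝ) hr
    have h1 : (t / M) ^ n ≤ (t / M) ^ (2 ^ n) :=
      pow_le_pow_right₀ hr.le (Nat.le_of_lt (Nat.lt_two_pow_self (n := n)))
    have h2 : (t / M) ^ (2 ^ n) ≤ 2 := by
      rw [div_pow, div_le_iff₀ (by positivity)]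
      calc t ^ 2 ^ n ≤ 2 * M ^ 2 ^ n := h n
        _ = 2 * M ^ 2 ^ n := rfl
    linarith
  
lemma norm_diag_sa {c d : A} (hc : IsSelfAdjoint c) (hd : IsSelfAdjoint d) :
    ‖φ.symm !![c, 0; 0, d]‖ ≤ max ‖c‖ ‖d‖ := by
  set y := φ.symm !![c, 0; 0, d] with hy
  have hsa : IsSelfAdjoint y := by
    rw [IsSelfAdjoint, hy, ← map_star, star_fin_two, hc.star_eq, hd.star_eq]
    simp
  refine real_aux (norm_nonneg y) (le_max_iff.2 (Or.inl (norm_nonneg c))) fun n => ?_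
  have hpow : y ^ (2 ^ n) = φ.symm !![c ^ (2 ^ n), 0; 0, d ^ (2 ^ n)] := by
    rw [hy, ← map_pow]
    congr 1
    rw [← diag_fin_two, ← diag_fin_two, Matrix.diagonal_pow]
    have hv : (![c, d] : Fin 2 → A) ^ (2 ^ n) = ![c ^ 2 ^ n, d ^ 2 ^ n] := by
      funext i; fin_cases i <;> simp [Pi.pow_apply]
    rw [hv]
  have h1 : ‖y ^ (2 ^ n)‖ = ‖y‖ ^ (2 ^ n) := by
    have h2 := hsa.nnnorm_pow_two_pow n
    calc ‖y ^ 2 ^ n‖ = (‖y ^ 2 ^ n‖₊ : ℝ) := rfl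
      _ = ((‖y‖₊ ^ 2 ^ n : NNReal) : ℝ) := by rw [h2]
      _ = ‖y‖ ^ 2 ^ n := by push_cast; rfl
  calc ‖y‖ ^ 2 ^ n = ‖y ^ 2 ^ n‖ := h1.symm
    _ = ‖φ.symm !![c ^ 2 ^ n, 0; 0, d ^ 2 ^ n]‖ := by rw [hpow]
    _ ≤ ‖c ^ 2 ^ n‖ + ‖(0:A)‖ + ‖(0:A)‖ + ‖d ^ 2 ^ n‖ := norm4 φ _ _ _ _
    _ = ‖c ^ 2 ^ n‖ + ‖d ^ 2 ^ n‖ := by simp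
    _ ≤ ‖c‖ ^ 2 ^ n + ‖d‖ ^ 2 ^ n := by gcongr <;> exact norm_pow_le' _ (by positivity)
    _ ≤ (max ‖c‖ ‖d‖) ^ 2 ^ n + (max ‖c‖ ‖d‖) ^ 2 ^ n := by
        gcongr
        exacts [le_max_left _ _, le_max_right _ _]
    _ = 2 * (max ‖c‖ ‖d‖) ^ 2 ^ n := by ring

lemma norm_diag (a b : A) : ‖φ.symm !![a, 0; 0, b]‖ ≤ max ‖a‖ ‖b‖ := by
  set y := φ.symm !![a, 0; 0, b] with hy
  have key : ‖y‖ * ‖y‖ ≤ max ‖a‖ ‖b‖ * max ‖a‖ ‖b‖ := by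
    rw [← CStarRing.norm_star_mul_self (x := y), hy, ← map_star, star_fin_two, ← map_mul,
      Matrix.mul_fin_two]
    simp only [star_zero, mul_zero, zero_mul, add_zero, zero_add]
    calc ‖φ.symm !![star a * a, 0; 0, star b * b]‖
        ≤ max ‖star a * a‖ ‖star b * b‖ :=
          norm_diag_sa φ (IsSelfAdjoint.star_mul_self a) (IsSelfAdjoint.star_mul_self b)
      _ = max (‖a‖ * ‖a‖) (‖b‖ * ‖b‖) := by
          rw [CStarRing.norm_star_mul_self, CStarRing.norm_star_mul_self]
      _ ≤ max ‖a‖ ‖b‖ * max ‖a‖ ‖b‖ := by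
          rw [max_le_iff]
          constructor <;> gcongr
          exacts [le_max_left _ _, le_max_left _ _, le_max_right _ _, le_max_right _ _]
  have hM : (0:ℝ) ≤ max ‖a‖ ‖b‖ := le_max_of_le_left (norm_nonneg a)
  nlinarith [norm_nonneg y]

lemma norm_offdiag (a b : A) : ‖φ.symm !![0, a; b, 0]‖ ≤ max ‖a‖ ‖b‖ := by
  set y := φ.symm !![(0:A), a; b, 0] with hy
  have key : ‖y‖ * ‖y‖ ≤ max ‖a‖ ‖b‖ * max ‖a‖ ‖b‖ := by
    rw [← CStarRing.norm_star_mul_self (x := y), hy, ← map_star, star_fin_two, ← map_mul,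
      Matrix.mul_fin_two]
    simp only [star_zero, mul_zero, zero_mul, add_zero, zero_add]
    calc ‖φ.symm !![star b * b, 0; 0, star a * a]‖
        ≤ max ‖star b * b‖ ‖star a * a‖ :=
          norm_diag_sa φ (IsSelfAdjoint.star_mul_self b) (IsSelfAdjoint.star_mul_self a)
      _ = max (‖b‖ * ‖b‖) (‖a‖ * ‖a‖) := by
          rw [CStarRing.norm_star_mul_self, CStarRing.norm_star_mul_self]
      _ ≤ max ‖a‖ ‖b‖ * max ‖a‖ ‖b‖ := by
          rw [max_le_iff]
          constructor <;> gcongr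
          exacts [le_max_right _ _, le_max_right _ _, le_max_left _ _, le_max_left _ _]
  have hM : (0:ℝ) ≤ max ‖a‖ ‖b‖ := le_max_of_le_left (norm_nonneg a)
  nlinarith [norm_nonneg y]
end aux3

/-- for `U` in a unital C*-algebra `A` with `‖U‖ ≤ 1` and `V = U*`, the matrix
`W = [[1,U],[0,1]]·[[1,0],[-V,1]]·[[1,U],[0,1]]·[[0,-1],[1,0]]` in `M₂(A)` is invertible,
`P = W e₁₁ W⁻¹` is an idempotent given by the explicit formula, `‖P‖ ≤ 64` and
`‖P - e₁₁‖ ≤ 5·max{‖1-UV‖, ‖1-VU‖}`.  Here `M₂(A)` is represented by a C*-algebra `M2`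
together with a ⋆-algebra isomorphism `φ : M2 ≃⋆ₐ[ℂ] Matrix (Fin 2) (Fin 2) A` (recall that
the C*-norm on `M₂(A)` is unique). -/
theorem stmt5 {A : Type*} [CStarAlgebra A]
    {M2 : Type*} [CStarAlgebra M2] (φ : M2 ≃⋆ₐ[ℂ] Matrix (Fin 2) (Fin 2) A)
    (U V : A) (hU : ‖U‖ ≤ 1) (hV : V = star U)
    (W e₁₁ : M2)
    (hW : φ W = !![(1 : A), U; 0, 1] * !![(1 : A), 0; -V, 1] * !![(1 : A), U; 0, 1] *
        !![(0 : A), -1; 1, 0])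
    (he : φ e₁₁ = !![(1 : A), 0; 0, 0]) :
    IsUnit W ∧
    ∃ Winv : M2, W * Winv = 1 ∧ Winv * W = 1 ∧
      ∀ P : M2, P = W * e₁₁ * Winv →
        IsIdempotentElem P ∧
        φ P = !![1 - (1 - U * V) ^ 2, (2 - U * V) * U * (1 - V * U);
                 V * (1 - U * V), (1 - V * U) ^ 2] ∧
        ‖P‖ ≤ 64 ∧
        ‖P - e₁₁‖ ≤ 5 * max ‖1 - U * V‖ ‖1 - V * U‖ := by
  have hV1 : ‖V‖ ≤ 1 := by rw [hV, norm_star]; exact hU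
  have inj : ∀ x y : M2, φ x = φ y → x = y := fun x y h => by
    have h2 := congrArg φ.symm h
    rwa [φ.symm_apply_apply, φ.symm_apply_apply] at h2
  have hWmat : φ W = !![(2 - U*V)*U, -(1 - U*V); 1 - V*U, V] := by
    rw [hW, Matrix.mul_fin_two, Matrix.mul_fin_two, Matrix.mul_fin_two]
    ext i j
    fin_cases i <;> fin_cases j <;> simp <;> noncomm_ring
  set Winv : M2 := φ.symm !![V, 1 - V*U; -(1 - U*V), (2 - U*V)*U] with hWinv
  have hWinvmat : φ Winv = !![V, 1 - V*U; -(1 - U*V), (2 - U*V)*U] := φ.apply_symm_apply _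
  have h1 : W * Winv = 1 := by
    apply inj
    rw [map_mul, map_one, hWmat, hWinvmat, Matrix.mul_fin_two, Matrix.one_fin_two]
    ext i j
    fin_cases i <;> fin_cases j <;> simp <;> noncomm_ring
  have h2 : Winv * W = 1 := by
    apply inj
    rw [map_mul, map_one, hWmat, hWinvmat, Matrix.mul_fin_two, Matrix.one_fin_two]
    ext i j
    fin_cases i <;> fin_cases j <;> simp <;> noncomm_ring
  refine ⟨⟨⟨W, Winv, h1, h2⟩, rfl⟩, Winv, h1, h2, ?_⟩
  intro P hP
  have hee : e₁₁ * e₁₁ = e₁₁ := by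
    apply inj
    rw [map_mul, he, Matrix.mul_fin_two]
    norm_num
  have hPmat : φ P = !![1 - (1 - U * V) ^ 2, (2 - U * V) * U * (1 - V * U);
                 V * (1 - U * V), (1 - V * U) ^ 2] := by
    rw [hP, map_mul, map_mul, hWmat, he, hWinvmat, Matrix.mul_fin_two, Matrix.mul_fin_two]
    ext i j
    fin_cases i <;> fin_cases j <;> simp <;> noncomm_ring
  have hidem : IsIdempotentElem P := by
    unfold IsIdempotentElem
    rw [hP, show W * e₁₁ * Winv * (W * e₁₁ * Winv) = W * e₁₁ * (Winv * W) * (e₁₁ * Winv) by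
      noncomm_ring, h2, mul_one, show W * e₁₁ * (e₁₁ * Winv) = W * (e₁₁ * e₁₁) * Winv by
      noncomm_ring, hee]
  -- norm bounds
  have hone : ‖(1:A)‖ ≤ 1 := by
    have h2 := CStarRing.norm_self_mul_star (x := (1:A))
    simp only [star_one, mul_one] at h2
    nlinarith [norm_nonneg (1:A)]
  have hUV : ‖U * V‖ ≤ 1 := by
    calc ‖U * V‖ ≤ ‖U‖ * ‖V‖ := norm_mul_le _ _
      _ ≤ 1 := by nlinarith [norm_nonneg U]
  have hVU : ‖V * U‖ ≤ 1 := by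
    calc ‖V * U‖ ≤ ‖V‖ * ‖U‖ := norm_mul_le _ _
      _ ≤ 1 := by nlinarith [norm_nonneg V]
  have hd1 : ‖1 - U * V‖ ≤ 2 := by
    calc ‖1 - U * V‖ ≤ ‖(1:A)‖ + ‖U * V‖ := norm_sub_le _ _
      _ ≤ 2 := by linarith
  have hd2 : ‖1 - V * U‖ ≤ 2 := by
    calc ‖1 - V * U‖ ≤ ‖(1:A)‖ + ‖V * U‖ := norm_sub_le _ _
      _ ≤ 2 := by linarith
  have h2t : ‖(2 - U*V)*U‖ ≤ 3 := by
    calc ‖(2 - U*V)*U‖ ≤ ‖2 - U*V‖ * ‖U‖ := norm_mul_le _ _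
      _ ≤ ‖2 - U*V‖ * 1 := by
          refine mul_le_mul_of_nonneg_left hU (norm_nonneg _)
      _ = ‖1 + (1 - U*V)‖ := by rw [mul_one]; congr 1; rw [← one_add_one_eq_two]; abel
      _ ≤ ‖(1:A)‖ + ‖1 - U*V‖ := norm_add_le _ _
      _ ≤ 3 := by linarith
  have hWeq : W = φ.symm !![(2 - U*V)*U, -(1 - U*V); 1 - V*U, V] := by
    rw [← hWmat]; exact (φ.symm_apply_apply W).symm
  have hnW : ‖W‖ ≤ 8 := by
    rw [hWeq]
    calc ‖φ.symm !![(2 - U*V)*U, -(1 - U*V); 1 - V*U, V]‖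
        ≤ ‖(2 - U*V)*U‖ + ‖-(1 - U*V)‖ + ‖1 - V*U‖ + ‖V‖ := norm4 φ _ _ _ _
      _ ≤ 8 := by rw [norm_neg]; linarith
  have he1 : ‖e₁₁‖ ≤ 1 := by
    have : e₁₁ = φ.symm !![(1:A), 0; 0, 0] := by rw [← he]; exact (φ.symm_apply_apply e₁₁).symm
    rw [this]; exact norm_e11 φ
  have hnWinv : ‖Winv‖ ≤ 5 := by
    have hsplit : Winv = φ.symm !![V, 0; 0, (2 - U*V)*U]
        + φ.symm !![0, 1 - V*U; -(1 - U*V), 0] := by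
      rw [hWinv, ← map_add]
      congr 1
      ext i j
      fin_cases i <;> fin_cases j <;> simp
    rw [hsplit]
    calc ‖_ + _‖ ≤ ‖φ.symm !![V, 0; 0, (2 - U*V)*U]‖
        + ‖φ.symm !![0, 1 - V*U; -(1 - U*V), 0]‖ := norm_add_le _ _
      _ ≤ max ‖V‖ ‖(2 - U*V)*U‖ + max ‖1 - V*U‖ ‖-(1 - U*V)‖ := by
          gcongr
          exacts [norm_diag φ _ _, norm_offdiag φ _ _]
      _ ≤ 3 + 2 := by
          gcongr
          · rw [max_le_iff]; exact ⟨by linarith, by linarith⟩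
          · rw [max_le_iff, norm_neg]; exact ⟨by linarith, by linarith⟩
      _ = 5 := by norm_num
  have hnP : ‖P‖ ≤ 64 := by
    rw [hP]
    calc ‖W * e₁₁ * Winv‖ ≤ ‖W * e₁₁‖ * ‖Winv‖ := norm_mul_le _ _
      _ ≤ ‖W‖ * ‖e₁₁‖ * ‖Winv‖ := by
          refine mul_le_mul_of_nonneg_right (norm_mul_le _ _) (norm_nonneg _)
      _ ≤ 8 * 1 * 5 := by
          refine mul_le_mul ?_ hnWinv (norm_nonneg _) (by norm_num)
          refine mul_le_mul hnW he1 (norm_nonneg _) (by norm_num)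
      _ ≤ 64 := by norm_num
  refine ⟨hidem, hPmat, hnP, ?_⟩
  have hC : P - e₁₁ = φ.symm !![0, 1 - U*V; 1 - V*U, 0] * Winv := by
    apply inj
    rw [map_sub, map_mul, hPmat, he, φ.apply_symm_apply, hWinvmat, Matrix.mul_fin_two]
    ext i j
    fin_cases i <;> fin_cases j <;> simp <;> noncomm_ring
  rw [hC]
  calc ‖φ.symm !![0, 1 - U*V; 1 - V*U, 0] * Winv‖
      ≤ ‖φ.symm !![0, 1 - U*V; 1 - V*U, 0]‖ * ‖Winv‖ := norm_mul_le _ _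
    _ ≤ max ‖1 - U*V‖ ‖1 - V*U‖ * 5 := by
        refine mul_le_mul (norm_offdiag φ _ _) hnWinv (norm_nonneg _)
          (le_max_of_le_left (norm_nonneg _))
    _ = 5 * max ‖1 - U * V‖ ‖1 - V * U‖ := mul_comm _ _
end

section
/- Let A be a unital C*-algebra equipped with a Lipschitz filtration {A_L}_{L≥0}. Let f(x) = c₁x + c₂x² + c₃x³ + ⋯ be a power series with radius of convergence R, and set f̃(x) = |c₁| + 2|c₂|x + 3|c₃|x² + ⋯. If a ∈ M_n(A)_L and ‖a‖ < R, then f(a) := Σ_{k≥1} c_k a^k converges in M_n(A) and f(a) ∈ M_n(A)_{f̃(‖a‖)·L}. -/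
open scoped NNReal

/-- Membership in the matrix level `M_n(A)_L` determined by a filtration `lev` of `A`:
`x ∈ M_n(A)_L` iff `ξᵀ x η ∈ A_L` for all vectors `ξ, η ∈ ℂⁿ` of ℓ²-norm at most `1`. -/
def MatMem {A : Type*} [CStarAlgebra A] (lev : ℝ≥0 → Set A) {n : ℕ}
    (x : Matrix (Fin n) (Fin n) A) (L : ℝ≥0) : Prop :=
  ∀ ξ η : Fin n → ℂ, (∑ i, ‖ξ i‖ ^ 2) ≤ 1 → (∑ j, ‖η j‖ ^ 2) ≤ 1 →
    (∑ i, ∑ j, (ξ i * η j) • x i j) ∈ lev L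

/-- A Lipschitz filtration `{A_L}_{L ≥ 0}` on a unital C*-algebra `A`, in the sense of
conditions (L1)–(L6).  The C*-algebras of matrices `M_n(A)` are represented by C*-algebras
`B n` together with ⋆-algebra isomorphisms `φ n : B n ≃⋆ₐ[ℂ] Matrix (Fin n) (Fin n) A`
(recall that the C*-norm on `M_n(A)` is unique), and the matrix levels `M_n(A)_L` are the sets
`{b : B n | MatMem level (φ n b) L}`. -/
structure LipschitzFiltration (A : Type*) [CStarAlgebra A] (B : ℕ → Type*)
    [∀ n, CStarAlgebra (B n)] (φ : ∀ n, B n ≃⋆ₐ[ℂ] Matrix (Fin n) (Fin n) A) where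
  level : ℝ≥0 → Set A
  mono : ∀ ⦃L L' : ℝ≥0⦄, L ≤ L' → level L ⊆ level L'
  dense_union : Dense (⋃ L : ℝ≥0, level L)
  -- (L1)
  closed : ∀ L, IsClosed (level L)
  star_mem : ∀ (L : ℝ≥0) (a : A), a ∈ level L → star a ∈ level L
  scalar_mem : ∀ (L : ℝ≥0) (c : ℂ), c • (1 : A) ∈ level L
  -- (L2)
  smul_mem : ∀ (L : ℝ≥0) (c : ℂ) (a : A), a ∈ level L → c • a ∈ level (‖c‖₊ * L)
  -- (L3)
  add_mem : ∀ (L₁ L₂ : ℝ≥0) (a₁ a₂ : A), a₁ ∈ level L₁ → a₂ ∈ level L₂ →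
    a₁ + a₂ ∈ level (L₁ + L₂)
  -- (L4)
  mul_mem : ∀ (L₁ L₂ : ℝ≥0) (a₁ a₂ : A), a₁ ∈ level L₁ → a₂ ∈ level L₂ →
    a₁ * a₂ ∈ level (‖a₁‖₊ * L₂ + ‖a₂‖₊ * L₁)
  -- (L5): the matrix levels satisfy (L1)–(L4) in `M_n(A)` and contain all scalar matrices
  mat_closed : ∀ (n : ℕ) (L : ℝ≥0), IsClosed {b : B n | MatMem level (φ n b) L}
  mat_star : ∀ (n : ℕ) (L : ℝ≥0) (b : B n),
    MatMem level (φ n b) L → MatMem level (φ n (star b)) L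
  mat_scalar : ∀ (n : ℕ) (L : ℝ≥0) (c : Matrix (Fin n) (Fin n) ℂ),
    MatMem level (c.map (fun z : ℂ => z • (1 : A))) L
  mat_smul : ∀ (n : ℕ) (L : ℝ≥0) (c : ℂ) (b : B n),
    MatMem level (φ n b) L → MatMem level (φ n (c • b)) (‖c‖₊ * L)
  mat_add : ∀ (n : ℕ) (L₁ L₂ : ℝ≥0) (b₁ b₂ : B n),
    MatMem level (φ n b₁) L₁ → MatMem level (φ n b₂) L₂ →
      MatMem level (φ n (b₁ + b₂)) (L₁ + L₂)
  mat_mul : ∀ (n : ℕ) (L₁ L₂ : ℝ≥0) (b₁ b₂ : B n),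
    MatMem level (φ n b₁) L₁ → MatMem level (φ n b₂) L₂ →
      MatMem level (φ n (b₁ * b₂)) (‖b₁‖₊ * L₂ + ‖b₂‖₊ * L₁)
  -- (L6)
  mat_inv : ∀ (n : ℕ) (L : ℝ≥0) (b : B n) (c : ℂ)
    (h : IsUnit (b - algebraMap ℂ (B n) c)),
    MatMem level (φ n b) L →
      MatMem level (φ n ((↑h.unit⁻¹ : B n))) (‖(↑h.unit⁻¹ : B n)‖₊ ^ 2 * L)

variable {A : Type*} [CStarAlgebra A] {B : ℕ → Type*} [∀ n, CStarAlgebra (B n)]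

/-- `p ∈ P^L_n(A)`: `p` is a projection in `M_n(A)_L`. -/
def PMem (φ : ∀ n, B n ≃⋆ₐ[ℂ] Matrix (Fin n) (Fin n) A)
    (𝓕 : LipschitzFiltration A B φ) {n : ℕ} (L : ℝ≥0) (p : B n) : Prop :=
  MatMem 𝓕.level (φ n p) L ∧ IsSelfAdjoint p ∧ IsIdempotentElem p

/-- `u ∈ U^L_n(A)`: `u` is a unitary in `M_n(A)_L`. -/
def UMem (φ : ∀ n, B n ≃⋆ₐ[ℂ] Matrix (Fin n) (Fin n) A)
    (𝓕 : LipschitzFiltration A B φ) {n : ℕ} (L : ℝ≥0) (u : B n) : Prop :=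
  MatMem 𝓕.level (φ n u) L ∧ u ∈ unitary (B n)

/-- Block-diagonal direct sum `x ⊕ y ∈ M_{n+m}(A)`. -/
def oplus (φ : ∀ n, B n ≃⋆ₐ[ℂ] Matrix (Fin n) (Fin n) A)
    {n m : ℕ} (x : B n) (y : B m) : B (n + m) :=
  (φ (n + m)).symm
    (Matrix.reindex finSumFinEquiv finSumFinEquiv (Matrix.fromBlocks (φ n x) 0 0 (φ m y)))


section Aux

variable {A : Type*} [CStarAlgebra A] {B : ℕ → Type*} [∀ n, CStarAlgebra (B n)]

lemma matMem_mono {φ : ∀ n, B n ≃⋆ₐ[ℂ] Matrix (Fin n) (Fin n) A}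
    (𝓕 : LipschitzFiltration A B φ) {n : ℕ} {x : Matrix (Fin n) (Fin n) A} {L L' : ℝ≥0}
    (h : L ≤ L') (hx : MatMem 𝓕.level x L) : MatMem 𝓕.level x L' :=
  fun ξ η hξ hη => 𝓕.mono h (hx ξ η hξ hη)

lemma matMem_zero {φ : ∀ n, B n ≃⋆ₐ[ℂ] Matrix (Fin n) (Fin n) A}
    (𝓕 : LipschitzFiltration A B φ) {n : ℕ} (L : ℝ≥0) :
    MatMem 𝓕.level (φ n (0 : B n)) L := by
  intro ξ η _ _
  simp only [map_zero, Matrix.zero_apply, smul_zero, Finset.sum_const_zero]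
  simpa using 𝓕.scalar_mem L 0

end Aux

/-- power series applied to a filtered element.  If
`f(x) = Σ_{k ≥ 1} c_k x^k` has radius of convergence (at least) `R`,
`f̃(x) = Σ_{k ≥ 1} k |c_k| x^{k-1}`, `a ∈ M_n(A)_L` and `‖a‖ < R`, then `f(a)` converges in
`M_n(A)` and `f(a) ∈ M_n(A)_{f̃(‖a‖)·L}`. -/
theorem stmt6 (φ : ∀ n, B n ≃⋆ₐ[ℂ] Matrix (Fin n) (Fin n) A)
    (𝓕 : LipschitzFiltration A B φ)
    (c : ℕ → ℂ) (hc₀ : c 0 = 0) (R : ℝ)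
    (hR : ∀ r : ℝ, 0 ≤ r → r < R → Summable fun k : ℕ => ‖c k‖ * r ^ k)
    {n : ℕ} (L : ℝ≥0) (a : B n)
    (ha : MatMem 𝓕.level (φ n a) L) (hnorm : ‖a‖ < R) :
    Summable (fun k : ℕ => c k • a ^ k) ∧
    Summable (fun k : ℕ => (k : ℝ) * ‖c k‖ * ‖a‖ ^ (k - 1)) ∧
    MatMem 𝓕.level (φ n (∑' k : ℕ, c k • a ^ k))
      ((∑' k : ℕ, (k : ℝ) * ‖c k‖ * ‖a‖ ^ (k - 1)).toNNReal * L) := by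

  have ha0 : (0:ℝ) ≤ ‖a‖ := norm_nonneg a
  -- Summability of f(a)
  have hsum1 : Summable (fun k : ℕ => c k • a ^ k) := by
    apply Summable.of_norm_bounded (hR ‖a‖ ha0 hnorm)
    intro k
    rcases Nat.eq_zero_or_pos k with hk | hk
    · subst hk; simp [hc₀]
    · rw [norm_smul]
      exact mul_le_mul_of_nonneg_left (norm_pow_le' a hk) (norm_nonneg _)
  -- Summability of f̃(‖a‖)
  set r : ℝ := (‖a‖ + R) / 2 with hr_def
  have har : ‖a‖ < r := by simp [hr_def]; linarith
  have hrR : r < R := by simp [hr_def]; linarith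
  have hr0 : 0 < r := lt_of_le_of_lt ha0 har
  set t : ℝ := ‖a‖ / r with ht_def
  have ht0 : 0 ≤ t := by positivity
  have ht1 : t < 1 := (div_lt_one hr0).mpr har
  have hta : ‖a‖ = t * r := by rw [ht_def, div_mul_cancel₀ _ hr0.ne']
  have hgeom : Summable (fun k : ℕ => ((k : ℝ) + 1) * t ^ k) := by
    have h1 : Summable (fun k : ℕ => (k : ℝ) ^ 1 * t ^ k) :=
      summable_pow_mul_geometric_of_norm_lt_one 1 (by rwa [Real.norm_of_nonneg ht0])
    have h2 : Summable (fun k : ℕ => t ^ k) := summable_geometric_of_lt_one ht0 ht1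
    simpa [add_mul] using h1.add h2
  obtain ⟨C, hC⟩ := (hgeom.tendsto_atTop_zero.bddAbove_range)
  have hC' : ∀ k : ℕ, ((k : ℝ) + 1) * t ^ k ≤ C := fun k => hC (Set.mem_range_self k)
  have hC1 : (1:ℝ) ≤ C := by simpa using hC' 0
  have hsum2 : Summable (fun k : ℕ => (k : ℝ) * ‖c k‖ * ‖a‖ ^ (k - 1)) := by
    have hC0 : (0:ℝ) ≤ C := le_trans zero_le_one hC1
    refine Summable.of_nonneg_of_le (fun k => by positivity) (fun k => ?_)
      ((hR r hr0.le hrR).mul_left (C / r))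
    rcases k with _ | m
    · simp [hc₀]
    · have hmm : (m + 1) - 1 = m := rfl
      calc ((m + 1 : ℕ) : ℝ) * ‖c (m+1)‖ * ‖a‖ ^ ((m + 1) - 1)
          = ‖c (m+1)‖ * (((m : ℝ) + 1) * t ^ m) * r ^ m := by
            rw [hmm, hta, mul_pow]; push_cast; ring
        _ ≤ ‖c (m+1)‖ * C * r ^ m := by
            gcongr
            exact hC' m
        _ = C / r * (‖c (m+1)‖ * r ^ (m+1)) := by
            rw [pow_succ]; field_simp
  refine ⟨hsum1, hsum2, ?_⟩
  -- levels of powers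
  have hpow : ∀ k : ℕ, 0 < k →
      MatMem 𝓕.level (φ n (a ^ k)) ((k : ℝ≥0) * ‖a‖₊ ^ (k - 1) * L) := by
    intro k hk
    induction k with
    | zero => exact absurd hk (lt_irrefl 0)
    | succ m IH =>
      rcases Nat.eq_zero_or_pos m with hm | hm
      · subst hm; simpa using ha
      · have hmul := 𝓕.mat_mul n ((m : ℝ≥0) * ‖a‖₊ ^ (m - 1) * L) L (a ^ m) a (IH hm) ha
        rw [← pow_succ] at hmul
        refine matMem_mono 𝓕 ?_ hmul
        have h1 : ‖a ^ m‖₊ ≤ ‖a‖₊ ^ m := nnnorm_pow_le' a hm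
        have h2 : ‖a‖₊ * ‖a‖₊ ^ (m - 1) = ‖a‖₊ ^ m := by
          rw [← pow_succ', Nat.sub_add_cancel hm]
        have hmm : (m + 1) - 1 = m := rfl
        calc ‖a ^ m‖₊ * L + ‖a‖₊ * ((m : ℝ≥0) * ‖a‖₊ ^ (m - 1) * L)
            ≤ ‖a‖₊ ^ m * L + (m : ℝ≥0) * ‖a‖₊ ^ m * L := by
              apply add_le_add (mul_le_mul_left h1 L)
              rw [show ‖a‖₊ * ((m : ℝ≥0) * ‖a‖₊ ^ (m - 1) * L)
                  = (m : ℝ≥0) * (‖a‖₊ * ‖a‖₊ ^ (m - 1)) * L by ring, h2]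
          _ = ((m + 1 : ℕ) : ℝ≥0) * ‖a‖₊ ^ ((m + 1) - 1) * L := by
              rw [hmm]; push_cast; ring
  -- levels of terms
  set g : ℕ → ℝ≥0 := fun k => ‖c k‖₊ * ((k : ℝ≥0) * ‖a‖₊ ^ (k - 1)) with hg_def
  have hterm : ∀ k : ℕ, MatMem 𝓕.level (φ n (c k • a ^ k)) (g k * L) := by
    intro k
    rcases Nat.eq_zero_or_pos k with hk | hk
    · subst hk
      rw [show c 0 • a ^ 0 = 0 by rw [hc₀, zero_smul]]
      exact matMem_zero 𝓕 _
    · have := 𝓕.mat_smul n _ (c k) (a ^ k) (hpow k hk)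
      simpa [hg_def, mul_assoc] using this
  -- levels of partial sums
  have hpartial : ∀ N : ℕ,
      MatMem 𝓕.level (φ n (∑ k ∈ Finset.range N, c k • a ^ k))
        ((∑ k ∈ Finset.range N, g k) * L) := by
    intro N
    induction N with
    | zero =>
      have h0 := matMem_zero (φ := φ) (n := n) 𝓕 ((0:ℝ≥0) * L)
      simpa using h0
    | succ N IH =>
      rw [Finset.sum_range_succ, Finset.sum_range_succ, add_mul]
      exact 𝓕.mat_add n _ _ _ _ IH (hterm N)
  -- compare partial-sum levels with the target level
  set T : ℝ≥0 := (∑' k : ℕ, (k : ℝ) * ‖c k‖ * ‖a‖ ^ (k - 1)).toNNReal with hT_def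
  have htsum_nonneg : (0:ℝ) ≤ ∑' k : ℕ, (k : ℝ) * ‖c k‖ * ‖a‖ ^ (k - 1) :=
    tsum_nonneg (fun k => by positivity)
  have hle : ∀ N : ℕ, (∑ k ∈ Finset.range N, g k) ≤ T := by
    intro N
    rw [hT_def, Real.le_toNNReal_iff_coe_le htsum_nonneg]
    have : ((∑ k ∈ Finset.range N, g k : ℝ≥0) : ℝ)
        = ∑ k ∈ Finset.range N, (k : ℝ) * ‖c k‖ * ‖a‖ ^ (k - 1) := by
      push_cast [hg_def]
      exact Finset.sum_congr rfl fun k _ => by ring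
    rw [this]
    exact Summable.sum_le_tsum _ (fun k _ => by positivity) hsum2
  -- pass to the limit
  have hclosed := 𝓕.mat_closed n (T * L)
  have htend := hsum1.hasSum.tendsto_sum_nat
  exact hclosed.mem_of_tendsto htend (Filter.Eventually.of_forall fun N =>
    matMem_mono 𝓕 (mul_le_mul_left (hle N) L) (hpartial N))
end

section
/- Let A be a unital C*-algebra equipped with a Lipschitz filtration {A_L}_{L≥0}. If p, q ∈ P^L_n(A) satisfy ‖p − q‖ ≤ 1/12, then there exists a norm-continuous map h : [0,1] → P^{3L}_n(A) with h(0) = p, h(1) = q, and ‖h(t) − h(s)‖ ≤ 3|t − s| for all t, s ∈ [0,1] (i.e. h is a 3-Lipschitz homotopy of projections connecting p and q inside P^{3L}_n(A)). -/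
open scoped NNReal

variable {A : Type*} [CStarAlgebra A] {B : ℕ → Type*} [∀ n, CStarAlgebra (B n)]

section aux

/-- Taylor coefficients of `(1-u)^(-1/2)`: `bc k = centralBinom k / 4^k`, via recursion. -/
noncomputable def bc : ℕ → ℝ
  | 0 => 1
  | k + 1 => bc k * ((2 * k + 1) / (2 * k + 2))

lemma bc_pos : ∀ k, 0 < bc k
  | 0 => one_pos
  | k + 1 => by
      have := bc_pos k
      have h2 : (0:ℝ) < 2 * k + 2 := by positivity
      unfold bc
      positivity

lemma bc_le_one : ∀ k, bc k ≤ 1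
  | 0 => le_refl 1
  | k + 1 => by
      have h1 := bc_le_one k
      have h0 := (bc_pos k).le
      unfold bc
      have h2 : (2 * (k:ℝ) + 1) / (2 * k + 2) ≤ 1 := by
        rw [div_le_one (by positivity)]; linarith
      calc bc k * ((2 * k + 1) / (2 * k + 2)) ≤ 1 * 1 := by
            apply mul_le_mul h1 h2 (by positivity) one_pos.le
        _ = 1 := one_mul 1

lemma bc_rec (i : ℕ) : (2 * (i:ℝ) + 2) * bc (i + 1) = (2 * i + 1) * bc i := by
  show (2 * (i:ℝ) + 2) * (bc i * ((2 * i + 1) / (2 * i + 2))) = _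
  have h2 : (2 * (i:ℝ) + 2) ≠ 0 := by positivity
  field_simp

open Finset in
lemma bc_refl_sum (k : ℕ) :
    2 * (∑ i ∈ range (k + 1), (i : ℝ) * (bc i * bc (k - i)))
      = k * ∑ i ∈ range (k + 1), bc i * bc (k - i) := by
  have h := Finset.sum_range_reflect (fun i => (i : ℝ) * (bc i * bc (k - i))) (k + 1)
  rw [two_mul]
  nth_rewrite 1 [← h]
  rw [← Finset.sum_add_distrib, Finset.mul_sum]
  refine Finset.sum_congr rfl fun j hj => ?_
  have hjk : j ≤ k := Nat.lt_succ_iff.mp (Finset.mem_range.mp hj)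
  have e1 : k + 1 - 1 - j = k - j := by omega
  have e2 : k - (k - j) = j := by omega
  rw [e1, e2, Nat.cast_sub hjk]
  ring

open Finset in
lemma bc_conv : ∀ k, ∑ i ∈ range (k + 1), bc i * bc (k - i) = 1 := by
  intro k
  induction k with
  | zero => simp [bc]
  | succ k ih =>
    have hk1 : ((k:ℝ) + 1) ≠ 0 := by positivity
    apply mul_left_cancel₀ hk1
    rw [mul_one]
    have c1 : ((k:ℝ) + 1) * ∑ i ∈ range (k + 2), bc i * bc (k + 1 - i)
        = 2 * (∑ i ∈ range (k + 2), (i : ℝ) * (bc i * bc (k + 1 - i))) := by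
      rw [bc_refl_sum (k + 1)]; push_cast; ring
    have c2 : ∑ i ∈ range (k + 2), (i : ℝ) * (bc i * bc (k + 1 - i))
        = ∑ i ∈ range (k + 1), ((i:ℝ) + 1) * (bc (i + 1) * bc (k - i)) := by
      rw [Finset.sum_range_succ' (fun i => (i : ℝ) * (bc i * bc (k + 1 - i))) (k + 1)]
      simp only [Nat.cast_zero, zero_mul, add_zero]
      refine Finset.sum_congr rfl fun i _ => ?_
      have : k + 1 - (i + 1) = k - i := by omega
      rw [this]; push_cast; ring
    have c3 : ∀ i : ℕ, 2 * (((i:ℝ) + 1) * (bc (i + 1) * bc (k - i)))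
        = (2 * i + 1) * (bc i * bc (k - i)) := by
      intro i
      have := bc_rec i
      calc 2 * (((i:ℝ) + 1) * (bc (i + 1) * bc (k - i)))
          = ((2 * (i:ℝ) + 2) * bc (i + 1)) * bc (k - i) := by ring
        _ = ((2 * (i:ℝ) + 1) * bc i) * bc (k - i) := by rw [this]
        _ = (2 * i + 1) * (bc i * bc (k - i)) := by ring
    calc ((k:ℝ) + 1) * ∑ i ∈ range (k + 2), bc i * bc (k + 1 - i)
        = ∑ i ∈ range (k + 1), 2 * (((i:ℝ) + 1) * (bc (i + 1) * bc (k - i))) := by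
          rw [c1, c2, Finset.mul_sum]
      _ = ∑ i ∈ range (k + 1), (2 * (i:ℝ) + 1) * (bc i * bc (k - i)) := by
          exact Finset.sum_congr rfl fun i _ => c3 i
      _ = 2 * (∑ i ∈ range (k + 1), (i : ℝ) * (bc i * bc (k - i)))
            + ∑ i ∈ range (k + 1), bc i * bc (k - i) := by
          rw [Finset.mul_sum, ← Finset.sum_add_distrib]
          exact Finset.sum_congr rfl fun i _ => by ring
      _ = (k:ℝ) * ∑ i ∈ range (k + 1), bc i * bc (k - i)
            + ∑ i ∈ range (k + 1), bc i * bc (k - i) := by rw [bc_refl_sum k]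
      _ = (k:ℝ) + 1 := by rw [ih]; ring

section ser
variable {E : Type*} [CStarAlgebra E]

/-- `gser v = (1 - v)^(-1/2)` via the binomial series. -/
noncomputable def gser (v : E) : E := ∑' k : ℕ, ((bc k : ℂ)) • v ^ k

variable {v u : E}

lemma norm_one_le_one' : ‖(1 : E)‖ ≤ 1 := by
  have h := CStarRing.norm_star_mul_self (x := (1 : E))
  rw [star_one, one_mul] at h
  nlinarith [norm_nonneg (1 : E)]

lemma norm_pow_le'' (v : E) : ∀ k : ℕ, ‖v ^ k‖ ≤ ‖v‖ ^ k := by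
  intro k
  rcases Nat.eq_zero_or_pos k with hk | hk
  · subst hk; simpa using norm_one_le_one' (E := E)
  · exact norm_pow_le' v hk

lemma gser_term_norm (hv : ‖v‖ ≤ (144:ℝ)⁻¹) (k : ℕ) :
    ‖((bc k : ℂ)) • v ^ k‖ ≤ ((144:ℝ)⁻¹) ^ k := by
  rw [norm_smul]
  calc ‖((bc k : ℝ) : ℂ)‖ * ‖v ^ k‖ ≤ 1 * ((144:ℝ)⁻¹) ^ k := by
        apply mul_le_mul
        · rw [Complex.norm_real, Real.norm_eq_abs, abs_of_pos (bc_pos k)]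
          exact bc_le_one k
        · exact (norm_pow_le'' v k).trans (pow_le_pow_left₀ (norm_nonneg v) hv k)
        · positivity
        · norm_num
    _ = _ := one_mul _

lemma gser_summable_norm (hv : ‖v‖ ≤ (144:ℝ)⁻¹) :
    Summable fun k : ℕ => ‖((bc k : ℂ)) • v ^ k‖ :=
  Summable.of_nonneg_of_le (fun k => norm_nonneg _) (gser_term_norm hv)
    (summable_geometric_of_lt_one (by norm_num) (by norm_num))

lemma gser_summable (hv : ‖v‖ ≤ (144:ℝ)⁻¹) :
    Summable fun k : ℕ => ((bc k : ℂ)) • v ^ k :=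
  (gser_summable_norm hv).of_norm

lemma gser_norm_le (hv : ‖v‖ ≤ (144:ℝ)⁻¹) : ‖gser v‖ ≤ 2 := by
  calc ‖gser v‖ ≤ ∑' k : ℕ, ‖((bc k : ℂ)) • v ^ k‖ :=
        norm_tsum_le_tsum_norm (gser_summable_norm hv)
    _ ≤ ∑' k : ℕ, ((144:ℝ)⁻¹) ^ k := by
        exact Summable.tsum_le_tsum (gser_term_norm hv) (gser_summable_norm hv)
          (summable_geometric_of_lt_one (by norm_num) (by norm_num))
    _ = (1 - (144:ℝ)⁻¹)⁻¹ := tsum_geometric_of_lt_one (by norm_num) (by norm_num)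
    _ ≤ 2 := by norm_num

lemma gser_mul_self (hv : ‖v‖ ≤ (144:ℝ)⁻¹) :
    gser v * gser v = ∑' k : ℕ, v ^ k := by
  rw [gser, tsum_mul_tsum_eq_tsum_sum_range_of_summable_norm
    (gser_summable_norm hv) (gser_summable_norm hv)]
  refine tsum_congr fun k => ?_
  have : ∀ i ∈ Finset.range (k + 1),
      ((bc i : ℂ)) • v ^ i * ((bc (k - i) : ℂ)) • v ^ (k - i)
        = ((bc i * bc (k - i) : ℝ) : ℂ) • v ^ k := by
    intro i hi
    have hik : i ≤ k := Nat.lt_succ_iff.mp (Finset.mem_range.mp hi)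
    rw [smul_mul_smul_comm, ← pow_add, Nat.add_sub_cancel' hik]
    push_cast
    ring_nf
  rw [Finset.sum_congr rfl this, ← Finset.sum_smul, ← Complex.ofReal_sum, bc_conv k,
    Complex.ofReal_one, one_smul]

lemma one_sub_mul_gser_sq (hv : ‖v‖ ≤ (144:ℝ)⁻¹) :
    (1 - v) * (gser v * gser v) = 1 := by
  rw [gser_mul_self hv]
  exact mul_neg_geom_series v (lt_of_le_of_lt hv (by norm_num))

lemma gser_star (hv : IsSelfAdjoint v) : IsSelfAdjoint (gser v) := by
  rw [IsSelfAdjoint, gser, tsum_star]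
  refine tsum_congr fun k => ?_
  rw [star_smul, star_pow, hv.star_eq, Complex.star_def, Complex.conj_ofReal]

lemma gser_commute {a : E} (h : Commute a v) : Commute a (gser v) :=
  Commute.tsum_right a fun k => (h.pow_right k).smul_right _

lemma pow_sub_pow_norm_le (hv : ‖v‖ ≤ (144:ℝ)⁻¹) (hu : ‖u‖ ≤ (144:ℝ)⁻¹) :
    ∀ k : ℕ, ‖v ^ k - u ^ k‖ ≤ k * ((144:ℝ)⁻¹) ^ (k - 1) * ‖v - u‖ := by
  intro k
  induction k with
  | zero => simp
  | succ k ih =>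
    have h1 : v ^ (k+1) - u ^ (k+1) = v ^ k * (v - u) + (v ^ k - u ^ k) * u := by
      rw [pow_succ, pow_succ]
      noncomm_ring
    calc ‖v ^ (k+1) - u ^ (k+1)‖ ≤ ‖v ^ k * (v - u)‖ + ‖(v ^ k - u ^ k) * u‖ := by
          rw [h1]; exact norm_add_le _ _
      _ ≤ ‖v‖ ^ k * ‖v - u‖ + (k * ((144:ℝ)⁻¹) ^ (k - 1) * ‖v - u‖) * ‖u‖ := by
          gcongr
          · exact (norm_mul_le _ _).trans (by gcongr; exact norm_pow_le'' v k)
          · exact (norm_mul_le _ _).trans (by gcongr)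
      _ ≤ ((144:ℝ)⁻¹) ^ k * ‖v - u‖
            + (k * ((144:ℝ)⁻¹) ^ (k - 1) * ‖v - u‖) * (144:ℝ)⁻¹ := by
          gcongr
      _ ≤ ((k:ℝ) + 1) * ((144:ℝ)⁻¹) ^ ((k+1) - 1) * ‖v - u‖ := by
          rcases Nat.eq_zero_or_pos k with hk | hk
          · subst hk; simp
          · have e : ((144:ℝ)⁻¹) ^ (k - 1) * (144:ℝ)⁻¹ = ((144:ℝ)⁻¹) ^ k := by
              rw [← pow_succ]; congr 1; omega
            have : (k : ℝ) * ((144:ℝ)⁻¹) ^ (k - 1) * ‖v - u‖ * (144:ℝ)⁻¹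
                = (k : ℝ) * (((144:ℝ)⁻¹) ^ k) * ‖v - u‖ := by
              rw [← e]; ring
            rw [this]
            exact le_of_eq (by rw [Nat.add_sub_cancel]; ring)
      _ = (↑(k + 1) : ℝ) * ((144:ℝ)⁻¹) ^ ((k+1) - 1) * ‖v - u‖ := by push_cast; ring

lemma kfac_le (k : ℕ) : (k:ℝ) * ((144:ℝ)⁻¹) ^ (k - 1) ≤ 2 * ((2:ℝ)⁻¹) ^ k := by
  rcases Nat.eq_zero_or_pos k with hk | hk
  · subst hk; norm_num
  · obtain ⟨j, rfl⟩ := Nat.exists_eq_add_of_le hk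
    clear hk
    have h1 : ((1:ℕ) + j : ℝ) ≤ 2 ^ j := by
      induction j with
      | zero => norm_num
      | succ j ihj =>
        push_cast at ihj ⊢
        have hj0 : (0:ℝ) ≤ (j:ℝ) := Nat.cast_nonneg j
        calc (1:ℝ) + ((j:ℝ) + 1) ≤ 2 * (1 + (j:ℝ)) := by linarith
          _ ≤ 2 * 2 ^ j := by linarith
          _ = 2 ^ (j + 1) := by ring
    have e1 : ((1:ℕ) + j : ℕ) - 1 = j := by omega
    rw [e1]
    have : (2:ℝ) * ((2:ℝ)⁻¹) ^ (1 + j) = ((2:ℝ)⁻¹) ^ j := by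
      rw [pow_add, pow_one]; ring
    rw [this]
    calc ((1 + j : ℕ) : ℝ) * ((144:ℝ)⁻¹) ^ j ≤ (2:ℝ) ^ j * ((144:ℝ)⁻¹) ^ j := by
          gcongr
          push_cast
          push_cast at h1
          linarith
      _ = ((72:ℝ)⁻¹) ^ j := by rw [← mul_pow]; norm_num
      _ ≤ ((2:ℝ)⁻¹) ^ j := by gcongr <;> norm_num

lemma gser_diff (hv : ‖v‖ ≤ (144:ℝ)⁻¹) (hu : ‖u‖ ≤ (144:ℝ)⁻¹) :
    ‖gser v - gser u‖ ≤ 4 * ‖v - u‖ := by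
  have hsum2 : Summable fun k : ℕ => ((2:ℝ)⁻¹) ^ k * (2 * ‖v - u‖) :=
    Summable.mul_right _
      (summable_geometric_of_lt_one (by norm_num : (0:ℝ) ≤ 2⁻¹) (by norm_num))
  have hterm : ∀ k : ℕ, ‖((bc k : ℂ)) • v ^ k - ((bc k : ℂ)) • u ^ k‖
      ≤ ((2:ℝ)⁻¹) ^ k * (2 * ‖v - u‖) := by
    intro k
    rw [← smul_sub, norm_smul]
    calc ‖((bc k : ℝ) : ℂ)‖ * ‖v ^ k - u ^ k‖
        ≤ 1 * (k * ((144:ℝ)⁻¹) ^ (k - 1) * ‖v - u‖) := by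
          apply mul_le_mul
          · rw [Complex.norm_real, Real.norm_eq_abs, abs_of_pos (bc_pos k)]
            exact bc_le_one k
          · exact pow_sub_pow_norm_le hv hu k
          · exact norm_nonneg _
          · norm_num
      _ ≤ 1 * ((2 * ((2:ℝ)⁻¹) ^ k) * ‖v - u‖) := by
          have := mul_le_mul_of_nonneg_right (kfac_le k) (norm_nonneg (v - u))
          nlinarith
      _ = ((2:ℝ)⁻¹) ^ k * (2 * ‖v - u‖) := by ring
  have hdiff : gser v - gser u = ∑' k : ℕ, (((bc k : ℂ)) • v ^ k - ((bc k : ℂ)) • u ^ k) :=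
    ((gser_summable hv).hasSum.sub (gser_summable hu).hasSum).tsum_eq.symm
  have hsumd : Summable fun k : ℕ => ‖((bc k : ℂ)) • v ^ k - ((bc k : ℂ)) • u ^ k‖ :=
    Summable.of_nonneg_of_le (fun k => norm_nonneg _) hterm hsum2
  calc ‖gser v - gser u‖ ≤ ∑' k : ℕ, ‖((bc k : ℂ)) • v ^ k - ((bc k : ℂ)) • u ^ k‖ := by
        rw [hdiff]; exact norm_tsum_le_tsum_norm hsumd
    _ ≤ ∑' k : ℕ, ((2:ℝ)⁻¹) ^ k * (2 * ‖v - u‖) := Summable.tsum_le_tsum hterm hsumd hsum2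
    _ = (1 - (2:ℝ)⁻¹)⁻¹ * (2 * ‖v - u‖) := by
        rw [tsum_mul_right, tsum_geometric_of_lt_one (by norm_num) (by norm_num)]
    _ = 4 * ‖v - u‖ := by ring
  
lemma gser_zero : gser (0 : E) = 1 := by
  rw [gser, tsum_eq_single 0]
  · simp [bc]
  · intro k hk
    rw [zero_pow hk, smul_zero]

end ser

section alg
variable {E : Type*} [CStarAlgebra E]

noncomputable def xx (p q : E) (t : ℝ) : E := ((1 - t : ℝ) : ℂ) • p + ((t : ℝ) : ℂ) • q
noncomputable def yy (p q : E) (t : ℝ) : E := (2 : ℂ) • xx p q t - 1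
noncomputable def vv (p q : E) (t : ℝ) : E := ((4 * t * (1 - t) : ℝ) : ℂ) • ((p - q) * (p - q))

variable {p q : E} (hpid : p * p = p) (hqid : q * q = q)

include hpid hqid in
lemma wz_anticomm :
    (p - q) * (p + q - 1) + (p + q - 1) * (p - q) = 0 := by
  simp only [mul_sub, sub_mul, mul_add, add_mul, mul_one, one_mul, hpid, hqid]
  abel

include hpid hqid in
lemma zz_eq : (p + q - 1) * (p + q - 1) = 1 - (p - q) * (p - q) := by
  simp only [mul_sub, sub_mul, mul_add, add_mul, mul_one, one_mul, hpid, hqid]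
  abel

lemma yy_eq (t : ℝ) : yy p q t = ((1 - 2 * t : ℝ) : ℂ) • (p - q) + (p + q - 1) := by
  unfold yy xx
  push_cast
  module

include hpid hqid in
lemma yy_sq (t : ℝ) : yy p q t * yy p q t = 1 - vv p q t := by
  have key : ∀ c : ℂ, (c • (p - q) + (p + q - 1)) * (c • (p - q) + (p + q - 1))
      = (c * c) • ((p - q) * (p - q)) + c • ((p - q) * (p + q - 1) + (p + q - 1) * (p - q))
        + (p + q - 1) * (p + q - 1) := by
    intro c
    simp only [add_mul, mul_add, smul_mul_assoc, mul_smul_comm, smul_smul, smul_add]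
    module
  rw [yy_eq, key, wz_anticomm hpid hqid, zz_eq hpid hqid, vv]
  push_cast
  module

include hpid hqid in
lemma p_comm_m : Commute p ((p - q) * (p - q)) := by
  have hm : (p - q) * (p - q) = p + q - (p * q + q * p) := by
    simp only [mul_sub, sub_mul, hpid, hqid]
    abel
  have h1 : ∀ z : E, p * (p * z) = p * z := fun z => by rw [← mul_assoc, hpid]
  have h2 : ∀ z : E, q * (q * z) = q * z := fun z => by rw [← mul_assoc, hqid]
  unfold Commute SemiconjBy
  rw [hm]
  simp only [mul_add, add_mul, mul_sub, sub_mul, mul_assoc, hpid, hqid, h1, h2]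
  abel

include hpid hqid in
lemma q_comm_m : Commute q ((p - q) * (p - q)) := by
  have hm : (p - q) * (p - q) = p + q - (p * q + q * p) := by
    simp only [mul_sub, sub_mul, hpid, hqid]
    abel
  have h1 : ∀ z : E, p * (p * z) = p * z := fun z => by rw [← mul_assoc, hpid]
  have h2 : ∀ z : E, q * (q * z) = q * z := fun z => by rw [← mul_assoc, hqid]
  unfold Commute SemiconjBy
  rw [hm]
  simp only [mul_add, add_mul, mul_sub, sub_mul, mul_assoc, hpid, hqid, h1, h2]
  abel

include hpid hqid in
lemma yy_comm_vv (t s : ℝ) : Commute (yy p q t) (vv p q s) := by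
  unfold yy xx vv
  refine Commute.sub_left (Commute.smul_left (Commute.add_left ?_ ?_) 2) (Commute.one_left _)
  · exact ((p_comm_m hpid hqid).smul_right _).smul_left _
  · exact ((q_comm_m hpid hqid).smul_right _).smul_left _

variable (hpsa : star p = p) (hqsa : star q = q)

include hpsa hqsa in
lemma yy_sa (t : ℝ) : star (yy p q t) = yy p q t := by
  unfold yy xx
  simp only [star_sub, star_add, star_smul, star_one, hpsa, hqsa, Complex.star_def,
    Complex.conj_ofReal, map_ofNat]

include hpsa hqsa in
lemma vv_sa (t : ℝ) : star (vv p q t) = vv p q t := by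
  unfold vv
  rw [star_smul, star_mul, star_sub, hpsa, hqsa, Complex.star_def, Complex.conj_ofReal]

-- norms
include hpid hpsa in
lemma proj_norm_le_one : ‖p‖ ≤ 1 := by
  have h := CStarRing.norm_star_mul_self (x := p)
  rw [hpsa, hpid] at h
  nlinarith [norm_nonneg p]

lemma norm_one_le_one₂ : ‖(1 : E)‖ ≤ 1 := by
  have h := CStarRing.norm_star_mul_self (x := (1 : E))
  rw [star_one, one_mul] at h
  nlinarith [norm_nonneg (1 : E)]

include hpid hqid hpsa hqsa in
lemma yy_norm_le {t : ℝ} (ht : t ∈ Set.Icc (0:ℝ) 1) : ‖yy p q t‖ ≤ 3 := by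
  obtain ⟨ht0, ht1⟩ := ht
  have hx : ‖xx p q t‖ ≤ 1 := by
    unfold xx
    calc ‖((1 - t : ℝ) : ℂ) • p + ((t : ℝ) : ℂ) • q‖
        ≤ ‖((1 - t : ℝ) : ℂ)‖ * ‖p‖ + ‖((t : ℝ) : ℂ)‖ * ‖q‖ := by
          refine (norm_add_le _ _).trans ?_
          rw [norm_smul, norm_smul]
      _ ≤ (1 - t) * 1 + t * 1 := by
          have hp1 : ‖p‖ ≤ 1 := proj_norm_le_one hpid hpsa
          have hq1 : ‖q‖ ≤ 1 := proj_norm_le_one hqid hqsa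
          rw [Complex.norm_real, Complex.norm_real, Real.norm_eq_abs, Real.norm_eq_abs,
            abs_of_nonneg (by linarith), abs_of_nonneg ht0]
          have h1t : (0:ℝ) ≤ 1 - t := by linarith
          gcongr
      _ = 1 := by ring
  unfold yy
  calc ‖(2 : ℂ) • xx p q t - 1‖ ≤ ‖(2 : ℂ) • xx p q t‖ + ‖(1 : E)‖ := norm_sub_le _ _
    _ ≤ 2 * 1 + 1 := by
        rw [norm_smul]
        gcongr
        · simp
        · exact norm_one_le_one₂
    _ = 3 := by ring

omit hpid hqid hpsa hqsa in
lemma yy_diff (t s : ℝ) : yy p q t - yy p q s = ((2 * (t - s) : ℝ) : ℂ) • (q - p) := by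
  unfold yy xx
  push_cast
  module

omit hpid hqid hpsa hqsa in
lemma vv_diff (t s : ℝ) : vv p q t - vv p q s
    = ((4 * t * (1 - t) - 4 * s * (1 - s) : ℝ) : ℂ) • ((p - q) * (p - q)) := by
  unfold vv
  push_cast
  module

lemma alpha_bound {t : ℝ} (ht : t ∈ Set.Icc (0:ℝ) 1) : |4 * t * (1 - t)| ≤ 1 := by
  obtain ⟨ht0, ht1⟩ := ht
  rw [abs_le]
  constructor <;> nlinarith [sq_nonneg (2 * t - 1)]

lemma alpha_diff_bound {t s : ℝ} (ht : t ∈ Set.Icc (0:ℝ) 1) (hs : s ∈ Set.Icc (0:ℝ) 1) :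
    |4 * t * (1 - t) - 4 * s * (1 - s)| ≤ 4 * |t - s| := by
  obtain ⟨ht0, ht1⟩ := ht
  obtain ⟨hs0, hs1⟩ := hs
  have e : 4 * t * (1 - t) - 4 * s * (1 - s) = 4 * (t - s) * (1 - (t + s)) := by ring
  rw [e, abs_mul, abs_mul]
  have h1 : |1 - (t + s)| ≤ 1 := by rw [abs_le]; constructor <;> linarith
  have h4 : |(4:ℝ)| = 4 := by norm_num
  calc |(4:ℝ)| * |t - s| * |1 - (t + s)| ≤ |(4:ℝ)| * |t - s| * 1 := by
        gcongr
    _ = 4 * |t - s| := by rw [h4]; ring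

end alg

section path
variable {E : Type*} [CStarAlgebra E]

noncomputable def hPath (p q : E) (t : ℝ) : E :=
  (2⁻¹ : ℂ) • (1 + yy p q t * gser (vv p q t))

variable {p q : E}

lemma vv_norm_le (hpq : ‖p - q‖ ≤ 1 / 12) {t : ℝ} (ht : t ∈ Set.Icc (0:ℝ) 1) :
    ‖vv p q t‖ ≤ (144:ℝ)⁻¹ := by
  unfold vv
  rw [norm_smul, Complex.norm_real, Real.norm_eq_abs]
  calc |4 * t * (1 - t)| * ‖(p - q) * (p - q)‖ ≤ 1 * (‖p - q‖ * ‖p - q‖) := by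
        apply mul_le_mul (alpha_bound ht) (norm_mul_le _ _) (norm_nonneg _) zero_le_one
    _ ≤ 1 * (1/12 * (1/12)) := by
        have h0 := norm_nonneg (p - q)
        apply mul_le_mul_of_nonneg_left _ zero_le_one
        exact mul_le_mul hpq hpq h0 (by norm_num)
    _ ≤ (144:ℝ)⁻¹ := by norm_num

lemma hPath_zero : hPath p q 0 = p := by
  unfold hPath yy xx vv
  norm_num
  rw [gser_zero, mul_one]
  module

lemma hPath_one : hPath p q 1 = q := by
  unfold hPath yy xx vv
  norm_num
  rw [gser_zero, mul_one]
  module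

lemma hPath_sa (hpid : p * p = p) (hqid : q * q = q) (hpsa : star p = p) (hqsa : star q = q)
    (t : ℝ) : IsSelfAdjoint (hPath p q t) := by
  have hg : IsSelfAdjoint (gser (vv p q t)) :=
    gser_star (by rw [IsSelfAdjoint]; exact vv_sa hpsa hqsa t)
  have hc : Commute (yy p q t) (gser (vv p q t)) := gser_commute (yy_comm_vv hpid hqid t t)
  rw [IsSelfAdjoint, hPath, star_smul, star_add, star_one, star_mul, hg.star_eq,
    yy_sa hpsa hqsa t, ← hc.eq]
  congr 1
  simp [Complex.star_def, Complex.ext_iff]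

lemma hPath_idem (hpid : p * p = p) (hqid : q * q = q) (hpq : ‖p - q‖ ≤ 1 / 12)
    {t : ℝ} (ht : t ∈ Set.Icc (0:ℝ) 1) : IsIdempotentElem (hPath p q t) := by
  set y := yy p q t with hy
  set g := gser (vv p q t) with hg
  have hc : Commute y g := gser_commute (yy_comm_vv hpid hqid t t)
  have key : y * g * (y * g) = 1 := by
    have h1 : y * g * (y * g) = y * y * (g * g) := by
      rw [mul_assoc y g (y * g), ← mul_assoc g y g, ← hc.eq, mul_assoc y g g,
        ← mul_assoc y y (g * g)]
    rw [h1, yy_sq hpid hqid t, hg]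
    exact one_sub_mul_gser_sq (vv_norm_le hpq ht)
  show hPath p q t * hPath p q t = hPath p q t
  rw [hPath, ← hy, ← hg, smul_mul_smul_comm]
  have expand : (1 + y * g) * (1 + y * g) = 1 + y * g + (y * g + y * g * (y * g)) := by
    noncomm_ring
  rw [expand, key]
  module

lemma hPath_lip (hpid : p * p = p) (hqid : q * q = q) (hpsa : star p = p) (hqsa : star q = q)
    (hpq : ‖p - q‖ ≤ 1 / 12) {t s : ℝ} (ht : t ∈ Set.Icc (0:ℝ) 1) (hs : s ∈ Set.Icc (0:ℝ) 1) :
    ‖hPath p q t - hPath p q s‖ ≤ 3 * |t - s| := by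
  have hgt : ‖gser (vv p q t)‖ ≤ 2 := gser_norm_le (vv_norm_le hpq ht)
  have hys : ‖yy p q s‖ ≤ 3 := yy_norm_le hpid hqid hpsa hqsa hs
  have hydiff : ‖yy p q t - yy p q s‖ ≤ 2 * |t - s| * (1/12) := by
    rw [yy_diff, norm_smul, Complex.norm_real, Real.norm_eq_abs, abs_mul]
    have : |(2:ℝ)| = 2 := by norm_num
    rw [this]
    have hqp : ‖q - p‖ ≤ 1/12 := by rw [← norm_neg, neg_sub]; exact hpq
    exact mul_le_mul le_rfl hqp (norm_nonneg _) (by positivity)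
  have hgdiff : ‖gser (vv p q t) - gser (vv p q s)‖ ≤ 4 * (4 * |t - s| * (144:ℝ)⁻¹) := by
    refine (gser_diff (vv_norm_le hpq ht) (vv_norm_le hpq hs)).trans ?_
    have hvd : ‖vv p q t - vv p q s‖ ≤ 4 * |t - s| * (144:ℝ)⁻¹ := by
      rw [vv_diff, norm_smul, Complex.norm_real, Real.norm_eq_abs]
      calc |4 * t * (1 - t) - 4 * s * (1 - s)| * ‖(p - q) * (p - q)‖
          ≤ (4 * |t - s|) * (144:ℝ)⁻¹ := by
            apply mul_le_mul (alpha_diff_bound ht hs) _ (norm_nonneg _) (by positivity)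
            calc ‖(p - q) * (p - q)‖ ≤ ‖p - q‖ * ‖p - q‖ := norm_mul_le _ _
              _ ≤ (1/12) * (1/12) := by
                  have h0 := norm_nonneg (p - q)
                  exact mul_le_mul hpq hpq h0 (by norm_num)
              _ ≤ (144:ℝ)⁻¹ := by norm_num
        _ = 4 * |t - s| * (144:ℝ)⁻¹ := by ring
    linarith
  have hsplit : hPath p q t - hPath p q s
      = (2⁻¹ : ℂ) • ((yy p q t - yy p q s) * gser (vv p q t)
          + yy p q s * (gser (vv p q t) - gser (vv p q s))) := by
    unfold hPath
    rw [← smul_sub]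
    congr 1
    noncomm_ring
  rw [hsplit, norm_smul]
  have hn2 : ‖(2⁻¹ : ℂ)‖ = 2⁻¹ := by
    rw [norm_inv]
    norm_num
  rw [hn2]
  have habs : (0:ℝ) ≤ |t - s| := abs_nonneg _
  calc 2⁻¹ * ‖(yy p q t - yy p q s) * gser (vv p q t)
          + yy p q s * (gser (vv p q t) - gser (vv p q s))‖
      ≤ 2⁻¹ * (‖yy p q t - yy p q s‖ * ‖gser (vv p q t)‖
          + ‖yy p q s‖ * ‖gser (vv p q t) - gser (vv p q s)‖) := by
        gcongr
        exact (norm_add_le _ _).trans (add_le_add (norm_mul_le _ _) (norm_mul_le _ _))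
    _ ≤ 2⁻¹ * ((2 * |t - s| * (1/12)) * 2 + 3 * (4 * (4 * |t - s| * (144:ℝ)⁻¹))) := by
        have g1 := mul_le_mul hydiff hgt (norm_nonneg _) (by positivity)
        have g2 := mul_le_mul hys hgdiff (norm_nonneg _) (by positivity)
        linarith
    _ ≤ 3 * |t - s| := by nlinarith
  
end path

end aux

section lev
variable (φ : ∀ n, B n ≃⋆ₐ[ℂ] Matrix (Fin n) (Fin n) A) (𝓕 : LipschitzFiltration A B φ) {n : ℕ}

lemma ML_mono {b : B n} {L L' : ℝ≥0} (h : MatMem 𝓕.level (φ n b) L) (hL : L ≤ L') :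
    MatMem 𝓕.level (φ n b) L' := fun ξ η h1 h2 => 𝓕.mono hL (h ξ η h1 h2)

lemma ML_algebraMap (z : ℂ) (L : ℝ≥0) : MatMem 𝓕.level (φ n (algebraMap ℂ (B n) z)) L := by
  have h := 𝓕.mat_scalar n L (z • (1 : Matrix (Fin n) (Fin n) ℂ))
  have e : ((z • (1 : Matrix (Fin n) (Fin n) ℂ)).map (fun c : ℂ => c • (1 : A)))
      = φ n (algebraMap ℂ (B n) z) := by
    rw [Algebra.algebraMap_eq_smul_one, map_smul, map_one]
    ext i j
    simp only [Matrix.map_apply, Matrix.smul_apply, Matrix.one_apply, smul_eq_mul]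
    split_ifs <;> simp
  rwa [e] at h

lemma ML_one (L : ℝ≥0) : MatMem 𝓕.level (φ n (1 : B n)) L := by
  have h := ML_algebraMap φ 𝓕 (n := n) 1 L
  rwa [map_one] at h

lemma ML_zero : MatMem 𝓕.level (φ n (0 : B n)) 0 := by
  intro ξ η h1 h2
  simp only [map_zero, Matrix.zero_apply, smul_zero, Finset.sum_const_zero]
  have h := 𝓕.scalar_mem 0 0
  rwa [zero_smul] at h

lemma ML_pow {a : B n} {Λ : ℝ≥0} (h : MatMem 𝓕.level (φ n a) Λ)
    (ha : ‖a‖₊ ≤ (144:ℝ≥0)⁻¹) (k : ℕ) :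
    MatMem 𝓕.level (φ n (a ^ (k + 1))) (((k:ℝ≥0) + 1) * ((144:ℝ≥0)⁻¹) ^ k * Λ) := by
  induction k with
  | zero =>
    refine ML_mono φ 𝓕 (by rwa [pow_one]) ?_
    simp
  | succ k ih =>
    have h2 := 𝓕.mat_mul n _ _ _ _ ih h
    rw [← pow_succ] at h2
    refine ML_mono φ 𝓕 h2 ?_
    have hpow : ‖a ^ (k + 1)‖₊ ≤ ((144:ℝ≥0)⁻¹) ^ (k + 1) :=
      (nnnorm_pow_le' a (Nat.succ_pos k)).trans (pow_le_pow_left' ha (k + 1))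
    calc ‖a ^ (k+1)‖₊ * Λ + ‖a‖₊ * (((k:ℝ≥0) + 1) * ((144:ℝ≥0)⁻¹) ^ k * Λ)
        ≤ ((144:ℝ≥0)⁻¹) ^ (k+1) * Λ
            + (144:ℝ≥0)⁻¹ * (((k:ℝ≥0) + 1) * ((144:ℝ≥0)⁻¹) ^ k * Λ) := by
          exact add_le_add (mul_le_mul' hpow le_rfl) (mul_le_mul' ha le_rfl)
      _ = (((k:ℝ≥0) + 1) + 1) * ((144:ℝ≥0)⁻¹) ^ (k+1) * Λ := by ring
      _ = ((((k+1):ℕ):ℝ≥0) + 1) * ((144:ℝ≥0)⁻¹) ^ (k+1) * Λ := by push_cast; ring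

lemma geo_partial_le (N : ℕ) : (∑ j ∈ Finset.range N, ((2:ℝ≥0)⁻¹) ^ j) ≤ 2 := by
  induction N with
  | zero => simp
  | succ N ih =>
    rw [Finset.sum_range_succ' (fun j => ((2:ℝ≥0)⁻¹) ^ j) N]
    simp only [pow_succ, pow_zero]
    calc (∑ j ∈ Finset.range N, ((2:ℝ≥0)⁻¹) ^ j * 2⁻¹) + 1
        = (∑ j ∈ Finset.range N, ((2:ℝ≥0)⁻¹) ^ j) * 2⁻¹ + 1 := by
          rw [Finset.sum_mul]
      _ ≤ 2 * 2⁻¹ + 1 := by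
          have := mul_le_mul' ih (le_refl (2⁻¹ : ℝ≥0))
          exact add_le_add this le_rfl
      _ ≤ 2 := by
          rw [mul_inv_cancel₀ (two_ne_zero)]
          norm_num

lemma ML_gser {a : B n} {Λ : ℝ≥0} (h : MatMem 𝓕.level (φ n a) Λ)
    (ha : ‖a‖₊ ≤ (144:ℝ≥0)⁻¹) :
    MatMem 𝓕.level (φ n (gser a)) (2 * Λ) := by
  classical
  -- term levels
  set u : ℕ → ℝ≥0 := fun k => if k = 0 then 0 else ((2:ℝ≥0)⁻¹) ^ (k - 1) * Λ with hu
  have hterm : ∀ k, MatMem 𝓕.level (φ n ((bc k : ℂ) • a ^ k)) (u k) := by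
    intro k
    match k with
    | 0 =>
      have e : ((bc 0 : ℝ) : ℂ) • a ^ 0 = 1 := by
        show ((1:ℝ) : ℂ) • a ^ 0 = 1
        simp
      rw [e]
      have u0 : u 0 = 0 := by simp [hu]
      rw [u0]
      exact ML_one φ 𝓕 0
    | k + 1 =>
      have h1 := 𝓕.mat_smul n _ ((bc (k+1) : ℝ) : ℂ) _ (ML_pow φ 𝓕 h ha k)
      refine ML_mono φ 𝓕 h1 ?_
      have hb1 : ‖((bc (k+1) : ℝ) : ℂ)‖₊ ≤ 1 := by
        rw [← NNReal.coe_le_coe, coe_nnnorm, Complex.norm_real, Real.norm_eq_abs,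
          abs_of_pos (bc_pos (k+1)), NNReal.coe_one]
        exact bc_le_one (k+1)
      have hk : ((k:ℝ≥0) + 1) * ((144:ℝ≥0)⁻¹) ^ k ≤ ((2:ℝ≥0)⁻¹) ^ k := by
        rw [← NNReal.coe_le_coe]
        push_cast
        have := kfac_le (k + 1)
        push_cast at this
        calc ((k:ℝ) + 1) * ((144:ℝ)⁻¹) ^ k ≤ 2 * ((2:ℝ)⁻¹) ^ (k+1) := by
              push_cast at this
              linarith
          _ = ((2:ℝ)⁻¹) ^ k := by rw [pow_succ]; ring
      have : u (k+1) = ((2:ℝ≥0)⁻¹) ^ k * Λ := by simp [hu]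
      rw [this]
      calc ‖((bc (k+1) : ℝ) : ℂ)‖₊ * (((k:ℝ≥0) + 1) * ((144:ℝ≥0)⁻¹) ^ k * Λ)
          ≤ 1 * (((2:ℝ≥0)⁻¹) ^ k * Λ) :=
            mul_le_mul' hb1 (mul_le_mul' hk le_rfl)
        _ = ((2:ℝ≥0)⁻¹) ^ k * Λ := one_mul _
  -- partial sums
  have hsum : ∀ N, MatMem 𝓕.level
      (φ n (∑ k ∈ Finset.range N, (bc k : ℂ) • a ^ k)) (∑ k ∈ Finset.range N, u k) := by
    intro N
    induction N with
    | zero =>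
      rw [Finset.range_zero, Finset.sum_empty, Finset.sum_empty]
      exact ML_zero φ 𝓕
    | succ N ih =>
      rw [Finset.sum_range_succ, Finset.sum_range_succ]
      exact 𝓕.mat_add n _ _ _ _ ih (hterm N)
  have hlev : ∀ N, (∑ k ∈ Finset.range N, u k) ≤ 2 * Λ := by
    intro N
    match N with
    | 0 => simp
    | N + 1 =>
      rw [Finset.sum_range_succ' u N]
      have e : ∀ j, u (j + 1) = ((2:ℝ≥0)⁻¹) ^ j * Λ := fun j => by simp [hu]
      have e0 : u 0 = 0 := by simp [hu]
      rw [e0, add_zero]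
      calc (∑ j ∈ Finset.range N, u (j + 1)) = (∑ j ∈ Finset.range N, ((2:ℝ≥0)⁻¹) ^ j) * Λ := by
            rw [Finset.sum_mul]
            exact Finset.sum_congr rfl fun j _ => e j
        _ ≤ 2 * Λ := mul_le_mul' (geo_partial_le N) le_rfl
  -- limit
  have ha' : ‖a‖ ≤ (144:ℝ)⁻¹ := by
    have := ha
    rw [← NNReal.coe_le_coe, coe_nnnorm] at this
    simpa using this
  have htend : Filter.Tendsto (fun N => ∑ k ∈ Finset.range N, (bc k : ℂ) • a ^ k)
      Filter.atTop (nhds (gser a)) := (gser_summable ha').hasSum.tendsto_sum_nat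
  have hmem : ∀ N, (∑ k ∈ Finset.range N, (bc k : ℂ) • a ^ k)
      ∈ {b : B n | MatMem 𝓕.level (φ n b) (2 * Λ)} := fun N =>
    ML_mono φ 𝓕 (hsum N) (hlev N)
  exact (𝓕.mat_closed n (2 * Λ)).mem_of_tendsto htend (Filter.Eventually.of_forall hmem)

end lev

/-- projections at level `L` at distance at most `1/12` are joined by a
3-Lipschitz homotopy of projections at level `3L`. -/
theorem stmt7 (φ : ∀ n, B n ≃⋆ₐ[ℂ] Matrix (Fin n) (Fin n) A)
    (𝓕 : LipschitzFiltration A B φ) {n : ℕ} (L : ℝ≥0) (p q : B n)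
    (hp : PMem φ 𝓕 L p) (hq : PMem φ 𝓕 L q) (hpq : ‖p - q‖ ≤ 1 / 12) :
    ∃ h : ℝ → B n,
      h 0 = p ∧ h 1 = q ∧
      (∀ t ∈ Set.Icc (0 : ℝ) 1, PMem φ 𝓕 (3 * L) (h t)) ∧
      (∀ t ∈ Set.Icc (0 : ℝ) 1, ∀ s ∈ Set.Icc (0 : ℝ) 1, ‖h t - h s‖ ≤ 3 * |t - s|) := by
  
  classical
  obtain ⟨hpL, hpsa', hpid'⟩ := hp
  obtain ⟨hqL, hqsa', hqid'⟩ := hq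
  have hpid : p * p = p := hpid'
  have hqid : q * q = q := hqid'
  have hpsa : star p = p := hpsa'.star_eq
  have hqsa : star q = q := hqsa'.star_eq
  refine ⟨hPath p q, hPath_zero, hPath_one, ?_, ?_⟩
  · intro t ht
    -- levels
    have hMLw : MatMem 𝓕.level (φ n (p - q)) (2 * L) := by
      have e_w : p - q = p + (-1 : ℂ) • q := by
        rw [neg_one_smul, ← sub_eq_add_neg]
      rw [e_w]
      have h0 := 𝓕.mat_add n L (‖(-1 : ℂ)‖₊ * L) p ((-1 : ℂ) • q) hpL
        (𝓕.mat_smul n L (-1) q hqL)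
      refine ML_mono φ 𝓕 h0 ?_
      rw [← NNReal.coe_le_coe]
      push_cast [nnnorm_neg, nnnorm_one]
      linarith [NNReal.coe_nonneg L]
    have hw12 : ‖p - q‖₊ ≤ (12 : ℝ≥0)⁻¹ := by
      rw [← NNReal.coe_le_coe, coe_nnnorm]
      push_cast
      linarith
    have hMLm : MatMem 𝓕.level (φ n ((p - q) * (p - q))) (3⁻¹ * L) := by
      have h0 := 𝓕.mat_mul n (2 * L) (2 * L) (p - q) (p - q) hMLw hMLw
      refine ML_mono φ 𝓕 h0 ?_
      calc ‖p - q‖₊ * (2 * L) + ‖p - q‖₊ * (2 * L)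
          ≤ (12 : ℝ≥0)⁻¹ * (2 * L) + (12 : ℝ≥0)⁻¹ * (2 * L) :=
            add_le_add (mul_le_mul' hw12 le_rfl) (mul_le_mul' hw12 le_rfl)
        _ ≤ 3⁻¹ * L := by
            rw [← NNReal.coe_le_coe]
            push_cast
            linarith [NNReal.coe_nonneg L]
    have hnv : ‖vv p q t‖₊ ≤ (144 : ℝ≥0)⁻¹ := by
      rw [← NNReal.coe_le_coe, coe_nnnorm]
      push_cast
      exact vv_norm_le hpq ht
    have hMLv : MatMem 𝓕.level (φ n (vv p q t)) (3⁻¹ * L) := by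
      have h0 := 𝓕.mat_smul n (3⁻¹ * L) ((4 * t * (1 - t) : ℝ) : ℂ)
        ((p - q) * (p - q)) hMLm
      have h0' : MatMem 𝓕.level (φ n (vv p q t))
          (‖((4 * t * (1 - t) : ℝ) : ℂ)‖₊ * (3⁻¹ * L)) := h0
      refine ML_mono φ 𝓕 h0' ?_
      have hc : ‖((4 * t * (1 - t) : ℝ) : ℂ)‖₊ ≤ 1 := by
        rw [← NNReal.coe_le_coe, coe_nnnorm, Complex.norm_real, Real.norm_eq_abs,
          NNReal.coe_one]
        exact alpha_bound ht
      calc ‖((4 * t * (1 - t) : ℝ) : ℂ)‖₊ * (3⁻¹ * L) ≤ 1 * (3⁻¹ * L) :=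
            mul_le_mul' hc le_rfl
        _ = 3⁻¹ * L := one_mul _
    have hMLg : MatMem 𝓕.level (φ n (gser (vv p q t))) (2 * (3⁻¹ * L)) :=
      ML_gser φ 𝓕 hMLv hnv
    have hMLx : MatMem 𝓕.level (φ n (xx p q t)) L := by
      have h0 := 𝓕.mat_add n (‖((1 - t : ℝ) : ℂ)‖₊ * L) (‖((t : ℝ) : ℂ)‖₊ * L)
        (((1 - t : ℝ) : ℂ) • p) (((t : ℝ) : ℂ) • q)
        (𝓕.mat_smul n L ((1 - t : ℝ) : ℂ) p hpL) (𝓕.mat_smul n L ((t : ℝ) : ℂ) q hqL)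
      have h0' : MatMem 𝓕.level (φ n (xx p q t))
          (‖((1 - t : ℝ) : ℂ)‖₊ * L + ‖((t : ℝ) : ℂ)‖₊ * L) := h0
      refine ML_mono φ 𝓕 h0' ?_
      obtain ⟨ht0, ht1⟩ := ht
      have hc1 : (‖((1 - t : ℝ) : ℂ)‖₊ : ℝ) = 1 - t := by
        rw [coe_nnnorm, Complex.norm_real, Real.norm_eq_abs,
          abs_of_nonneg (by linarith : (0:ℝ) ≤ 1 - t)]
      have hc2 : (‖((t : ℝ) : ℂ)‖₊ : ℝ) = t := by
        rw [coe_nnnorm, Complex.norm_real, Real.norm_eq_abs, abs_of_nonneg ht0]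
      rw [← NNReal.coe_le_coe, NNReal.coe_add, NNReal.coe_mul, NNReal.coe_mul, hc1, hc2]
      nlinarith [NNReal.coe_nonneg L]
    have hMLy : MatMem 𝓕.level (φ n (yy p q t)) (2 * L) := by
      have e : yy p q t = (2 : ℂ) • xx p q t + algebraMap ℂ (B n) (-1) := by
        rw [map_neg, map_one, yy, sub_eq_add_neg]
      rw [e]
      have h0 := 𝓕.mat_add n (‖(2 : ℂ)‖₊ * L) 0 ((2 : ℂ) • xx p q t)
        (algebraMap ℂ (B n) (-1)) (𝓕.mat_smul n L 2 (xx p q t) hMLx)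
        (ML_algebraMap φ 𝓕 (-1) 0)
      refine ML_mono φ 𝓕 h0 ?_
      rw [← NNReal.coe_le_coe]
      push_cast [coe_nnnorm]
      have h2 : ‖(2 : ℂ)‖ = 2 := by norm_num
      rw [h2]
      linarith [NNReal.coe_nonneg L]
    have hny : ‖yy p q t‖₊ ≤ 3 := by
      rw [← NNReal.coe_le_coe, coe_nnnorm]
      push_cast
      exact yy_norm_le hpid hqid hpsa hqsa ht
    have hng : ‖gser (vv p q t)‖₊ ≤ 2 := by
      rw [← NNReal.coe_le_coe, coe_nnnorm]
      push_cast
      exact gser_norm_le (vv_norm_le hpq ht)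
    refine ⟨?_, hPath_sa hpid hqid hpsa hqsa t, hPath_idem hpid hqid hpq ht⟩
    have hmul := 𝓕.mat_mul n (2 * L) (2 * (3⁻¹ * L)) (yy p q t) (gser (vv p q t))
      hMLy hMLg
    have hadd := 𝓕.mat_add n 0 (‖yy p q t‖₊ * (2 * (3⁻¹ * L)) + ‖gser (vv p q t)‖₊ * (2 * L))
      1 (yy p q t * gser (vv p q t)) (ML_one φ 𝓕 0) hmul
    have hfin := 𝓕.mat_smul n _ (2⁻¹ : ℂ) (1 + yy p q t * gser (vv p q t)) hadd
    have hfin' : MatMem 𝓕.level (φ n (hPath p q t))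
        (‖(2⁻¹ : ℂ)‖₊ * (0 + (‖yy p q t‖₊ * (2 * (3⁻¹ * L)) + ‖gser (vv p q t)‖₊ * (2 * L)))) :=
      hfin
    refine ML_mono φ 𝓕 hfin' ?_
    rw [← NNReal.coe_le_coe]
    push_cast [coe_nnnorm]
    have h2 : ‖(2⁻¹ : ℂ)‖ = 2⁻¹ := by norm_num
    rw [h2]
    have hnyr : ‖yy p q t‖ ≤ 3 := yy_norm_le hpid hqid hpsa hqsa ht
    have hngr : ‖gser (vv p q t)‖ ≤ 2 := gser_norm_le (vv_norm_le hpq ht)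
    nlinarith [NNReal.coe_nonneg L, norm_nonneg (yy p q t), norm_nonneg (gser (vv p q t))]
  · intro t ht s hs
    exact hPath_lip hpid hqid hpsa hqsa hpq ht hs
end

section
/- Let A be a unital C*-algebra equipped with a Lipschitz filtration {A_L}_{L≥0}. If u, v ∈ U^L_n(A) satisfy ‖u − v‖ ≤ 1/6, then there exists a norm-continuous map h : [0,1] → U^{3L}_n(A) with h(0) = 1, h(1) = vu*, and ‖h(t) − h(s)‖ ≤ |t − s| for all t, s ∈ [0,1]; consequently t ↦ h(t)u is a 1-Lipschitz path of unitaries in U^{4L}_n(A) connecting u and v. -/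
open scoped NNReal

variable {A : Type*} [CStarAlgebra A] {B : ℕ → Type*} [∀ n, CStarAlgebra (B n)]

private lemma ring_inverse_eq' {R : Type*} [Ring R] {a b : R} (h1 : a * b = 1) (h2 : b * a = 1) :
    Ring.inverse a = b :=
  Ring.inverse_unit (⟨a, b, h1, h2⟩ : Rˣ)

private lemma commute_ringInverse' {R : Type*} [Ring R] {a b : R} (hb : IsUnit b)
    (h : a * b = b * a) : a * Ring.inverse b = Ring.inverse b * a := by
  have h1 := Ring.inverse_mul_cancel b hb
  have h2 := Ring.mul_inverse_cancel b hb
  calc a * Ring.inverse b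
      = Ring.inverse b * (b * (a * Ring.inverse b)) := by
        rw [← mul_assoc, h1, one_mul]
    _ = Ring.inverse b * ((a * b) * Ring.inverse b) := by rw [h, mul_assoc]
    _ = Ring.inverse b * a := by rw [mul_assoc, h2, mul_one]

private lemma nn_of' {R : Type*} [SeminormedAddGroup R] (b : R) (c : ℝ≥0) (h : ‖b‖ ≤ (c : ℝ)) :
    ‖b‖₊ ≤ c := by exact_mod_cast h

set_option maxHeartbeats 1000000 in
/-- unitaries at level `L` at distance at most `1/6`: there is a 1-Lipschitz
path of unitaries at level `3L` from `1` to `v u*`; consequently `t ↦ h(t)·u` is a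
1-Lipschitz path of unitaries at level `4L` from `u` to `v`. -/
theorem stmt8 (φ : ∀ n, B n ≃⋆ₐ[ℂ] Matrix (Fin n) (Fin n) A)
    (𝓕 : LipschitzFiltration A B φ) {n : ℕ} (L : ℝ≥0) (u v : B n)
    (hu : UMem φ 𝓕 L u) (hv : UMem φ 𝓕 L v) (huv : ‖u - v‖ ≤ 1 / 6) :
    ∃ h : ℝ → B n,
      h 0 = 1 ∧ h 1 = v * star u ∧
      (∀ t ∈ Set.Icc (0 : ℝ) 1, UMem φ 𝓕 (3 * L) (h t)) ∧
      (∀ t ∈ Set.Icc (0 : ℝ) 1, ∀ s ∈ Set.Icc (0 : ℝ) 1, ‖h t - h s‖ ≤ |t - s|) ∧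
      h 0 * u = u ∧ h 1 * u = v ∧
      (∀ t ∈ Set.Icc (0 : ℝ) 1, UMem φ 𝓕 (4 * L) (h t * u)) ∧
      (∀ t ∈ Set.Icc (0 : ℝ) 1, ∀ s ∈ Set.Icc (0 : ℝ) 1, ‖h t * u - h s * u‖ ≤ |t - s|) := by
  classical
  -- basic norm facts
  have hone : ‖(1 : B n)‖ ≤ 1 := by
    rcases subsingleton_or_nontrivial (B n) with hs | hs
    · simp [Subsingleton.elim (1 : B n) 0]
    · exact le_of_eq norm_one
  have huu : star u * u = 1 := (Unitary.mem_iff.mp hu.2).1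
  have huu' : u * star u = 1 := (Unitary.mem_iff.mp hu.2).2
  have norm_le_one : ∀ w : B n, star w * w = 1 → ‖w‖ ≤ 1 := by
    intro w hw
    have h2 : ‖w‖ * ‖w‖ = ‖(1 : B n)‖ := by rw [← CStarRing.norm_star_mul_self, hw]
    nlinarith [norm_nonneg w]
  have hnormu : ‖u‖ ≤ 1 := norm_le_one u huu
  have hnormv : ‖v‖ ≤ 1 := norm_le_one v (Unitary.mem_iff.mp hv.2).1
  have hnormsu : ‖star u‖ ≤ 1 := by rwa [norm_star]
  set W : B n := v * star u with hWdef
  have hWuni : W ∈ unitary (B n) := mul_mem hv.2 (Unitary.star_mem hu.2)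
  have hWW : star W * W = 1 := (Unitary.mem_iff.mp hWuni).1
  have hWW' : W * star W = 1 := (Unitary.mem_iff.mp hWuni).2
  have ha : ‖W - 1‖ ≤ 1 / 6 := by
    have e : W - 1 = (v - u) * star u := by rw [sub_mul, hWdef, huu']
    rw [e]
    calc ‖(v - u) * star u‖ ≤ ‖v - u‖ * ‖star u‖ := norm_mul_le _ _
      _ ≤ ‖v - u‖ * 1 := by gcongr
      _ ≤ 1 / 6 := by rw [mul_one, norm_sub_rev]; exact huv
  have h1W : ‖(1 : B n) - W‖ ≤ 1 / 6 := by rwa [norm_sub_rev] at ha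
  -- invertibility of W + 1
  have h2inv : IsUnit (W + 1) := by
    have hsm : ‖(2⁻¹ : ℂ) • ((1 : B n) - W)‖ < 1 := by
      rw [norm_smul]
      have e : ‖(2⁻¹ : ℂ)‖ = 2⁻¹ := by norm_num
      rw [e]; nlinarith [norm_nonneg ((1 : B n) - W)]
    have hU1 : IsUnit (1 - (2⁻¹ : ℂ) • ((1 : B n) - W)) := isUnit_one_sub_of_norm_lt_one hsm
    have h2 : IsUnit (algebraMap ℂ (B n) 2) :=
      (isUnit_iff_ne_zero.mpr two_ne_zero).map (algebraMap ℂ (B n))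
    have key : W + 1 = algebraMap ℂ (B n) 2 * (1 - (2⁻¹ : ℂ) • ((1 : B n) - W)) := by
      rw [← Algebra.smul_def, smul_sub, smul_smul]
      norm_num
      rw [two_smul]
      abel
    rw [key]; exact h2.mul hU1
  set k : B n := Ring.inverse (W + 1) with hkdef
  have hk1 : k * (W + 1) = 1 := Ring.inverse_mul_cancel _ h2inv
  have hk2 : (W + 1) * k = 1 := Ring.mul_inverse_cancel _ h2inv
  have hknorm : ‖k‖ ≤ 6 / 11 := by
    have e1 : k * (W + 1) = k * (W - 1) + ((2 : ℂ) • k) := by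
      rw [two_smul]; noncomm_ring
    have e2 : (2 : ℂ) • k = 1 - k * (W - 1) := by
      rw [eq_sub_iff_add_eq, add_comm, ← e1, hk1]
    have e3 : ‖(2 : ℂ) • k‖ = 2 * ‖k‖ := by
      rw [norm_smul]; norm_num
    have e4 : ‖k * (W - 1)‖ ≤ ‖k‖ * (1 / 6) := by
      calc ‖k * (W - 1)‖ ≤ ‖k‖ * ‖W - 1‖ := norm_mul_le _ _
        _ ≤ ‖k‖ * (1 / 6) := by gcongr
    have e5 : ‖(2 : ℂ) • k‖ ≤ ‖(1 : B n)‖ + ‖k * (W - 1)‖ := by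
      rw [e2]; exact norm_sub_le _ _
    rw [e3] at e5
    nlinarith [norm_nonneg k]
  have hkW : k * W = W * k := by
    have hWW1 : W * (W + 1) = (W + 1) * W := by noncomm_ring
    calc k * W = k * W * ((W + 1) * k) := by rw [hk2, mul_one]
      _ = k * (W * (W + 1)) * k := by noncomm_ring
      _ = k * ((W + 1) * W) * k := by rw [hWW1]
      _ = (k * (W + 1)) * (W * k) := by noncomm_ring
      _ = W * k := by rw [hk1, one_mul]
  set x : B n := Complex.I • ((1 - W) * k) with hxdef
  have hxnorm : ‖x‖ ≤ 1 / 11 := by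
    rw [hxdef, norm_smul, Complex.norm_I, one_mul]
    calc ‖(1 - W) * k‖ ≤ ‖(1 : B n) - W‖ * ‖k‖ := norm_mul_le _ _
      _ ≤ (1 / 6) * (6 / 11) := by gcongr
      _ = 1 / 11 := by norm_num
  -- selfadjointness of x
  have hstark : star k = k * W := by
    have hsW1 : star (W + 1) = star W + 1 := by rw [star_add, star_one]
    have e3 : (star W + 1) * (k * W) = 1 := by
      have step : star W + 1 = star W * (W + 1) := by
        rw [mul_add, hWW, mul_one, add_comm]
      rw [step, mul_assoc, ← mul_assoc (W + 1), hk2, one_mul, hWW]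
    have e4 : star k * (star W + 1) = 1 := by
      rw [← hsW1, ← star_mul, hk2, star_one]
    calc star k = star k * ((star W + 1) * (k * W)) := by rw [e3, mul_one]
      _ = (star k * (star W + 1)) * (k * W) := by rw [mul_assoc]
      _ = k * W := by rw [e4, one_mul]
  have hsa : star x = x := by
    have e1 : star ((1 - W) * k) = (k * W) * (1 - star W) := by
      rw [star_mul, hstark, star_sub, star_one]
    have e2 : (k * W) * (1 - star W) = k * (W - 1) := by
      have e : (k * W) * (1 - star W) = k * W - k * (W * star W) := by noncomm_ring
      rw [e, hWW']; noncomm_ring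
    have e3 : k * (W - 1) = (W - 1) * k := by
      rw [sub_mul, mul_sub, hkW, mul_one, one_mul]
    rw [hxdef, star_smul, e1, e2, e3]
    rw [Complex.star_def, Complex.conj_I, neg_smul, ← smul_neg, ← neg_mul, neg_sub]
  -- the path
  set zz : ℝ → B n := fun t => (Complex.I * (t : ℂ)) • x with hzzdef
  set qq : ℝ → B n := fun t => Ring.inverse (1 - zz t) with hqqdef
  set hh : ℝ → B n := fun t => (1 + zz t) * qq t with hhhdef
  have hzz_app : ∀ t : ℝ, zz t = (Complex.I * (t : ℂ)) • x := fun t => rfl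
  have hznorm : ∀ t : ℝ, |t| ≤ 1 → ‖zz t‖ ≤ 1 / 11 := by
    intro t ht
    rw [hzz_app, norm_smul, norm_mul, Complex.norm_I, one_mul, Complex.norm_real,
      Real.norm_eq_abs]
    nlinarith [norm_nonneg x, abs_nonneg t]
  have hzU : ∀ t : ℝ, |t| ≤ 1 → IsUnit (1 - zz t) := by
    intro t ht
    exact isUnit_one_sub_of_norm_lt_one (lt_of_le_of_lt (hznorm t ht) (by norm_num))
  have hzU' : ∀ t : ℝ, |t| ≤ 1 → IsUnit (1 + zz t) := by
    intro t ht
    have e : ‖-(zz t)‖ < 1 := by rw [norm_neg]; exact lt_of_le_of_lt (hznorm t ht) (by norm_num)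
    have h' := isUnit_one_sub_of_norm_lt_one e
    rwa [sub_neg_eq_add] at h'
  have hq1 : ∀ t : ℝ, |t| ≤ 1 → qq t * (1 - zz t) = 1 := fun t ht =>
    Ring.inverse_mul_cancel _ (hzU t ht)
  have hq2 : ∀ t : ℝ, |t| ≤ 1 → (1 - zz t) * qq t = 1 := fun t ht =>
    Ring.mul_inverse_cancel _ (hzU t ht)
  have hqnorm : ∀ t : ℝ, |t| ≤ 1 → ‖qq t‖ ≤ 11 / 10 := by
    intro t ht
    have e1 : qq t = 1 + qq t * zz t := by
      have e := hq1 t ht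
      rw [mul_sub, mul_one, sub_eq_iff_eq_add] at e
      exact e
    have e2 : ‖qq t‖ ≤ ‖(1 : B n)‖ + ‖qq t‖ * ‖zz t‖ := by
      calc ‖qq t‖ = ‖1 + qq t * zz t‖ := by rw [← e1]
        _ ≤ ‖(1 : B n)‖ + ‖qq t * zz t‖ := norm_add_le _ _
        _ ≤ ‖(1 : B n)‖ + ‖qq t‖ * ‖zz t‖ := by gcongr; exact norm_mul_le _ _
    nlinarith [norm_nonneg (qq t), hznorm t ht]
  have hstarz : ∀ t : ℝ, star (zz t) = -(zz t) := by
    intro t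
    rw [hzz_app, star_smul, hsa, Complex.star_def, map_mul, Complex.conj_I,
      Complex.conj_ofReal, neg_mul, neg_smul]
  have hstar1z : ∀ t : ℝ, star (1 + zz t) = 1 - zz t := by
    intro t
    rw [star_add, star_one, hstarz, ← sub_eq_add_neg]
  have hstar1z' : ∀ t : ℝ, star (1 - zz t) = 1 + zz t := by
    intro t
    rw [star_sub, star_one, hstarz, sub_neg_eq_add]
  have hstarq_mul : ∀ t : ℝ, |t| ≤ 1 → star (qq t) * (1 + zz t) = 1 := by
    intro t ht
    rw [← hstar1z', ← star_mul, hq2 t ht, star_one]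
  have hmul_starq : ∀ t : ℝ, |t| ≤ 1 → (1 + zz t) * star (qq t) = 1 := by
    intro t ht
    rw [← hstar1z', ← star_mul, hq1 t ht, star_one]
  have hcz : ∀ t : ℝ, (1 - zz t) * (1 + zz t) = (1 + zz t) * (1 - zz t) := by
    intro t; noncomm_ring
  have hstarh : ∀ t : ℝ, star (hh t) = star (qq t) * (1 - zz t) := by
    intro t
    show star ((1 + zz t) * qq t) = _
    rw [star_mul, hstar1z]
  -- unitarity of hh t
  have hh_star_mul : ∀ t : ℝ, |t| ≤ 1 → star (hh t) * hh t = 1 := by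
    intro t ht
    have e : star (hh t) * hh t = star (qq t) * ((1 - zz t) * (1 + zz t)) * qq t := by
      rw [hstarh]
      show star (qq t) * (1 - zz t) * ((1 + zz t) * qq t) = _
      noncomm_ring
    rw [e, hcz]
    calc star (qq t) * ((1 + zz t) * (1 - zz t)) * qq t
        = (star (qq t) * (1 + zz t)) * ((1 - zz t) * qq t) := by noncomm_ring
      _ = 1 := by rw [hstarq_mul t ht, hq2 t ht, one_mul]
  have hh_mul_star : ∀ t : ℝ, |t| ≤ 1 → hh t * star (hh t) = 1 := by
    intro t ht
    have hc1 : (1 + zz t) * qq t = qq t * (1 + zz t) := by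
      exact commute_ringInverse' (hzU t ht) (hcz t).symm
    have hc2 : qq t * star (qq t) = star (qq t) * qq t := by
      have e := commute_ringInverse' (hzU' t ht) hc1.symm
      have eq : Ring.inverse (1 + zz t) = star (qq t) := by
        exact ring_inverse_eq' (hmul_starq t ht) (hstarq_mul t ht)
      rwa [eq] at e
    have e : hh t * star (hh t) = (1 + zz t) * (qq t * star (qq t)) * (1 - zz t) := by
      rw [hstarh]
      show (1 + zz t) * qq t * (star (qq t) * (1 - zz t)) = _
      noncomm_ring
    rw [e, hc2]
    calc (1 + zz t) * (star (qq t) * qq t) * (1 - zz t)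
        = ((1 + zz t) * star (qq t)) * (qq t * (1 - zz t)) := by noncomm_ring
      _ = 1 := by rw [hmul_starq t ht, hq1 t ht, one_mul]
  have hh_uni : ∀ t : ℝ, |t| ≤ 1 → hh t ∈ unitary (B n) := by
    intro t ht
    exact Unitary.mem_iff.mpr ⟨hh_star_mul t ht, hh_mul_star t ht⟩
  have hh_norm : ∀ t : ℝ, |t| ≤ 1 → ‖hh t‖ ≤ 1 := fun t ht =>
    norm_le_one _ (hh_star_mul t ht)
  -- endpoints
  have hh0 : hh 0 = 1 := by
    have hz0 : zz 0 = 0 := by rw [hzz_app]; push_cast; rw [mul_zero, zero_smul]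
    show (1 + zz 0) * qq 0 = 1
    rw [hqqdef]
    simp only [hz0, add_zero, sub_zero, Ring.inverse_one, mul_one]
  have hz1 : zz 1 = (W - 1) * k := by
    rw [hzz_app, hxdef, smul_smul]
    push_cast
    rw [mul_one, Complex.I_mul_I, neg_one_smul, ← neg_mul, neg_sub]
  have hh1 : hh 1 = W := by
    have e6 : 1 + zz 1 = W * k + W * k := by
      rw [hz1]; nth_rewrite 1 [← hk2]; noncomm_ring
    have e5 : 1 - zz 1 = k + k := by
      rw [hz1]; nth_rewrite 1 [← hk2]; noncomm_ring
    have einv : Ring.inverse (k + k) = (2⁻¹ : ℂ) • (W + 1) := by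
      apply ring_inverse_eq'
      · rw [mul_smul_comm, add_mul, hk1, ← two_smul ℂ (1 : B n), smul_smul]
        norm_num
      · rw [smul_mul_assoc, mul_add, hk2, ← two_smul ℂ (1 : B n), smul_smul]
        norm_num
    show (1 + zz 1) * qq 1 = W
    rw [hqqdef]
    simp only [e5, e6, einv]
    rw [mul_smul_comm, add_mul, mul_assoc, mul_assoc, hk1, mul_one, ← two_smul ℂ W, smul_smul]
    norm_num
  -- Lipschitz estimate
  have hlip : ∀ t ∈ Set.Icc (0 : ℝ) 1, ∀ s ∈ Set.Icc (0 : ℝ) 1, ‖hh t - hh s‖ ≤ |t - s| := by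
    intro t ht s hs
    have ht' : |t| ≤ 1 := abs_le.mpr ⟨by linarith [ht.1], ht.2⟩
    have hs' : |s| ≤ 1 := abs_le.mpr ⟨by linarith [hs.1], hs.2⟩
    have hzts : zz t - zz s = (Complex.I * ((t - s : ℝ) : ℂ)) • x := by
      rw [hzz_app, hzz_app, ← sub_smul]
      congr 1
      push_cast; ring
    have key : ∀ D : B n, qq t * ((1 - zz t) * D * (1 - zz s)) * qq s = D := by
      intro D
      calc qq t * ((1 - zz t) * D * (1 - zz s)) * qq s
          = (qq t * (1 - zz t)) * (D * ((1 - zz s) * qq s)) := by noncomm_ring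
        _ = D := by rw [hq1 t ht', hq2 s hs', mul_one, one_mul]
    have hM : (1 - zz t) * (hh t - hh s) * (1 - zz s) = (2 : ℂ) • (zz t - zz s) := by
      have eT : (1 - zz t) * hh t * (1 - zz s) = (1 + zz t) * (1 - zz s) := by
        have e0 : (1 - zz t) * ((1 + zz t) * qq t) = 1 + zz t := by
          rw [← mul_assoc, hcz t, mul_assoc, hq2 t ht', mul_one]
        show (1 - zz t) * ((1 + zz t) * qq t) * (1 - zz s) = _
        rw [e0]
      have eS : (1 - zz t) * hh s * (1 - zz s) = (1 - zz t) * (1 + zz s) := by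
        show (1 - zz t) * ((1 + zz s) * qq s) * (1 - zz s) = _
        calc (1 - zz t) * ((1 + zz s) * qq s) * (1 - zz s)
            = ((1 - zz t) * (1 + zz s)) * (qq s * (1 - zz s)) := by noncomm_ring
          _ = (1 - zz t) * (1 + zz s) := by rw [hq1 s hs', mul_one]
      have expand : (1 - zz t) * (hh t - hh s) * (1 - zz s)
          = (1 - zz t) * hh t * (1 - zz s) - (1 - zz t) * hh s * (1 - zz s) := by
        noncomm_ring
      rw [expand, eT, eS, two_smul]
      noncomm_ring
    have hD : hh t - hh s = qq t * ((2 : ℂ) • (zz t - zz s)) * qq s := by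
      rw [← hM, key]
    rw [hD]
    have hnormz : ‖(2 : ℂ) • (zz t - zz s)‖ ≤ 2 * (|t - s| * (1 / 11)) := by
      rw [norm_smul]
      have e : ‖(2 : ℂ)‖ = 2 := by norm_num
      rw [e, hzts, norm_smul, norm_mul, Complex.norm_I, one_mul, Complex.norm_real,
        Real.norm_eq_abs]
      nlinarith [abs_nonneg (t - s), norm_nonneg x, hxnorm]
    calc ‖qq t * ((2 : ℂ) • (zz t - zz s)) * qq s‖
        ≤ ‖qq t * ((2 : ℂ) • (zz t - zz s))‖ * ‖qq s‖ := norm_mul_le _ _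
      _ ≤ ‖qq t‖ * ‖(2 : ℂ) • (zz t - zz s)‖ * ‖qq s‖ := by
          gcongr; exact norm_mul_le _ _
      _ ≤ (11 / 10) * (2 * (|t - s| * (1 / 11))) * (11 / 10) := by
          gcongr <;> first
            | exact hqnorm t ht'
            | exact hnormz
            | exact hqnorm s hs'
      _ ≤ |t - s| := by nlinarith [abs_nonneg (t - s)]
  -- level membership machinery
  have Smono : ∀ {L₁ L₂ : ℝ≥0} {b : B n}, L₁ ≤ L₂ →
      MatMem 𝓕.level (φ n b) L₁ → MatMem 𝓕.level (φ n b) L₂ := by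
    intro L₁ L₂ b hL hb ξ η hξ hη
    exact 𝓕.mono hL (hb ξ η hξ hη)
  have Sscalar : ∀ (γ : ℂ) (L' : ℝ≥0), MatMem 𝓕.level (φ n (algebraMap ℂ (B n) γ)) L' := by
    intro γ L'
    have h0 := 𝓕.mat_scalar n L' (γ • (1 : Matrix (Fin n) (Fin n) ℂ))
    have e : φ n (algebraMap ℂ (B n) γ)
        = (γ • (1 : Matrix (Fin n) (Fin n) ℂ)).map (fun z : ℂ => z • (1 : A)) := by
      rw [Algebra.algebraMap_eq_smul_one, map_smul, map_one]
      ext i j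
      by_cases hij : i = j <;>
        simp [Matrix.smul_apply, Matrix.one_apply, hij, Matrix.map_apply]
    rw [e]; exact h0
  have Sone : ∀ L' : ℝ≥0, MatMem 𝓕.level (φ n (1 : B n)) L' := by
    intro L'
    have := Sscalar 1 L'
    rwa [map_one] at this
  have SnegOne : MatMem 𝓕.level (φ n (-1 : B n)) 0 := by
    have := Sscalar (-1) 0
    rwa [map_neg, map_one] at this
  have hnnv : ‖v‖₊ ≤ 1 := nn_of' v 1 (by exact_mod_cast hnormv)
  have hnnsu : ‖star u‖₊ ≤ 1 := nn_of' _ 1 (by exact_mod_cast hnormsu)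
  have hnnu : ‖u‖₊ ≤ 1 := nn_of' u 1 (by exact_mod_cast hnormu)
  have mW : MatMem 𝓕.level (φ n W) (2 * L) := by
    have h0 := 𝓕.mat_mul n L L v (star u) hv.1 (𝓕.mat_star n L u hu.1)
    refine Smono ?_ h0
    calc ‖v‖₊ * L + ‖star u‖₊ * L ≤ 1 * L + 1 * L := by gcongr
      _ = 2 * L := by ring
  have maW : MatMem 𝓕.level (φ n (W - 1)) (2 * L) := by
    have h0 := 𝓕.mat_add n (2 * L) 0 W (-1) mW SnegOne
    rw [← sub_eq_add_neg] at h0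
    simpa using h0
  have m1W : MatMem 𝓕.level (φ n (1 - W)) (2 * L) := by
    have h0 := 𝓕.mat_smul n (2 * L) (-1) (W - 1) maW
    rw [show ((-1 : ℂ) • (W - 1)) = 1 - W by rw [neg_one_smul, neg_sub]] at h0
    simpa using h0
  have hUW : IsUnit (W - algebraMap ℂ (B n) (-1)) := by
    have e : W - algebraMap ℂ (B n) (-1) = W + 1 := by
      rw [map_neg, map_one, sub_neg_eq_add]
    rw [e]; exact h2inv
  have hnnk : ‖k‖₊ ≤ 6 / 11 := nn_of' k (6 / 11) (by push_cast; exact hknorm)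
  have mk : MatMem 𝓕.level (φ n k) ((72 / 121 : ℝ≥0) * L) := by
    have h0 := 𝓕.mat_inv n (2 * L) W (-1) hUW mW
    have e : (↑hUW.unit⁻¹ : B n) = k := by
      rw [← Ring.inverse_of_isUnit hUW]
      rw [show W - algebraMap ℂ (B n) (-1) = W + 1 by rw [map_neg, map_one, sub_neg_eq_add]]
    rw [e] at h0
    refine Smono ?_ h0
    have hk' : ‖k‖₊ ^ 2 ≤ (6 / 11 : ℝ≥0) ^ 2 := by gcongr
    calc ‖k‖₊ ^ 2 * (2 * L) ≤ (6 / 11 : ℝ≥0) ^ 2 * (2 * L) := by gcongr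
      _ = (72 / 121 : ℝ≥0) * L := by
          rw [← mul_assoc]
          congr 1
          rw [← NNReal.coe_inj]; push_cast; norm_num
  have hnn1W : ‖(1 : B n) - W‖₊ ≤ 1 / 6 := nn_of' _ (1 / 6) (by push_cast; exact h1W)
  have mx : MatMem 𝓕.level (φ n x) ((144 / 121 : ℝ≥0) * L) := by
    have h0 := 𝓕.mat_mul n (2 * L) ((72 / 121 : ℝ≥0) * L) (1 - W) k m1W mk
    have h1 := 𝓕.mat_smul n _ Complex.I _ h0
    rw [show (Complex.I • ((1 - W) * k)) = x from hxdef.symm] at h1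
    refine Smono ?_ h1
    have hI : ‖Complex.I‖₊ = 1 := by simp
    rw [hI, one_mul]
    calc ‖(1 : B n) - W‖₊ * ((72 / 121 : ℝ≥0) * L) + ‖k‖₊ * (2 * L)
        ≤ (1 / 6 : ℝ≥0) * ((72 / 121 : ℝ≥0) * L) + (6 / 11 : ℝ≥0) * (2 * L) := by gcongr
      _ = (144 / 121 : ℝ≥0) * L := by
          rw [← NNReal.coe_inj]; push_cast; ring
  -- per-parameter level membership
  have level_h : ∀ t : ℝ, t ∈ Set.Icc (0 : ℝ) 1 → MatMem 𝓕.level (φ n (hh t)) (3 * L) := by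
    intro t ht
    have ht' : |t| ≤ 1 := abs_le.mpr ⟨by linarith [ht.1], ht.2⟩
    have hnnc : ‖Complex.I * (t : ℂ)‖₊ ≤ 1 := by
      refine nn_of' _ 1 ?_
      push_cast
      rw [norm_mul, Complex.norm_I, one_mul, Complex.norm_real, Real.norm_eq_abs]
      exact ht'
    have mz : MatMem 𝓕.level (φ n (zz t)) ((144 / 121 : ℝ≥0) * L) := by
      have h0 := 𝓕.mat_smul n _ (Complex.I * (t : ℂ)) x mx
      rw [show ((Complex.I * (t : ℂ)) • x) = zz t from (hzz_app t).symm] at h0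
      refine Smono ?_ h0
      calc ‖Complex.I * (t : ℂ)‖₊ * ((144 / 121 : ℝ≥0) * L)
          ≤ 1 * ((144 / 121 : ℝ≥0) * L) := by gcongr
        _ = (144 / 121 : ℝ≥0) * L := one_mul _
    have m1z : MatMem 𝓕.level (φ n (1 + zz t)) ((144 / 121 : ℝ≥0) * L) := by
      have h0 := 𝓕.mat_add n 0 ((144 / 121 : ℝ≥0) * L) 1 (zz t) (Sone 0) mz
      simpa using h0
    have hUz : IsUnit (zz t - algebraMap ℂ (B n) 1) := by
      have e : zz t - algebraMap ℂ (B n) 1 = -(1 - zz t) := by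
        rw [map_one, neg_sub]
      rw [e]; exact (hzU t ht').neg
    have hnnq : ‖qq t‖₊ ≤ 11 / 10 := nn_of' _ (11 / 10) (by push_cast; exact hqnorm t ht')
    have mq : MatMem 𝓕.level (φ n (qq t)) ((144 / 100 : ℝ≥0) * L) := by
      have h0 := 𝓕.mat_inv n ((144 / 121 : ℝ≥0) * L) (zz t) 1 hUz mz
      have e : (↑hUz.unit⁻¹ : B n) = -(qq t) := by
        rw [← Ring.inverse_of_isUnit hUz]
        apply ring_inverse_eq'
        · rw [mul_neg, show zz t - algebraMap ℂ (B n) 1 = -(1 - zz t) by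
            rw [map_one, neg_sub], neg_mul, neg_neg, hq2 t ht']
        · rw [neg_mul, show zz t - algebraMap ℂ (B n) 1 = -(1 - zz t) by
            rw [map_one, neg_sub], mul_neg, neg_neg, hq1 t ht']
      rw [e] at h0
      have h1 := 𝓕.mat_smul n _ (-1 : ℂ) _ h0
      rw [show ((-1 : ℂ) • (-(qq t))) = qq t by rw [neg_one_smul, neg_neg]] at h1
      refine Smono ?_ h1
      have hnnq' : ‖-(qq t)‖₊ ≤ 11 / 10 := by rwa [nnnorm_neg]
      have e1 : ‖(-1 : ℂ)‖₊ = 1 := by simp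
      rw [e1, one_mul]
      calc ‖-(qq t)‖₊ ^ 2 * ((144 / 121 : ℝ≥0) * L)
          ≤ (11 / 10 : ℝ≥0) ^ 2 * ((144 / 121 : ℝ≥0) * L) := by gcongr
        _ = (144 / 100 : ℝ≥0) * L := by
            rw [← NNReal.coe_inj]; push_cast; ring
    have hnn1z : ‖(1 : B n) + zz t‖₊ ≤ 12 / 11 := by
      refine nn_of' _ (12 / 11) ?_
      push_cast
      calc ‖(1 : B n) + zz t‖ ≤ ‖(1 : B n)‖ + ‖zz t‖ := norm_add_le _ _
        _ ≤ 1 + 1 / 11 := by gcongr; exact hznorm t ht'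
        _ = 12 / 11 := by norm_num
    have h0 := 𝓕.mat_mul n ((144 / 121 : ℝ≥0) * L) ((144 / 100 : ℝ≥0) * L)
      (1 + zz t) (qq t) m1z mq
    have e : (1 + zz t) * qq t = hh t := rfl
    rw [e] at h0
    refine Smono ?_ h0
    calc ‖(1 : B n) + zz t‖₊ * ((144 / 100 : ℝ≥0) * L) + ‖qq t‖₊ * ((144 / 121 : ℝ≥0) * L)
        ≤ (12 / 11 : ℝ≥0) * ((144 / 100 : ℝ≥0) * L)
          + (11 / 10 : ℝ≥0) * ((144 / 121 : ℝ≥0) * L) := by gcongr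
      _ = ((12 / 11 : ℝ≥0) * (144 / 100) + (11 / 10) * (144 / 121)) * L := by ring
      _ ≤ 3 * L := by
          gcongr
          rw [← NNReal.coe_le_coe]; push_cast; norm_num
  have level_hu : ∀ t : ℝ, t ∈ Set.Icc (0 : ℝ) 1 →
      MatMem 𝓕.level (φ n (hh t * u)) (4 * L) := by
    intro t ht
    have ht' : |t| ≤ 1 := abs_le.mpr ⟨by linarith [ht.1], ht.2⟩
    have hnnh : ‖hh t‖₊ ≤ 1 := nn_of' _ 1 (by exact_mod_cast hh_norm t ht')
    have h0 := 𝓕.mat_mul n (3 * L) L (hh t) u (level_h t ht) hu.1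
    refine Smono ?_ h0
    calc ‖hh t‖₊ * L + ‖u‖₊ * (3 * L) ≤ 1 * L + 1 * (3 * L) := by gcongr
      _ = 4 * L := by ring
  -- assemble
  refine ⟨hh, hh0, hh1, ?_, hlip, ?_, ?_, ?_, ?_⟩
  · intro t ht
    have ht' : |t| ≤ 1 := abs_le.mpr ⟨by linarith [ht.1], ht.2⟩
    exact ⟨level_h t ht, hh_uni t ht'⟩
  · rw [hh0, one_mul]
  · rw [hh1, hWdef, mul_assoc, huu, mul_one]
  · intro t ht
    have ht' : |t| ≤ 1 := abs_le.mpr ⟨by linarith [ht.1], ht.2⟩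
    exact ⟨level_hu t ht, mul_mem (hh_uni t ht') hu.2⟩
  · intro t ht s hs
    calc ‖hh t * u - hh s * u‖ = ‖(hh t - hh s) * u‖ := by rw [sub_mul]
      _ ≤ ‖hh t - hh s‖ * ‖u‖ := norm_mul_le _ _
      _ ≤ |t - s| * 1 := by
          gcongr
          exact hlip t ht s hs
      _ = |t - s| := mul_one _
end

section
/- Let {M_L} and {M'_L} be inductive systems over ℝ≥0 and suppose they are controlled isomorphic, i.e. there are controlled homomorphisms ξ : {M_L} → {M'_L} and η : {M'_L} → {M_L} such that ξ∘η ∼ id and η∘ξ ∼ id (controlled equivalences with some control functions). If {M_L} is uniformly controlled, then {M'_L} is uniformly controlled (i.e. admits some uniform control pair). -/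
open scoped NNReal
open Filter

/-- An inductive system of abelian groups over `ℝ≥0`. -/
structure IndSys where
  M : ℝ≥0 → Type*
  inst : ∀ L, AddCommGroup (M L)
  map : ∀ {L L' : ℝ≥0}, L ≤ L' → (M L →+ M L')
  map_refl : ∀ (L : ℝ≥0) (x : M L), map (le_refl L) x = x
  map_comp : ∀ {L L' L'' : ℝ≥0} (h : L ≤ L') (h' : L' ≤ L'') (x : M L),
    map h' (map h x) = map (h.trans h') x

attribute [instance] IndSys.inst

/-- A control function: non-decreasing and tending to infinity. -/
def IsControl (F : ℝ≥0 → ℝ≥0) : Prop := Monotone F ∧ Tendsto F atTop atTop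

/-- A controlled homomorphism between inductive systems, with control function `F`. -/
structure CtrlHom (M N : IndSys) (F : ℝ≥0 → ℝ≥0) where
  ctrl : IsControl F
  f : ∀ L, M.M L →+ N.M (F L)
  compat : ∀ {L L' : ℝ≥0} (h : L ≤ L') (x : M.M L),
    N.map (ctrl.1 h) (f L x) = f L' (M.map h x)

/-- The identity controlled homomorphism, with control function `L ↦ L`. -/
def CtrlHom.id (M : IndSys) : CtrlHom M M (fun L => L) where
  ctrl := ⟨monotone_id, tendsto_id⟩
  f L := AddMonoidHom.id _
  compat _ _ := rfl

/-- The zero controlled homomorphism, with control function `L ↦ L`. -/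
def CtrlHom.zero (M N : IndSys) : CtrlHom M N (fun L => L) where
  ctrl := ⟨monotone_id, tendsto_id⟩
  f _ := 0
  compat _ _ := by simp

/-- Composition of controlled homomorphisms: `(ξ ∘ η)_L = ξ_{G(L)} ∘ η_L`, control `F ∘ G`. -/
def CtrlHom.comp {M N P : IndSys} {F G : ℝ≥0 → ℝ≥0}
    (ξ : CtrlHom N P F) (η : CtrlHom M N G) : CtrlHom M P (fun L => F (G L)) where
  ctrl := ⟨ξ.ctrl.1.comp η.ctrl.1, ξ.ctrl.2.comp η.ctrl.2⟩
  f L := (ξ.f (G L)).comp (η.f L)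
  compat h x := by
    simp only [AddMonoidHom.comp_apply]
    rw [ξ.compat (η.ctrl.1 h), η.compat h]

/-- `ξ` is controlled equivalent to `η` (for some control function `H ≥ F, G`). -/
def CtrlEquiv {M N : IndSys} {F G : ℝ≥0 → ℝ≥0} (ξ : CtrlHom M N F) (η : CtrlHom M N G) :
    Prop :=
  ∃ H : ℝ≥0 → ℝ≥0, IsControl H ∧
    ∃ (hF : ∀ L, F L ≤ H L) (hG : ∀ L, G L ≤ H L),
      ∀ (L : ℝ≥0) (x : M.M L), N.map (hF L) (ξ.f L x) = N.map (hG L) (η.f L x)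

/-- `ξ` is controlled equivalent to the zero homomorphism. -/
def CtrlEquivZero {M N : IndSys} {F : ℝ≥0 → ℝ≥0} (ξ : CtrlHom M N F) : Prop :=
  CtrlEquiv ξ (CtrlHom.zero M N)

/-- `ξ` is controlled equivalent to the identity homomorphism. -/
def CtrlEquivId {M : IndSys} {F : ℝ≥0 → ℝ≥0} (ξ : CtrlHom M M F) : Prop :=
  CtrlEquiv ξ (CtrlHom.id M)

/-- The sequence `M →(ξ) N →(η) P` is asymptotically exact at `N` with control functions
`F₁, F₂`. -/
def AsympExactAt {M N P : IndSys} {F G : ℝ≥0 → ℝ≥0}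
    (ξ : CtrlHom M N F) (η : CtrlHom N P G) (F₁ F₂ : ℝ≥0 → ℝ≥0) : Prop :=
  (IsControl F₁ ∧
    ∃ (h₁ : ∀ L, G (F L) ≤ F₁ L) (_h₂ : ∀ L, L ≤ F₁ L),
      ∀ (L : ℝ≥0) (x : M.M L), P.map (h₁ L) (η.f (F L) (ξ.f L x)) = 0) ∧
  (IsControl F₂ ∧
    ∃ hle : ∀ L, L ≤ F (F₂ L),
      ∀ (L : ℝ≥0) (m' : N.M L), η.f L m' = 0 →
        ∃ m : M.M (F₂ L), ξ.f (F₂ L) m = N.map (hle L) m')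

/-- An inductive system is uniformly controlled with uniform control pair `(L₀, F)`. -/
def UnifCtrlPair (M : IndSys) (L₀ : ℝ≥0) (F : ℝ≥0 → ℝ≥0) : Prop :=
  IsControl F ∧
  ∃ hle : ∀ L, L ≤ F L,
    (∀ L : ℝ≥0, L₀ ≤ L → ∀ (L' : ℝ≥0) (x : M.M L'),
      ∃ (y : M.M L) (L'' : ℝ≥0) (h : L ≤ L'') (h' : L' ≤ L''), M.map h y = M.map h' x) ∧
    (∀ (L : ℝ≥0) (x : M.M L), (∃ (L' : ℝ≥0) (h : L ≤ L'), M.map h x = 0) →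
      M.map (hle L) x = 0)

/-- An inductive system is uniformly controlled. -/
def UnifCtrl (M : IndSys) : Prop := ∃ (L₀ : ℝ≥0) (F : ℝ≥0 → ℝ≥0), UnifCtrlPair M L₀ F

/-- uniform control is preserved under controlled isomorphism. -/
theorem stmt12 (M N : IndSys) (F G : ℝ≥0 → ℝ≥0)
    (ξ : CtrlHom M N F) (η : CtrlHom N M G)
    (h₁ : CtrlEquivId (ξ.comp η)) (h₂ : CtrlEquivId (η.comp ξ))
    (hM : UnifCtrl M) : UnifCtrl N := by

  obtain ⟨L₀, K, hKctrl, hleK, hsurj, hker⟩ := hM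
  obtain ⟨H, hHctrl, hF1, hG1, heq⟩ := h₁
  have heq' : ∀ (L : ℝ≥0) (x : N.M L),
      N.map (hF1 L) (ξ.f (G L) (η.f L x)) = N.map (hG1 L) x := heq
  refine ⟨F L₀, fun L => max (F (K (G L))) (H L),
    ⟨fun a b hab => max_le_max (ξ.ctrl.1 (hKctrl.1 (η.ctrl.1 hab))) (hHctrl.1 hab),
     tendsto_atTop_mono (fun L => le_max_right _ _) hHctrl.2⟩,
    fun L => (hG1 L).trans (le_max_right _ _), ?_, ?_⟩
  · -- surjectivity
    intro L hL L' x
    obtain ⟨y0, L'', h1, h2, hy⟩ := hsurj L₀ le_rfl (G L') (η.f L' x)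
    refine ⟨N.map hL (ξ.f L₀ y0), max (max (F L'') (H L')) L,
      le_max_right _ _, (hG1 L').trans ((le_max_right _ _).trans (le_max_left _ _)), ?_⟩
    have hA : F L'' ≤ max (max (F L'') (H L')) L := (le_max_left _ _).trans (le_max_left _ _)
    have hB : H L' ≤ max (max (F L'') (H L')) L := (le_max_right _ _).trans (le_max_left _ _)
    calc N.map (le_max_right (max (F L'') (H L')) L) (N.map hL (ξ.f L₀ y0))
        = N.map (hL.trans (le_max_right _ _)) (ξ.f L₀ y0) := N.map_comp _ _ _
      _ = N.map hA (N.map (ξ.ctrl.1 h1) (ξ.f L₀ y0)) := (N.map_comp _ _ _).symm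
      _ = N.map hA (ξ.f L'' (M.map h1 y0)) := by rw [ξ.compat h1 y0]
      _ = N.map hA (ξ.f L'' (M.map h2 (η.f L' x))) := by rw [hy]
      _ = N.map hA (N.map (ξ.ctrl.1 h2) (ξ.f (G L') (η.f L' x))) := by
          rw [ξ.compat h2]
      _ = N.map ((ξ.ctrl.1 h2).trans hA) (ξ.f (G L') (η.f L' x)) := N.map_comp _ _ _
      _ = N.map hB (N.map (hF1 L') (ξ.f (G L') (η.f L' x))) := (N.map_comp _ _ _).symm
      _ = N.map hB (N.map (hG1 L') x) := by rw [heq']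
      _ = N.map ((hG1 L').trans hB) x := N.map_comp _ _ _
  · -- kernel control
    rintro L x ⟨L', hLL', hx0⟩
    have hm : M.map (η.ctrl.1 hLL') (η.f L x) = 0 := by
      rw [η.compat hLL' x, hx0, map_zero]
    have hm2 : M.map (hleK (G L)) (η.f L x) = 0 :=
      hker (G L) (η.f L x) ⟨G L', η.ctrl.1 hLL', hm⟩
    have h3 : N.map (ξ.ctrl.1 (hleK (G L))) (ξ.f (G L) (η.f L x)) = 0 := by
      rw [ξ.compat (hleK (G L)), hm2, map_zero]
    have hR : H L ≤ max (F (K (G L))) (H L) := le_max_right _ _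
    have hL2 : F (K (G L)) ≤ max (F (K (G L))) (H L) := le_max_left _ _
    calc N.map ((hG1 L).trans hR) x
        = N.map hR (N.map (hG1 L) x) := (N.map_comp _ _ _).symm
      _ = N.map hR (N.map (hF1 L) (ξ.f (G L) (η.f L x))) := by rw [heq']
      _ = N.map ((hF1 L).trans hR) (ξ.f (G L) (η.f L x)) := N.map_comp _ _ _
      _ = N.map hL2 (N.map (ξ.ctrl.1 (hleK (G L))) (ξ.f (G L) (η.f L x))) :=
          (N.map_comp _ _ _).symm
      _ = 0 := by rw [h3, map_zero]
end

section
/- Let {M¹_L}, {M²_L}, {M³_L}, {M⁴_L}, {M⁵_L} be inductive systems over ℝ≥0 and let ξʲ : {Mʲ_L} → {Mʲ⁺¹_L} (j = 1, 2, 3, 4) be controlled homomorphisms such that the sequence {M¹_L} → {M²_L} → {M³_L} → {M⁴_L} → {M⁵_L} is asymptotically exact at {M²_L}, at {M³_L} and at {M⁴_L} (with some control functions). If {M¹_L}, {M²_L}, {M⁴_L} and {M⁵_L} are uniformly controlled, then {M³_L} is uniformly controlled. -/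
open scoped NNReal
open Filter

/-- A crude "inverse" of a control function: `invF F s` is a level `t` with `s ≤ F t`. -/
noncomputable def invF (F : ℝ≥0 → ℝ≥0) (s : ℝ≥0) : ℝ≥0 := sInf {t | s ≤ F t} + 1

lemma invF_set_nonempty {F : ℝ≥0 → ℝ≥0} (hF : IsControl F) (s : ℝ≥0) :
    {t | s ≤ F t}.Nonempty := (hF.2.eventually_ge_atTop s).exists

lemma invF_spec {F : ℝ≥0 → ℝ≥0} (hF : IsControl F) (s : ℝ≥0) : s ≤ F (invF F s) := by
  obtain ⟨t, ht, ht'⟩ := exists_lt_of_csInf_lt (invF_set_nonempty hF s)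
    (lt_add_one (sInf {t | s ≤ F t}))
  exact le_trans ht (hF.1 ht'.le)

lemma invF_mono {F : ℝ≥0 → ℝ≥0} (hF : IsControl F) : Monotone (invF F) := by
  intro s s' h
  exact add_le_add_left
    (csInf_le_csInf (OrderBot.bddBelow _) (invF_set_nonempty hF s')
      (fun t ht => le_trans h ht)) 1

lemma IndSys.map_map (M : IndSys) {a b c : ℝ≥0} (hab : a ≤ b) (hbc : b ≤ c) (hac : a ≤ c)
    (x : M.M a) : M.map hbc (M.map hab x) = M.map hac x := M.map_comp hab hbc x

lemma IndSys.map_eq_zero_trans (M : IndSys) {a b c : ℝ≥0} (hab : a ≤ b) (hbc : b ≤ c)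
    (hac : a ≤ c) (x : M.M a) (h : M.map hab x = 0) : M.map hac x = 0 := by
  rw [← M.map_map hab hbc hac, h, map_zero]

/-- the controlled five lemma for uniform control. -/
theorem stmt13 (M₁ M₂ M₃ M₄ M₅ : IndSys) (F₁ F₂ F₃ F₄ : ℝ≥0 → ℝ≥0)
    (ξ₁ : CtrlHom M₁ M₂ F₁) (ξ₂ : CtrlHom M₂ M₃ F₂)
    (ξ₃ : CtrlHom M₃ M₄ F₃) (ξ₄ : CtrlHom M₄ M₅ F₄)
    (hex₂ : ∃ E E' : ℝ≥0 → ℝ≥0, AsympExactAt ξ₁ ξ₂ E E')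
    (hex₃ : ∃ E E' : ℝ≥0 → ℝ≥0, AsympExactAt ξ₂ ξ₃ E E')
    (hex₄ : ∃ E E' : ℝ≥0 → ℝ≥0, AsympExactAt ξ₃ ξ₄ E E')
    (h₁ : UnifCtrl M₁) (h₂ : UnifCtrl M₂) (h₄ : UnifCtrl M₄) (h₅ : UnifCtrl M₅) :
    UnifCtrl M₃ := by
  obtain ⟨E₂, E₂', ⟨_, hq₂, _, hz₂⟩, hE₂', hle₂, hsur₂⟩ := hex₂
  obtain ⟨E₃, E₃', ⟨_, hq₃, _, hz₃⟩, hE₃', hle₃, hsur₃⟩ := hex₃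
  obtain ⟨E₄, E₄', ⟨_, hq₄, _, hz₄⟩, hE₄', hle₄, hsur₄⟩ := hex₄
  obtain ⟨A₀, A, hA, hleA, hsurA, hkerA⟩ := h₁
  obtain ⟨B₀, B, hB, hleB, hsurB, hkerB⟩ := h₂
  obtain ⟨D₀, D, hD, hleD, hsurD, hkerD⟩ := h₄
  obtain ⟨G₀, G, hG, hleG, hsurG, hkerG⟩ := h₅
  -- The uniform control function for M₃ (kernel control):
  have hleF : ∀ L : ℝ≥0,
      L ≤ max (F₂ (B (max (E₃' (max L (invF F₃ (D (F₃ L))))) (F₁ A₀)))) (E₂ A₀) := by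
    intro L
    refine le_trans (le_max_left L (invF F₃ (D (F₃ L)))) ?_
    refine le_trans (hle₃ (max L (invF F₃ (D (F₃ L))))) ?_
    refine le_trans (ξ₂.ctrl.1 (le_trans (le_max_left _ (F₁ A₀)) (hleB _))) ?_
    exact le_max_left _ _
  refine ⟨max (E₄' (max D₀ (invF F₄ (G (F₄ D₀))))) (F₂ B₀),
    fun L => max (F₂ (B (max (E₃' (max L (invF F₃ (D (F₃ L))))) (F₁ A₀)))) (E₂ A₀),
    ⟨?_, tendsto_atTop_mono hleF tendsto_id⟩, hleF, ?_, ?_⟩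
  · -- monotonicity of the control function
    exact Monotone.max
      (ξ₂.ctrl.1.comp (hB.1.comp (Monotone.max
        (hE₃'.1.comp (Monotone.max monotone_id
          ((invF_mono ξ₃.ctrl).comp (hD.1.comp ξ₃.ctrl.1)))) monotone_const)))
      monotone_const
  · -- surjectivity part
    intro L hL L' z
    -- Step 1: pull `ξ₃ z` back to a controlled level in M₄
    obtain ⟨w₀, T₁, hDT₁, hFT₁, hw₀⟩ := hsurD D₀ le_rfl (F₃ L') (ξ₃.f L' z)
    -- Step 2: `ξ₄ w₀` is eventually zero, hence zero at a controlled level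
    have hs3 : M₅.map ((ξ₄.ctrl.1 hDT₁).trans (le_max_left (F₄ T₁) (E₄ L')))
        (ξ₄.f D₀ w₀) = 0 := by
      rw [← M₅.map_map (ξ₄.ctrl.1 hDT₁) (le_max_left (F₄ T₁) (E₄ L')) _ (ξ₄.f D₀ w₀),
        ξ₄.compat hDT₁ w₀, hw₀, ← ξ₄.compat hFT₁ (ξ₃.f L' z),
        M₅.map_map (ξ₄.ctrl.1 hFT₁) (le_max_left (F₄ T₁) (E₄ L'))
          ((hq₄ L').trans (le_max_right (F₄ T₁) (E₄ L'))) (ξ₄.f (F₃ L') (ξ₃.f L' z)),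
        ← M₅.map_map (hq₄ L') (le_max_right (F₄ T₁) (E₄ L')) _ (ξ₄.f (F₃ L') (ξ₃.f L' z)),
        hz₄ L' z, map_zero]
    have hs4 : M₅.map (hleG (F₄ D₀)) (ξ₄.f D₀ w₀) = 0 :=
      hkerG _ _ ⟨max (F₄ T₁) (E₄ L'), _, hs3⟩
    -- Step 3: push `w₀` to level `D₁` so that `ξ₄` of it is exactly zero
    have hDD₁ : D₀ ≤ max D₀ (invF F₄ (G (F₄ D₀))) := le_max_left _ _
    have hQF₄D₁ : G (F₄ D₀) ≤ F₄ (max D₀ (invF F₄ (G (F₄ D₀)))) :=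
      (invF_spec ξ₄.ctrl _).trans (ξ₄.ctrl.1 (le_max_right _ _))
    have hs5 : ξ₄.f (max D₀ (invF F₄ (G (F₄ D₀)))) (M₄.map hDD₁ w₀) = 0 := by
      rw [← ξ₄.compat hDD₁ w₀]
      exact M₅.map_eq_zero_trans (hleG (F₄ D₀)) hQF₄D₁ _ _ hs4
    -- Step 4: exactness at M₄ gives `u` in M₃ at the constant level `C₃ := E₄' D₁`
    obtain ⟨u, hu⟩ := hsur₄ _ (M₄.map hDD₁ w₀) hs5
    rw [M₄.map_map hDD₁ (hle₄ _) (hDD₁.trans (hle₄ _))] at hu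
    -- Step 5: `ξ₃ u` agrees with `ξ₃ z` at level `T₂`
    have hT₁T₂ : T₁ ≤ max (F₃ (E₄' (max D₀ (invF F₄ (G (F₄ D₀)))))) T₁ := le_max_right _ _
    have hs7 : M₄.map (le_max_left (F₃ (E₄' (max D₀ (invF F₄ (G (F₄ D₀)))))) T₁)
        (ξ₃.f _ u) = M₄.map (hFT₁.trans hT₁T₂) (ξ₃.f L' z) := by
      rw [hu, M₄.map_map (hDD₁.trans (hle₄ _)) (le_max_left _ T₁) (hDT₁.trans hT₁T₂),
        ← M₄.map_map hDT₁ hT₁T₂ _ w₀, hw₀,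
        M₄.map_map hFT₁ hT₁T₂ (hFT₁.trans hT₁T₂)]
    -- Step 6: at a high level `LT`, the difference `v` of `u` and `z` is killed by `ξ₃`
    have hC₃LT : E₄' (max D₀ (invF F₄ (G (F₄ D₀)))) ≤
        max (max (E₄' (max D₀ (invF F₄ (G (F₄ D₀))))) L')
          (invF F₃ (max (F₃ (E₄' (max D₀ (invF F₄ (G (F₄ D₀)))))) T₁)) :=
      (le_max_left _ _).trans (le_max_left _ _)
    have hL'LT : L' ≤ max (max (E₄' (max D₀ (invF F₄ (G (F₄ D₀))))) L')
        (invF F₃ (max (F₃ (E₄' (max D₀ (invF F₄ (G (F₄ D₀)))))) T₁)) :=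
      (le_max_right _ _).trans (le_max_left _ _)
    have hT₂F₃LT : max (F₃ (E₄' (max D₀ (invF F₄ (G (F₄ D₀)))))) T₁ ≤
        F₃ (max (max (E₄' (max D₀ (invF F₄ (G (F₄ D₀))))) L')
          (invF F₃ (max (F₃ (E₄' (max D₀ (invF F₄ (G (F₄ D₀)))))) T₁))) :=
      (invF_spec ξ₃.ctrl _).trans (ξ₃.ctrl.1 (le_max_right _ _))
    have hs8 : ξ₃.f _ (M₃.map hC₃LT u - M₃.map hL'LT z) = 0 := by
      rw [map_sub, ← ξ₃.compat hC₃LT u, ← ξ₃.compat hL'LT z,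
        ← M₄.map_map (le_max_left (F₃ (E₄' (max D₀ (invF F₄ (G (F₄ D₀)))))) T₁)
          hT₂F₃LT (ξ₃.ctrl.1 hC₃LT) (ξ₃.f _ u),
        ← M₄.map_map (hFT₁.trans hT₁T₂) hT₂F₃LT (ξ₃.ctrl.1 hL'LT) (ξ₃.f L' z),
        hs7, sub_self]
    -- Step 7: exactness at M₃
    obtain ⟨n, hn⟩ := hsur₃ _ (M₃.map hC₃LT u - M₃.map hL'LT z) hs8
    -- Step 8: pull `n` back to the constant level `B₀` in M₂
    obtain ⟨n₀, T₃, hBT₃, hET₃, hn₀⟩ := hsurB B₀ le_rfl _ n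
    -- Step 9: the candidate `y`
    have hC₃L : E₄' (max D₀ (invF F₄ (G (F₄ D₀)))) ≤ L := (le_max_left _ _).trans hL
    have hFB₀L : F₂ B₀ ≤ L := (le_max_right _ _).trans hL
    have hLT₄ : L ≤ max L (F₂ T₃) := le_max_left _ _
    have hF₂T₃T₄ : F₂ T₃ ≤ max L (F₂ T₃) := le_max_right _ _
    have hLTF₂T₃ : max (max (E₄' (max D₀ (invF F₄ (G (F₄ D₀))))) L')
        (invF F₃ (max (F₃ (E₄' (max D₀ (invF F₄ (G (F₄ D₀)))))) T₁)) ≤ F₂ T₃ :=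
      (hle₃ _).trans (ξ₂.ctrl.1 hET₃)
    have hLTT₄ : max (max (E₄' (max D₀ (invF F₄ (G (F₄ D₀))))) L')
        (invF F₃ (max (F₃ (E₄' (max D₀ (invF F₄ (G (F₄ D₀)))))) T₁)) ≤ max L (F₂ T₃) :=
      hLTF₂T₃.trans hF₂T₃T₄
    have hmid : M₃.map (hFB₀L.trans hLT₄) (ξ₂.f B₀ n₀) =
        M₃.map hLTT₄ (M₃.map hC₃LT u - M₃.map hL'LT z) := by
      rw [← M₃.map_map (ξ₂.ctrl.1 hBT₃) hF₂T₃T₄ (hFB₀L.trans hLT₄) (ξ₂.f B₀ n₀),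
        ξ₂.compat hBT₃ n₀, hn₀, ← ξ₂.compat hET₃ n, hn,
        M₃.map_map (hle₃ _) (ξ₂.ctrl.1 hET₃) hLTF₂T₃,
        M₃.map_map hLTF₂T₃ hF₂T₃T₄ hLTT₄]
    refine ⟨M₃.map hC₃L u - M₃.map hFB₀L (ξ₂.f B₀ n₀), max L (F₂ T₃), hLT₄,
      hL'LT.trans hLTT₄, ?_⟩
    rw [map_sub, M₃.map_map hC₃L hLT₄ (hC₃LT.trans hLTT₄),
      M₃.map_map hFB₀L hLT₄ (hFB₀L.trans hLT₄), hmid, map_sub,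
      M₃.map_map hC₃LT hLTT₄ (hC₃LT.trans hLTT₄),
      M₃.map_map hL'LT hLTT₄ (hL'LT.trans hLTT₄), sub_sub_cancel]
  · -- kernel control part
    rintro L x ⟨Lz, hLz, hxz⟩
    -- Step 1: `ξ₃ x` is eventually zero, hence zero at a controlled level
    have hk1 : M₄.map (hleD (F₃ L)) (ξ₃.f L x) = 0 := by
      refine hkerD _ _ ⟨F₃ Lz, ξ₃.ctrl.1 hLz, ?_⟩
      rw [ξ₃.compat hLz x, hxz, map_zero]
    -- Step 2: pushing `x` to `L₁`, it is exactly killed by `ξ₃`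
    have h1 : L ≤ max L (invF F₃ (D (F₃ L))) := le_max_left _ _
    have h3 : D (F₃ L) ≤ F₃ (max L (invF F₃ (D (F₃ L)))) :=
      (invF_spec ξ₃.ctrl _).trans (ξ₃.ctrl.1 (le_max_right _ _))
    have hk2 : ξ₃.f _ (M₃.map h1 x) = 0 := by
      rw [← ξ₃.compat h1 x]
      exact M₄.map_eq_zero_trans (hleD (F₃ L)) h3 _ _ hk1
    -- Step 3: exactness at M₃ gives `m` in M₂
    obtain ⟨m, hm⟩ := hsur₃ _ (M₃.map h1 x) hk2
    rw [M₃.map_map h1 (hle₃ _) (h1.trans (hle₃ _))] at hm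
    -- Step 4: `ξ₂ m` is eventually zero
    have hT₅1 : F₂ (E₃' (max L (invF F₃ (D (F₃ L))))) ≤
        max (F₂ (E₃' (max L (invF F₃ (D (F₃ L)))))) Lz := le_max_left _ _
    have hT₅2 : Lz ≤ max (F₂ (E₃' (max L (invF F₃ (D (F₃ L)))))) Lz := le_max_right _ _
    have hk4 : M₃.map hT₅1 (ξ₂.f _ m) = 0 := by
      rw [hm, M₃.map_map (h1.trans (hle₃ _)) hT₅1 ((h1.trans (hle₃ _)).trans hT₅1),
        ← M₃.map_map hLz hT₅2 _ x, hxz, map_zero]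
    -- Step 5: push `m` to `K₂` so that `ξ₂` of it is exactly zero
    have hKK₂ : E₃' (max L (invF F₃ (D (F₃ L)))) ≤
        max (E₃' (max L (invF F₃ (D (F₃ L)))))
          (invF F₂ (max (F₂ (E₃' (max L (invF F₃ (D (F₃ L)))))) Lz)) := le_max_left _ _
    have h5a : max (F₂ (E₃' (max L (invF F₃ (D (F₃ L)))))) Lz ≤
        F₂ (max (E₃' (max L (invF F₃ (D (F₃ L)))))
          (invF F₂ (max (F₂ (E₃' (max L (invF F₃ (D (F₃ L)))))) Lz))) :=
      (invF_spec ξ₂.ctrl _).trans (ξ₂.ctrl.1 (le_max_right _ _))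
    have hk5 : ξ₂.f _ (M₂.map hKK₂ m) = 0 := by
      rw [← ξ₂.compat hKK₂ m]
      exact M₃.map_eq_zero_trans hT₅1 h5a _ _ hk4
    -- Step 6: exactness at M₂ gives `a` in M₁
    obtain ⟨a, ha⟩ := hsur₂ _ (M₂.map hKK₂ m) hk5
    rw [M₂.map_map hKK₂ (hle₂ _) (hKK₂.trans (hle₂ _))] at ha
    -- Step 7: pull `a` back to the constant level `A₀`
    obtain ⟨a', T₆, haT, ha'T, heq⟩ := hsurA A₀ le_rfl _ a
    -- Step 8: `m` agrees with `ξ₁ a'` eventually, hence at a controlled level (M₂ kernel)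
    have hKc : E₃' (max L (invF F₃ (D (F₃ L)))) ≤
        max (E₃' (max L (invF F₃ (D (F₃ L))))) (F₁ A₀) := le_max_left _ _
    have hFc : F₁ A₀ ≤ max (E₃' (max L (invF F₃ (D (F₃ L))))) (F₁ A₀) := le_max_right _ _
    have hcT₇ : max (E₃' (max L (invF F₃ (D (F₃ L))))) (F₁ A₀) ≤
        max (max (E₃' (max L (invF F₃ (D (F₃ L))))) (F₁ A₀)) (F₁ T₆) := le_max_left _ _
    have hT₇b : F₁ T₆ ≤
        max (max (E₃' (max L (invF F₃ (D (F₃ L))))) (F₁ A₀)) (F₁ T₆) := le_max_right _ _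
    have hKT₇ : E₃' (max L (invF F₃ (D (F₃ L)))) ≤
        max (max (E₃' (max L (invF F₃ (D (F₃ L))))) (F₁ A₀)) (F₁ T₆) := hKc.trans hcT₇
    have key : M₂.map (hFc.trans hcT₇) (ξ₁.f A₀ a') = M₂.map hKT₇ m := by
      rw [← M₂.map_map (ξ₁.ctrl.1 haT) hT₇b (hFc.trans hcT₇) (ξ₁.f A₀ a'),
        ξ₁.compat haT a', heq, ← ξ₁.compat ha'T a, ha,
        M₂.map_map (hKK₂.trans (hle₂ _)) (ξ₁.ctrl.1 ha'T)
          ((hKK₂.trans (hle₂ _)).trans (ξ₁.ctrl.1 ha'T)),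
        M₂.map_map ((hKK₂.trans (hle₂ _)).trans (ξ₁.ctrl.1 ha'T)) hT₇b hKT₇]
    have hk9 : M₂.map (hleB (max (E₃' (max L (invF F₃ (D (F₃ L))))) (F₁ A₀)))
        (M₂.map hKc m - M₂.map hFc (ξ₁.f A₀ a')) = 0 := by
      refine hkerB _ _ ⟨_, hcT₇, ?_⟩
      rw [map_sub, M₂.map_map hKc hcT₇ hKT₇, M₂.map_map hFc hcT₇ (hFc.trans hcT₇), key,
        sub_self]
    rw [map_sub, sub_eq_zero,
      M₂.map_map hKc (hleB _) (hKc.trans (hleB _)),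
      M₂.map_map hFc (hleB _) (hFc.trans (hleB _))] at hk9
    -- Step 9: conclude
    have hKBc : E₃' (max L (invF F₃ (D (F₃ L)))) ≤
        B (max (E₃' (max L (invF F₃ (D (F₃ L))))) (F₁ A₀)) := hKc.trans (hleB _)
    have hFBc : F₁ A₀ ≤ B (max (E₃' (max L (invF F₃ (D (F₃ L))))) (F₁ A₀)) :=
      hFc.trans (hleB _)
    have hLF₂Bc : L ≤ F₂ (B (max (E₃' (max L (invF F₃ (D (F₃ L))))) (F₁ A₀))) :=
      (h1.trans (hle₃ _)).trans (ξ₂.ctrl.1 hKBc)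
    have hBcZ : F₂ (B (max (E₃' (max L (invF F₃ (D (F₃ L))))) (F₁ A₀))) ≤
        max (F₂ (B (max (E₃' (max L (invF F₃ (D (F₃ L))))) (F₁ A₀)))) (E₂ A₀) :=
      le_max_left _ _
    have hE₂Z : E₂ A₀ ≤
        max (F₂ (B (max (E₃' (max L (invF F₃ (D (F₃ L))))) (F₁ A₀)))) (E₂ A₀) :=
      le_max_right _ _
    rw [← M₃.map_map hLF₂Bc hBcZ (hleF L) x,
      ← M₃.map_map (h1.trans (hle₃ _)) (ξ₂.ctrl.1 hKBc) hLF₂Bc x, ← hm,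
      ξ₂.compat hKBc m, hk9, ← ξ₂.compat hFBc (ξ₁.f A₀ a'),
      M₃.map_map (ξ₂.ctrl.1 hFBc) hBcZ ((ξ₂.ctrl.1 hFBc).trans hBcZ)
        (ξ₂.f (F₁ A₀) (ξ₁.f A₀ a')),
      ← M₃.map_map (hq₂ A₀) hE₂Z _ (ξ₂.f (F₁ A₀) (ξ₁.f A₀ a')), hz₂ A₀ a', map_zero]
end

section
/- Let {M¹_L} →(ξ¹) {M²_L} →(ξ²) {M³_L} →(ξ³) {M⁴_L} be a sequence of controlled homomorphisms between inductive systems over ℝ≥0 that is asymptotically exact at {M²_L} and at {M³_L}. If ξ¹ is controlled equivalent to the zero homomorphism and there exists a controlled homomorphism s : {M⁴_L} → {M³_L} with ξ³∘s controlled equivalent to the identity, then there exists a controlled homomorphism p : {M³_L} → {M²_L} such that p∘ξ² is controlled equivalent to the identity. -/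
open scoped NNReal
open Filter

private lemma ctrl_id' : IsControl (fun L => L) := ⟨monotone_id, tendsto_id⟩

private lemma ctrl_max' {F G : ℝ≥0 → ℝ≥0} (hF : IsControl F) (hG : IsControl G) :
    IsControl (fun L => max (F L) (G L)) :=
  ⟨fun _ _ h => max_le_max (hF.1 h) (hG.1 h),
   tendsto_atTop_mono (fun L => le_max_left _ _) hF.2⟩

private lemma ctrl_comp' {F G : ℝ≥0 → ℝ≥0} (hF : IsControl F) (hG : IsControl G) :
    IsControl (fun L => F (G L)) := ⟨hF.1.comp hG.1, hF.2.comp hG.2⟩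

private lemma ctrl_inv' {F : ℝ≥0 → ℝ≥0} (hF : IsControl F) :
    ∃ C : ℝ≥0 → ℝ≥0, IsControl C ∧ ∀ L, L ≤ C L ∧ L ≤ F (C L) := by
  refine ⟨fun L => max L (sInf {a | L ≤ F a} + 1), ⟨?_, ?_⟩, fun L => ⟨le_max_left _ _, ?_⟩⟩
  · intro a b hab
    refine max_le_max hab (add_le_add_left ?_ 1)
    refine csInf_le_csInf (OrderBot.bddBelow _) ?_ ?_
    · exact (hF.2.eventually_ge_atTop b).exists
    · exact fun x hx => hab.trans hx
  · exact tendsto_atTop_mono (fun L => le_max_left _ _) tendsto_id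
  · have hne : {a | L ≤ F a}.Nonempty := (hF.2.eventually_ge_atTop L).exists
    obtain ⟨a, ha, hlt⟩ := exists_lt_of_csInf_lt hne (lt_add_of_pos_right _ one_pos)
    exact le_trans ha (hF.1 (hlt.le.trans (le_max_right _ _)))

/-- a controlled splitting lemma. -/
theorem stmt14 (M₁ M₂ M₃ M₄ : IndSys) (F₁ F₂ F₃ : ℝ≥0 → ℝ≥0)
    (ξ₁ : CtrlHom M₁ M₂ F₁) (ξ₂ : CtrlHom M₂ M₃ F₂) (ξ₃ : CtrlHom M₃ M₄ F₃)
    (hex₂ : ∃ E E' : ℝ≥0 → ℝ≥0, AsympExactAt ξ₁ ξ₂ E E')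
    (hex₃ : ∃ E E' : ℝ≥0 → ℝ≥0, AsympExactAt ξ₂ ξ₃ E E')
    (hzero : CtrlEquivZero ξ₁)
    (hsplit : ∃ (Fs : ℝ≥0 → ℝ≥0) (s : CtrlHom M₄ M₃ Fs), CtrlEquivId (ξ₃.comp s)) :
    ∃ (Fp : ℝ≥0 → ℝ≥0) (p : CtrlHom M₃ M₂ Fp), CtrlEquivId (p.comp ξ₂) := by
  classical
  obtain ⟨E₂, E₂', -, hE₂'c, hle₂, surj₂⟩ := hex₂
  obtain ⟨E₃, E₃', ⟨hE₃c, h₁₃, h₂₃, van₃⟩, hE₃'c, hle₃, surj₃⟩ := hex₃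
  obtain ⟨H₀, hH₀c, hF₀, hG₀, van₀⟩ := hzero
  obtain ⟨Fs, s, Hs, hHsc, hFs, hGs, eqs⟩ := hsplit
  simp only [CtrlHom.comp, CtrlHom.zero, CtrlHom.id, AddMonoidHom.comp_apply,
    AddMonoidHom.zero_apply, AddMonoidHom.id_apply, map_zero] at eqs van₀
  -- the "asymptotic injectivity" level function
  set J : ℝ≥0 → ℝ≥0 := fun L => H₀ (E₂' L) with hJdef
  have hJc : IsControl J := ctrl_comp' hH₀c hE₂'c
  have hJle : ∀ L, L ≤ J L := fun L => (hle₂ L).trans (hF₀ (E₂' L))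
  have inj : ∀ (L : ℝ≥0) (x : M₂.M L), ξ₂.f L x = 0 → M₂.map (hJle L) x = 0 := by
    intro L x hx
    obtain ⟨m, hm⟩ := surj₂ L x hx
    have h := congrArg (M₂.map (hF₀ (E₂' L))) hm
    rw [van₀ (E₂' L) m, M₂.map_comp] at h
    exact h.symm
  have uniq : ∀ (L : ℝ≥0) (a b : M₂.M L), ξ₂.f L a = ξ₂.f L b →
      M₂.map (hJle L) a = M₂.map (hJle L) b := by
    intro L a b hab
    have h0 : ξ₂.f L (a - b) = 0 := by rw [map_sub, hab, sub_self]
    have := inj L (a - b) h0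
    rw [map_sub, sub_eq_zero] at this
    exact this
  -- inverse control functions
  obtain ⟨C₃, hC₃c, hC₃⟩ := ctrl_inv' ξ₃.ctrl
  obtain ⟨C₂, hC₂c, hC₂⟩ := ctrl_inv' ξ₂.ctrl
  -- A L : level of w, D L : level where ξ₃ w vanishes, C L : level pushed into surj₃
  set A : ℝ≥0 → ℝ≥0 := fun L => max L (Fs (F₃ L)) with hAdef
  have hAc : IsControl A := ctrl_max' ctrl_id' (ctrl_comp' s.ctrl ξ₃.ctrl)
  set D : ℝ≥0 → ℝ≥0 := fun L => max (F₃ (A L)) (Hs (F₃ L)) with hDdef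
  have hDc : IsControl D := ctrl_max' (ctrl_comp' ξ₃.ctrl hAc) (ctrl_comp' hHsc ξ₃.ctrl)
  set C : ℝ≥0 → ℝ≥0 := fun L => max (A L) (C₃ (D L)) with hCdef
  have hCc : IsControl C := ctrl_max' hAc (ctrl_comp' hC₃c hDc)
  have hAC : ∀ L, A L ≤ C L := fun L => le_max_left _ _
  have hDC : ∀ L, D L ≤ F₃ (C L) := fun L =>
    (hC₃ (D L)).2.trans (ξ₃.ctrl.1 (le_max_right _ _))
  -- the element w L x and key existence of lifts
  set w : ∀ L : ℝ≥0, M₃.M L →+ M₃.M (A L) := fun L =>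
    (M₃.map (le_max_left L (Fs (F₃ L)))) -
      ((M₃.map (le_max_right L (Fs (F₃ L)))).comp ((s.f (F₃ L)).comp (ξ₃.f L))) with hwdef
  have hwapp : ∀ (L : ℝ≥0) (x : M₃.M L),
      w L x = M₃.map (le_max_left L (Fs (F₃ L))) x -
        M₃.map (le_max_right L (Fs (F₃ L))) (s.f (F₃ L) (ξ₃.f L x)) := by
    intro L x; rw [hwdef]; rfl
  -- ξ₃ kills w after pushing to D L
  have hvanD : ∀ (L : ℝ≥0) (x : M₃.M L),
      M₄.map (le_max_left (F₃ (A L)) (Hs (F₃ L))) (ξ₃.f (A L) (w L x)) = 0 := by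
    intro L x
    have e := congrArg (M₄.map (le_max_right (F₃ (A L)) (Hs (F₃ L)) : Hs (F₃ L) ≤ D L))
      (eqs (F₃ L) (ξ₃.f L x))
    rw [M₄.map_comp, M₄.map_comp] at e
    rw [hwapp, map_sub, ← ξ₃.compat (le_max_left L (Fs (F₃ L))),
      ← ξ₃.compat (le_max_right L (Fs (F₃ L))), map_sub, M₄.map_comp, M₄.map_comp,
      sub_eq_zero]
    exact e.symm
  have hvanC : ∀ (L : ℝ≥0) (x : M₃.M L),
      ξ₃.f (C L) (M₃.map (hAC L) (w L x)) = 0 := by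
    intro L x
    have h := congrArg (M₄.map (hDC L)) (hvanD L x)
    rw [M₄.map_comp, map_zero] at h
    rw [← ξ₃.compat (hAC L)]
    exact h
  have key : ∀ (L : ℝ≥0) (x : M₃.M L),
      ∃ m : M₂.M (E₃' (C L)), ξ₂.f (E₃' (C L)) m =
        M₃.map (hle₃ (C L)) (M₃.map (hAC L) (w L x)) :=
    fun L x => surj₃ (C L) (M₃.map (hAC L) (w L x)) (hvanC L x)
  choose lift hlift using key
  set K : ℝ≥0 → ℝ≥0 := fun L => E₃' (C L) with hKdef
  have hKc : IsControl K := ctrl_comp' hE₃'c hCc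
  -- compatibility of w with the structure maps
  have hwc : ∀ (L L' : ℝ≥0) (h : L ≤ L') (x : M₃.M L),
      M₃.map (hAc.1 h) (w L x) = w L' (M₃.map h x) := by
    intro L L' h x
    rw [hwapp, hwapp, map_sub, ← ξ₃.compat h, ← s.compat (ξ₃.ctrl.1 h),
      M₃.map_comp, M₃.map_comp, M₃.map_comp, M₃.map_comp]
  -- the splitting p
  refine ⟨fun L => J (K L), ⟨ctrl_comp' hJc hKc, fun L => AddMonoidHom.mk'
    (fun x => M₂.map (hJle (K L)) (lift L x)) ?_, ?_⟩, ?_⟩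
  · -- additivity
    intro x y
    rw [← map_add]
    refine uniq (K L) _ _ ?_
    rw [map_add, hlift, hlift, hlift, map_add, map_add, map_add]
  · -- compatibility
    intro L L' h x
    have hKK : K L ≤ K L' := hKc.1 h
    have hξ : ξ₂.f (K L') (M₂.map hKK (lift L x)) = ξ₂.f (K L') (lift L' (M₃.map h x)) := by
      rw [← ξ₂.compat hKK, hlift, hlift, ← hwc L L' h x, M₃.map_comp, M₃.map_comp,
        M₃.map_comp, M₃.map_comp]
    have h2 := uniq (K L') _ _ hξ
    rw [M₂.map_comp] at h2
    show M₂.map _ (M₂.map (hJle (K L)) (lift L x)) = M₂.map (hJle (K L')) (lift L' (M₃.map h x))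
    rw [M₂.map_comp]
    exact h2
  · -- p ∘ ξ₂ is controlled equivalent to the identity
    set T : ℝ≥0 → ℝ≥0 := fun L => max (A (F₂ L)) (Fs (E₃ L)) with hTdef
    have hTc : IsControl T := ctrl_max' (ctrl_comp' hAc ξ₂.ctrl) (ctrl_comp' s.ctrl hE₃c)
    have hFT : ∀ L : ℝ≥0, F₂ L ≤ T L := fun L =>
      (le_max_left (F₂ L) (Fs (F₃ (F₂ L)))).trans (le_max_left _ _)
    -- pushing w (F₂ L) (ξ₂ x) up to T L turns it into the image of ξ₂ x
    have hT : ∀ (L : ℝ≥0) (x : M₂.M L),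
        M₃.map (le_max_left (A (F₂ L)) (Fs (E₃ L))) (w (F₂ L) (ξ₂.f L x)) =
          M₃.map (hFT L) (ξ₂.f L x) := by
      intro L x
      have e : M₃.map (le_max_right (A (F₂ L)) (Fs (E₃ L)))
          (M₃.map (s.ctrl.1 (h₁₃ L)) (s.f (F₃ (F₂ L)) (ξ₃.f (F₂ L) (ξ₂.f L x)))) = 0 := by
        rw [s.compat (h₁₃ L), van₃ L x, map_zero, map_zero]
      rw [M₃.map_comp] at e
      rw [hwapp, map_sub, M₃.map_comp, M₃.map_comp, e, sub_zero]
    set V₂ : ℝ≥0 → ℝ≥0 := fun L => max (K (F₂ L)) (max L (C₂ (T L))) with hV₂def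
    have hV₂c : IsControl V₂ := ctrl_max' (ctrl_comp' hKc ξ₂.ctrl)
      (ctrl_max' ctrl_id' (ctrl_comp' hC₂c hTc))
    have hKV₂ : ∀ L : ℝ≥0, K (F₂ L) ≤ V₂ L := fun L => le_max_left _ _
    have hLV₂ : ∀ L : ℝ≥0, L ≤ V₂ L := fun L => (le_max_left L _).trans (le_max_right _ _)
    have hTV₂ : ∀ L : ℝ≥0, T L ≤ F₂ (V₂ L) := fun L => (hC₂ (T L)).2.trans
      (ξ₂.ctrl.1 ((le_max_right _ _).trans (le_max_right _ _)))
    have hzero2 : ∀ (L : ℝ≥0) (x : M₂.M L),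
        ξ₂.f (V₂ L) (M₂.map (hKV₂ L) (lift (F₂ L) (ξ₂.f L x)) - M₂.map (hLV₂ L) x) = 0 := by
      intro L x
      rw [map_sub, ← ξ₂.compat (hKV₂ L), ← ξ₂.compat (hLV₂ L), hlift, sub_eq_zero,
        M₃.map_comp, M₃.map_comp,
        ← M₃.map_comp (le_max_left (A (F₂ L)) (Fs (E₃ L))) (hTV₂ L), hT L x, M₃.map_comp]
    have hfinal : ∀ (L : ℝ≥0) (x : M₂.M L),
        M₂.map ((hKV₂ L).trans (hJle (V₂ L))) (lift (F₂ L) (ξ₂.f L x)) =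
          M₂.map ((hLV₂ L).trans (hJle (V₂ L))) x := by
      intro L x
      have h := inj (V₂ L) _ (hzero2 L x)
      rw [map_sub, sub_eq_zero, M₂.map_comp, M₂.map_comp] at h
      exact h
    refine ⟨fun L => max (J (K (F₂ L))) (J (V₂ L)),
      ctrl_max' (ctrl_comp' hJc (ctrl_comp' hKc ξ₂.ctrl)) (ctrl_comp' hJc hV₂c),
      fun L => le_max_left _ _,
      fun L => ((hLV₂ L).trans (hJle (V₂ L))).trans (le_max_right _ _), fun L x => ?_⟩
    simp only [CtrlHom.comp, CtrlHom.id, AddMonoidHom.comp_apply, AddMonoidHom.id_apply,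
      AddMonoidHom.mk'_apply]
    rw [M₂.map_comp,
      ← M₂.map_comp ((hKV₂ L).trans (hJle (V₂ L))) (le_max_right (J (K (F₂ L))) (J (V₂ L))),
      hfinal L x, M₂.map_comp]
end

section
/- Let {M¹_L} →(ξ¹) {M²_L} →(ξ²) {M³_L} →(ξ³) {M⁴_L} be a sequence of controlled homomorphisms between inductive systems over ℝ≥0 that is asymptotically exact at {M²_L} and at {M³_L}. (1) If there exists a controlled homomorphism s : {M³_L} → {M²_L} with ξ²∘s controlled equivalent to the identity, then ξ³ is controlled equivalent to the zero homomorphism. (2) If there exists a controlled homomorphism s : {M³_L} → {M²_L} with s∘ξ² controlled equivalent to the identity, then ξ¹ is controlled equivalent to the zero homomorphism. -/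
open scoped NNReal
open Filter

/-- if the middle map of an asymptotically exact sequence admits a controlled
one-sided inverse, then the adjacent map is controlled equivalent to zero. -/
theorem stmt15 (M₁ M₂ M₃ M₄ : IndSys) (F₁ F₂ F₃ : ℝ≥0 → ℝ≥0)
    (ξ₁ : CtrlHom M₁ M₂ F₁) (ξ₂ : CtrlHom M₂ M₃ F₂) (ξ₃ : CtrlHom M₃ M₄ F₃)
    (hex₂ : ∃ E E' : ℝ≥0 → ℝ≥0, AsympExactAt ξ₁ ξ₂ E E')
    (hex₃ : ∃ E E' : ℝ≥0 → ℝ≥0, AsympExactAt ξ₂ ξ₃ E E') :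
    ((∃ (Fs : ℝ≥0 → ℝ≥0) (s : CtrlHom M₃ M₂ Fs), CtrlEquivId (ξ₂.comp s)) →
        CtrlEquivZero ξ₃) ∧
    ((∃ (Fs : ℝ≥0 → ℝ≥0) (s : CtrlHom M₃ M₂ Fs), CtrlEquivId (s.comp ξ₂)) →
        CtrlEquivZero ξ₁) := by
  constructor
  · rintro ⟨Fs, s, H, Hctrl, hF, hG, heq⟩
    obtain ⟨E₁, E₂, ⟨E₁ctrl, h₁, _h₂, hzero⟩, -⟩ := hex₃
    refine ⟨fun L => max L (max (F₃ (H L)) (E₁ (Fs L))), ⟨?_, ?_⟩, ?_, fun L => le_max_left _ _,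
      fun L x => ?_⟩
    · intro a b hab
      exact max_le_max hab (max_le_max (ξ₃.ctrl.1 (Hctrl.1 hab)) (E₁ctrl.1 (s.ctrl.1 hab)))
    · exact tendsto_atTop_mono (fun L => le_max_left _ _) tendsto_id
    · exact fun L => (ξ₃.ctrl.1 (hG L)).trans ((le_max_left _ _).trans (le_max_right _ _))
    · have hA : F₃ (H L) ≤ max L (max (F₃ (H L)) (E₁ (Fs L))) :=
        (le_max_left _ _).trans (le_max_right _ _)
      have hB : E₁ (Fs L) ≤ max L (max (F₃ (H L)) (E₁ (Fs L))) :=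
        (le_max_right _ _).trans (le_max_right _ _)
      have heq' := heq L x
      simp only [CtrlHom.comp, CtrlHom.id, AddMonoidHom.comp_apply, AddMonoidHom.id_apply]
        at heq'
      have hz := hzero (Fs L) (s.f L x)
      calc M₄.map ((ξ₃.ctrl.1 (hG L)).trans ((le_max_left _ _).trans (le_max_right _ _)))
              (ξ₃.f L x)
          = M₄.map hA (M₄.map (ξ₃.ctrl.1 (hG L)) (ξ₃.f L x)) := (M₄.map_comp _ _ _).symm
        _ = M₄.map hA (ξ₃.f (H L) (M₃.map (hG L) x)) := by rw [ξ₃.compat]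
        _ = M₄.map hA (ξ₃.f (H L) (M₃.map (hF L) (ξ₂.f (Fs L) (s.f L x)))) := by rw [heq']
        _ = M₄.map hA (M₄.map (ξ₃.ctrl.1 (hF L))
              (ξ₃.f (F₂ (Fs L)) (ξ₂.f (Fs L) (s.f L x)))) := by rw [ξ₃.compat]
        _ = M₄.map hB (M₄.map (h₁ (Fs L))
              (ξ₃.f (F₂ (Fs L)) (ξ₂.f (Fs L) (s.f L x)))) := by
              rw [M₄.map_comp, M₄.map_comp]
        _ = M₄.map hB 0 := by rw [hz]
        _ = M₄.map (le_max_left _ _) ((CtrlHom.zero M₃ M₄).f L x) := by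
              simp [CtrlHom.zero]
  · rintro ⟨Fs, s, H, Hctrl, hF, hG, heq⟩
    obtain ⟨E₁, E₂, ⟨E₁ctrl, h₁, _h₂, hzero⟩, -⟩ := hex₂
    refine ⟨fun L => max L (max (H (F₁ L)) (Fs (E₁ L))), ⟨?_, ?_⟩, ?_, fun L => le_max_left _ _,
      fun L x => ?_⟩
    · intro a b hab
      exact max_le_max hab (max_le_max (Hctrl.1 (ξ₁.ctrl.1 hab)) (s.ctrl.1 (E₁ctrl.1 hab)))
    · exact tendsto_atTop_mono (fun L => le_max_left _ _) tendsto_id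
    · exact fun L => (hG (F₁ L)).trans ((le_max_left _ _).trans (le_max_right _ _))
    · have hA : H (F₁ L) ≤ max L (max (H (F₁ L)) (Fs (E₁ L))) :=
        (le_max_left _ _).trans (le_max_right _ _)
      have hB : Fs (E₁ L) ≤ max L (max (H (F₁ L)) (Fs (E₁ L))) :=
        (le_max_right _ _).trans (le_max_right _ _)
      have heq' := heq (F₁ L) (ξ₁.f L x)
      simp only [CtrlHom.comp, CtrlHom.id, AddMonoidHom.comp_apply, AddMonoidHom.id_apply]
        at heq'
      have hz := hzero L x
      calc M₂.map ((hG (F₁ L)).trans ((le_max_left _ _).trans (le_max_right _ _)))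
              (ξ₁.f L x)
          = M₂.map hA (M₂.map (hG (F₁ L)) (ξ₁.f L x)) := (M₂.map_comp _ _ _).symm
        _ = M₂.map hA (M₂.map (hF (F₁ L)) (s.f (F₂ (F₁ L)) (ξ₂.f (F₁ L) (ξ₁.f L x)))) := by
              rw [heq']
        _ = M₂.map hB (M₂.map (s.ctrl.1 (h₁ L))
              (s.f (F₂ (F₁ L)) (ξ₂.f (F₁ L) (ξ₁.f L x)))) := by
              rw [M₂.map_comp, M₂.map_comp]
        _ = M₂.map hB (s.f (E₁ L) (M₃.map (h₁ L) (ξ₂.f (F₁ L) (ξ₁.f L x)))) := by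
              rw [s.compat]
        _ = M₂.map hB (s.f (E₁ L) 0) := by rw [hz]
        _ = M₂.map (le_max_left _ _) ((CtrlHom.zero M₁ M₂).f L x) := by
              simp [CtrlHom.zero]
end
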